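/- arXiv:1104.0726 — 7 statements merged into one kernel-verified Lean document; each statement's English description precedes it below -/
import Mathlib

section
/- Let n ≥ 1, k ≥ 1 and let a1 ≥ a2 ≥ 1 be integers. Then there exists a constant C > 0 (depending on n, k, a1, a2) such that for all sufficiently large positive integers m, the cokernel of the linear map D^k : V_{m·a1−k, m·a2+k−(n+1)} → V_{m·a1, m·a2−(n+1)} has ℂ-dimension at most C·m^{2n−2}. -/
open MvPolynomial

/-- The space of bihomogeneous polynomials of bidegree `(a, b)` in the two groups of
variables `x_0, …, x_n` (indexed by `Sum.inl`) and `y_0, …, y_n` (indexed by `Sum.inr`). -/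
noncomputable def Vab (n a b : ℕ) :
    Submodule ℂ (MvPolynomial (Fin (n + 1) ⊕ Fin (n + 1)) ℂ) :=
  weightedHomogeneousSubmodule ℂ
    (Sum.elim (fun _ => ((1 : ℕ), (0 : ℕ))) (fun _ => ((0 : ℕ), (1 : ℕ)))) (a, b)

/-- The operator `D = ∑ i, x_i · ∂/∂y_i`. -/
noncomputable def Dop (n : ℕ) :
    Module.End ℂ (MvPolynomial (Fin (n + 1) ⊕ Fin (n + 1)) ℂ) :=
  ∑ i : Fin (n + 1),
    (LinearMap.mulLeft ℂ (X (Sum.inl i))).comp (pderiv (Sum.inr i)).toLinearMap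

namespace Ck

abbrev Idx (n : ℕ) := Fin (n + 1) ⊕ Fin (n + 1)
abbrev Pn (n : ℕ) := MvPolynomial (Idx n) ℂ

noncomputable def Fop (n : ℕ) : Module.End ℂ (Pn n) :=
  ∑ i : Fin (n + 1),
    (LinearMap.mulLeft ℂ (X (Sum.inr i))).comp (pderiv (Sum.inl i)).toLinearMap

variable {n : ℕ}

def sx (d : Idx n →₀ ℕ) : ℕ := ∑ i, d (Sum.inl i)
def sy (d : Idx n →₀ ℕ) : ℕ := ∑ i, d (Sum.inr i)

lemma weight_eq (d : Idx n →₀ ℕ) :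
    Finsupp.weight
      (Sum.elim (fun _ => ((1 : ℕ), (0 : ℕ))) (fun _ => ((0 : ℕ), (1 : ℕ))) : Idx n → ℕ × ℕ) d
      = (sx d, sy d) := by
  rw [Finsupp.weight_apply, Finsupp.sum_fintype]
  swap
  · intro i; exact zero_smul _ _
  rw [Fintype.sum_sum_type]
  ext
  · simp [sx, Prod.fst_sum]
  · simp [sy, Prod.snd_sum]

lemma mem_Vab {a b : ℕ} {p : Pn n} :
    p ∈ Vab n a b ↔ ∀ d, coeff d p ≠ 0 → sx d = a ∧ sy d = b := by
  rw [Vab, mem_weightedHomogeneousSubmodule]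
  constructor
  · intro h d hd
    have := h hd
    rw [weight_eq] at this
    exact ⟨congrArg Prod.fst this, congrArg Prod.snd this⟩
  · intro h d hd
    rw [weight_eq]
    exact Prod.ext (h d hd).1 (h d hd).2

lemma sx_add (d e : Idx n →₀ ℕ) : sx (d + e) = sx d + sx e := by
  simp [sx, Finset.sum_add_distrib]

lemma sy_add (d e : Idx n →₀ ℕ) : sy (d + e) = sy d + sy e := by
  simp [sy, Finset.sum_add_distrib]

lemma sx_single_inl (i : Fin (n + 1)) : sx (Finsupp.single (Sum.inl i : Idx n) 1) = 1 := by
  simp [sx, Finsupp.single_apply, Finset.sum_ite_eq']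

lemma sy_single_inl (i : Fin (n + 1)) : sy (Finsupp.single (Sum.inl i : Idx n) 1) = 0 := by
  simp [sy, Finsupp.single_apply]

lemma sx_single_inr (i : Fin (n + 1)) : sx (Finsupp.single (Sum.inr i : Idx n) 1) = 0 := by
  simp [sx, Finsupp.single_apply]

lemma sy_single_inr (i : Fin (n + 1)) : sy (Finsupp.single (Sum.inr i : Idx n) 1) = 1 := by
  simp [sy, Finsupp.single_apply, Finset.sum_ite_eq']

lemma coeff_pderiv (i : Idx n) (p : Pn n) (s : Idx n →₀ ℕ) :
    coeff s (pderiv i p) = ((s i : ℂ) + 1) * coeff (s + Finsupp.single i 1) p := by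
  induction p using MvPolynomial.induction_on' with
  | monomial t c =>
    rw [pderiv_monomial, coeff_monomial, coeff_monomial]
    by_cases h : t = s + Finsupp.single i 1
    · subst h
      have h1 : s + Finsupp.single i 1 - Finsupp.single i 1 = s := by
        ext j; simp [Finsupp.single_apply]
      have h2 := Finsupp.add_apply s (Finsupp.single i 1) i
      rw [Finsupp.single_apply, if_pos rfl] at h2
      rw [if_pos h1, if_pos rfl, h2]
      push_cast; ring
    · rw [if_neg h, mul_zero]
      by_cases ht : t i = 0
      · simp [ht]
      · rw [if_neg]
        intro hts
        apply h
        have hle : Finsupp.single i 1 ≤ t := by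
          rw [Finsupp.single_le_iff]; omega
        rw [← hts, tsub_add_cancel_of_le hle]
  | add p q hp hq => simp [hp, hq, mul_add]

lemma euler_term (i : Idx n) (p : Pn n) (s : Idx n →₀ ℕ) :
    coeff s (X i * pderiv i p) = (s i : ℂ) * coeff s p := by
  rw [coeff_X_mul']
  by_cases h : i ∈ s.support
  · rw [if_pos h, coeff_pderiv]
    have hs : 1 ≤ s i := by
      have := Finsupp.mem_support_iff.mp h; omega
    have h1 : (s - Finsupp.single i 1) + Finsupp.single i 1 = s :=
      tsub_add_cancel_of_le (by rwa [Finsupp.single_le_iff])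
    have h2 := Finsupp.tsub_apply s (Finsupp.single i 1) i
    rw [Finsupp.single_apply, if_pos rfl] at h2
    rw [h1, h2]
    congr 1
    have : ((s i - 1 : ℕ) : ℂ) = (s i : ℂ) - 1 := by
      push_cast [Nat.cast_sub hs]; ring
    rw [this]; ring
  · rw [if_neg h]
    have : s i = 0 := by simpa [Finsupp.mem_support_iff] using h
    simp [this]


lemma Dop_apply (p : Pn n) :
    Dop n p = ∑ i, X (Sum.inl i) * pderiv (Sum.inr i) p := by
  rw [Dop, LinearMap.sum_apply]
  rfl

lemma Fop_apply (p : Pn n) :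
    Fop n p = ∑ i, X (Sum.inr i) * pderiv (Sum.inl i) p := by
  rw [Fop, LinearMap.sum_apply]
  rfl

lemma mem_pderiv_inr {a b : ℕ} {p : Pn n} (i : Fin (n + 1)) (hp : p ∈ Vab n a (b + 1)) :
    pderiv (Sum.inr i) p ∈ Vab n a b := by
  rw [mem_Vab] at hp ⊢
  intro d hd
  rw [coeff_pderiv] at hd
  have h2 : coeff (d + Finsupp.single (Sum.inr i) 1) p ≠ 0 := by
    intro h; rw [h, mul_zero] at hd; exact hd rfl
  have := hp _ h2
  rw [sx_add, sy_add, sx_single_inr, sy_single_inr] at this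
  omega

lemma mem_pderiv_inl {a b : ℕ} {p : Pn n} (i : Fin (n + 1)) (hp : p ∈ Vab n (a + 1) b) :
    pderiv (Sum.inl i) p ∈ Vab n a b := by
  rw [mem_Vab] at hp ⊢
  intro d hd
  rw [coeff_pderiv] at hd
  have h2 : coeff (d + Finsupp.single (Sum.inl i) 1) p ≠ 0 := by
    intro h; rw [h, mul_zero] at hd; exact hd rfl
  have := hp _ h2
  rw [sx_add, sy_add, sx_single_inl, sy_single_inl] at this
  omega

lemma mem_X_mul {a b : ℕ} {q : Pn n} (j : Idx n) (hq : q ∈ Vab n a b) :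
    X j * q ∈ Vab n (a + sx (Finsupp.single j 1)) (b + sy (Finsupp.single j 1)) := by
  rw [mem_Vab] at hq ⊢
  intro d hd
  rw [coeff_X_mul'] at hd
  by_cases h : j ∈ d.support
  · rw [if_pos h] at hd
    have := hq _ hd
    have hle : Finsupp.single j 1 ≤ d := by
      rw [Finsupp.single_le_iff]
      have := Finsupp.mem_support_iff.mp h; omega
    have hd2 : d = (d - Finsupp.single j 1) + Finsupp.single j 1 :=
      (tsub_add_cancel_of_le hle).symm
    rw [hd2, sx_add, sy_add, this.1, this.2]
    exact ⟨rfl, rfl⟩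
  · rw [if_neg h] at hd; exact absurd rfl hd

lemma memD {a b : ℕ} {p : Pn n} (hp : p ∈ Vab n a (b + 1)) :
    Dop n p ∈ Vab n (a + 1) b := by
  rw [Dop_apply]
  apply Submodule.sum_mem
  intro i _
  have := mem_X_mul (Sum.inl i) (mem_pderiv_inr i hp)
  rwa [sx_single_inl, sy_single_inl, add_zero] at this

lemma memF {a b : ℕ} {p : Pn n} (hp : p ∈ Vab n (a + 1) b) :
    Fop n p ∈ Vab n a (b + 1) := by
  rw [Fop_apply]
  apply Submodule.sum_mem
  intro i _
  have := mem_X_mul (Sum.inr i) (mem_pderiv_inl i hp)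
  rwa [sx_single_inr, sy_single_inr, add_zero] at this

lemma memFpow {b : ℕ} : ∀ (j a : ℕ) (p : Pn n), p ∈ Vab n (a + j) b →
    (Fop n ^ j) p ∈ Vab n a (b + j)
  | 0, a, p, hp => by simpa using hp
  | (j+1), a, p, hp => by
    rw [pow_succ, Module.End.mul_apply]
    have h1 : Fop n p ∈ Vab n (a + j) (b + 1) := memF (by rwa [← add_assoc] at hp)
    have := memFpow j a (Fop n p) h1
    rwa [show b + 1 + j = b + (j + 1) by omega] at this

lemma eulerX {a b : ℕ} {p : Pn n} (hp : p ∈ Vab n a b) :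
    ∑ i, X (Sum.inl i : Idx n) * pderiv (Sum.inl i) p = (a : ℂ) • p := by
  rw [mem_Vab] at hp
  ext s
  rw [coeff_smul]
  have : coeff s (∑ i, X (Sum.inl i : Idx n) * pderiv (Sum.inl i) p)
      = ∑ i, (s (Sum.inl i) : ℂ) * coeff s p := by
    rw [coeff_sum]
    exact Finset.sum_congr rfl fun i _ => euler_term _ _ _
  rw [this, ← Finset.sum_mul]
  by_cases h : coeff s p = 0
  · simp [h]
  · have := (hp s h).1
    rw [smul_eq_mul, ← this, sx]
    push_cast
    ring

lemma eulerY {a b : ℕ} {p : Pn n} (hp : p ∈ Vab n a b) :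
    ∑ i, X (Sum.inr i : Idx n) * pderiv (Sum.inr i) p = (b : ℂ) • p := by
  rw [mem_Vab] at hp
  ext s
  rw [coeff_smul]
  have : coeff s (∑ i, X (Sum.inr i : Idx n) * pderiv (Sum.inr i) p)
      = ∑ i, (s (Sum.inr i) : ℂ) * coeff s p := by
    rw [coeff_sum]
    exact Finset.sum_congr rfl fun i _ => euler_term _ _ _
  rw [this, ← Finset.sum_mul]
  by_cases h : coeff s p = 0
  · simp [h]
  · have := (hp s h).2
    rw [smul_eq_mul, ← this, sy]
    push_cast
    ring

lemma pderiv_comm' (i j : Idx n) (p : Pn n) :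
    pderiv i (pderiv j p) = pderiv j (pderiv i p) := by
  ext s
  rw [coeff_pderiv, coeff_pderiv, coeff_pderiv, coeff_pderiv]
  by_cases h : i = j
  · subst h; ring
  · have h1 := Finsupp.add_apply s (Finsupp.single i 1) j
    rw [Finsupp.single_apply, if_neg h] at h1
    have h2 := Finsupp.add_apply s (Finsupp.single j 1) i
    rw [Finsupp.single_apply, if_neg (fun hh => h hh.symm)] at h2
    rw [h1, h2, add_zero, add_zero, show s + Finsupp.single i 1 + Finsupp.single j 1
      = s + Finsupp.single j 1 + Finsupp.single i 1 by rw [add_assoc, add_assoc, add_comm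
        (Finsupp.single i 1)]]
    ring

lemma commDF {a b : ℕ} {p : Pn n} (hp : p ∈ Vab n a b) :
    Dop n (Fop n p) = Fop n (Dop n p) + ((a : ℂ) - (b : ℂ)) • p := by
  have hD : ∀ q : Pn n, ∀ i : Fin (n+1), pderiv (Sum.inr i) (Fop n q)
      = pderiv (Sum.inl i) q + ∑ j, X (Sum.inr j) * pderiv (Sum.inr i) (pderiv (Sum.inl j) q) := by
    intro q i
    rw [Fop_apply, map_sum]
    have : ∀ j, pderiv (Sum.inr i : Idx n) (X (Sum.inr j) * pderiv (Sum.inl j) q)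
        = (if j = i then pderiv (Sum.inl j) q else 0)
          + X (Sum.inr j) * pderiv (Sum.inr i) (pderiv (Sum.inl j) q) := by
      intro j
      rw [pderiv_mul]
      congr 1
      by_cases h : j = i
      · subst h; rw [pderiv_X_self, if_pos rfl, one_mul]
      · rw [pderiv_X_of_ne (by simp [h]), if_neg h, zero_mul]
    rw [Finset.sum_congr rfl (fun j _ => this j), Finset.sum_add_distrib,
      Finset.sum_ite_eq' Finset.univ i]
    simp
  have hE : ∀ q : Pn n, ∀ i : Fin (n+1), pderiv (Sum.inl i) (Dop n q)
      = pderiv (Sum.inr i) q + ∑ j, X (Sum.inl j) * pderiv (Sum.inl i) (pderiv (Sum.inr j) q) := by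
    intro q i
    rw [Dop_apply, map_sum]
    have : ∀ j, pderiv (Sum.inl i : Idx n) (X (Sum.inl j) * pderiv (Sum.inr j) q)
        = (if j = i then pderiv (Sum.inr j) q else 0)
          + X (Sum.inl j) * pderiv (Sum.inl i) (pderiv (Sum.inr j) q) := by
      intro j
      rw [pderiv_mul]
      congr 1
      by_cases h : j = i
      · subst h; rw [pderiv_X_self, if_pos rfl, one_mul]
      · rw [pderiv_X_of_ne (by simp [h]), if_neg h, zero_mul]
    rw [Finset.sum_congr rfl (fun j _ => this j), Finset.sum_add_distrib,
      Finset.sum_ite_eq' Finset.univ i]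
    simp
  rw [Dop_apply (Fop n p), Fop_apply (Dop n p)]
  simp only [hD, hE]
  simp only [mul_add, Finset.sum_add_distrib, Finset.mul_sum]
  rw [eulerX hp, eulerY hp]
  have hswap : ∑ i, ∑ j, X (Sum.inl i : Idx n) * (X (Sum.inr j)
        * pderiv (Sum.inr i) (pderiv (Sum.inl j) p))
      = ∑ i, ∑ j, X (Sum.inr i : Idx n) * (X (Sum.inl j)
        * pderiv (Sum.inl i) (pderiv (Sum.inr j) p)) := by
    rw [Finset.sum_comm]
    apply Finset.sum_congr rfl; intro j _
    apply Finset.sum_congr rfl; intro i _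
    rw [pderiv_comm']
    ring
  rw [hswap]
  module

lemma keyI : ∀ (m a b : ℕ) (p : Pn n), p ∈ Vab n (a + m + 1) b →
    Dop n ((Fop n ^ (m + 1)) p)
      = (Fop n ^ (m + 1)) (Dop n p)
        + (((m : ℂ) + 1) * ((a : ℂ) + 1 - (b : ℂ))) • ((Fop n ^ m) p)
  | 0, a, b, p, hp => by
    simpa [pow_one, pow_zero] using commDF hp
  | (m+1), a, b, p, hp => by
    have hFp : Fop n p ∈ Vab n (a + m + 1) (b + 1) := memF (by
      rwa [show a + (m + 1) + 1 = (a + m + 1) + 1 by omega] at hp)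
    have IH := keyI m a (b + 1) (Fop n p) hFp
    have hcomm := commDF (show p ∈ Vab n (a + (m+1) + 1) b from hp)
    have hpow : ∀ (t : ℕ) (q : Pn n), (Fop n ^ (t + 1)) q = (Fop n ^ t) (Fop n q) := by
      intro t q; rw [pow_succ, Module.End.mul_apply]
    rw [hpow (m + 1) p, IH, hcomm, map_add, map_smul, ← hpow m p,
      ← hpow (m + 1) (Dop n p)]
    push_cast
    match_scalars <;> ring


noncomputable def wfac (s : Idx n →₀ ℕ) : ℕ := ∏ j, (s j).factorial

lemma wfac_pos (s : Idx n →₀ ℕ) : 0 < wfac s :=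
  Finset.prod_pos fun j _ => Nat.factorial_pos _

lemma wfac_add_single (s : Idx n →₀ ℕ) (i : Idx n) :
    wfac (s + Finsupp.single i 1) = (s i + 1) * wfac s := by
  unfold wfac
  rw [← Finset.mul_prod_erase Finset.univ _ (Finset.mem_univ i),
    ← Finset.mul_prod_erase Finset.univ (fun j => (s j).factorial) (Finset.mem_univ i)]
  have h1 := Finsupp.add_apply s (Finsupp.single i 1) i
  rw [Finsupp.single_apply, if_pos rfl] at h1
  rw [h1, Nat.factorial_succ, mul_assoc]
  congr 2
  apply Finset.prod_congr rfl
  intro j hj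
  have hji : j ≠ i := (Finset.mem_erase.mp hj).1
  have h2 := Finsupp.add_apply s (Finsupp.single i 1) j
  rw [Finsupp.single_apply, if_neg (fun hh => hji hh.symm), add_zero] at h2
  rw [h2]

noncomputable def Bf (p q : Pn n) : ℂ :=
  ∑ s ∈ p.support, coeff s p * coeff s q * (wfac s : ℂ)

lemma Bf_eq_sum {p q : Pn n} {S : Finset (Idx n →₀ ℕ)} (h : p.support ⊆ S) :
    Bf p q = ∑ s ∈ S, coeff s p * coeff s q * (wfac s : ℂ) := by
  apply Finset.sum_subset h
  intro s _ hs
  rw [MvPolynomial.notMem_support_iff.mp hs, zero_mul, zero_mul]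

lemma Bf_zero_left (q : Pn n) : Bf 0 q = 0 := by
  simp [Bf]

lemma Bf_add_left (p₁ p₂ q : Pn n) : Bf (p₁ + p₂) q = Bf p₁ q + Bf p₂ q := by
  rw [Bf_eq_sum (S := p₁.support ∪ p₂.support ∪ (p₁ + p₂).support) (by intro x hx; simp [hx]),
    Bf_eq_sum (p := p₁) (S := p₁.support ∪ p₂.support ∪ (p₁ + p₂).support)
      (by intro x hx; simp [hx]),
    Bf_eq_sum (p := p₂) (S := p₁.support ∪ p₂.support ∪ (p₁ + p₂).support)
      (by intro x hx; simp [hx]),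
    ← Finset.sum_add_distrib]
  apply Finset.sum_congr rfl
  intro s _
  rw [coeff_add]
  ring

lemma Bf_smul_left (c : ℂ) (p q : Pn n) : Bf (c • p) q = c * Bf p q := by
  rw [Bf_eq_sum (S := p.support) (MvPolynomial.support_smul), Bf, Finset.mul_sum]
  apply Finset.sum_congr rfl
  intro s _
  rw [coeff_smul]
  simp only [smul_eq_mul]
  ring

lemma Bf_sum_left {ι : Type*} (t : Finset ι) (f : ι → Pn n) (q : Pn n) :
    Bf (∑ i ∈ t, f i) q = ∑ i ∈ t, Bf (f i) q := by
  classical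
  induction t using Finset.induction_on with
  | empty => simp [Bf_zero_left]
  | insert _ _ h ih => rw [Finset.sum_insert h, Finset.sum_insert h, Bf_add_left, ih]

lemma Bf_add_right (p q₁ q₂ : Pn n) : Bf p (q₁ + q₂) = Bf p q₁ + Bf p q₂ := by
  unfold Bf
  rw [← Finset.sum_add_distrib]
  apply Finset.sum_congr rfl
  intro s _
  rw [coeff_add]
  ring

lemma Bf_smul_right (c : ℂ) (p q : Pn n) : Bf p (c • q) = c * Bf p q := by
  unfold Bf
  rw [Finset.mul_sum]
  apply Finset.sum_congr rfl
  intro s _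
  rw [coeff_smul]
  simp only [smul_eq_mul]
  ring

lemma Bf_sum_right {ι : Type*} (t : Finset ι) (p : Pn n) (f : ι → Pn n) :
    Bf p (∑ i ∈ t, f i) = ∑ i ∈ t, Bf p (f i) := by
  classical
  induction t using Finset.induction_on with
  | empty => simp [Bf]
  | insert _ _ h ih => rw [Finset.sum_insert h, Finset.sum_insert h, Bf_add_right, ih]

lemma Bf_monomial (t : Idx n →₀ ℕ) (c : ℂ) (q : Pn n) :
    Bf (monomial t c) q = c * coeff t q * (wfac t : ℂ) := by
  by_cases hc : c = 0
  · subst hc; rw [map_zero, Bf_zero_left, zero_mul, zero_mul]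
  · unfold Bf
    rw [support_monomial, if_neg hc, Finset.sum_singleton, coeff_monomial, if_pos rfl]

lemma adj_X_mul (i : Idx n) (p q : Pn n) : Bf (X i * p) q = Bf p (pderiv i q) := by
  induction p using MvPolynomial.induction_on' with
  | monomial t c =>
    rw [show (X i : Pn n) * monomial t c = monomial (t + Finsupp.single i 1) c by
      rw [X, monomial_mul, one_mul, add_comm], Bf_monomial, Bf_monomial, coeff_pderiv,
      wfac_add_single]
    push_cast
    ring
  | add p₁ p₂ h1 h2 => rw [mul_add, Bf_add_left, Bf_add_left, h1, h2]

lemma adj_pderiv (i : Idx n) (p q : Pn n) : Bf (pderiv i p) q = Bf p (X i * q) := by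
  induction p using MvPolynomial.induction_on' with
  | monomial t c =>
    rw [pderiv_monomial, Bf_monomial, Bf_monomial, coeff_X_mul']
    by_cases h : i ∈ t.support
    · rw [if_pos h]
      have hs : 1 ≤ t i := by
        have := Finsupp.mem_support_iff.mp h; omega
      have hle : Finsupp.single i 1 ≤ t := by rwa [Finsupp.single_le_iff]
      have h1 : (t - Finsupp.single i 1) + Finsupp.single i 1 = t := tsub_add_cancel_of_le hle
      have h3 := Finsupp.tsub_apply t (Finsupp.single i 1) i
      rw [Finsupp.single_apply, if_pos rfl] at h3
      have h2 : wfac t = (t i - 1 + 1) * wfac (t - Finsupp.single i 1) := by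
        conv_lhs => rw [← h1]
        rw [wfac_add_single, h3]
      rw [h2]
      have : (t i - 1 + 1 : ℕ) = t i := by omega
      push_cast [this]
      ring
    · rw [if_neg h]
      have : t i = 0 := by
        by_contra hh
        exact h (Finsupp.mem_support_iff.mpr hh)
      simp [this]
  | add p₁ p₂ h1 h2 => rw [map_add, Bf_add_left, Bf_add_left, h1, h2]

lemma adjD (p q : Pn n) : Bf (Dop n p) q = Bf p (Fop n q) := by
  rw [Dop_apply, Fop_apply, Bf_sum_left, Bf_sum_right]
  apply Finset.sum_congr rfl
  intro i _
  rw [adj_X_mul, adj_pderiv]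

lemma adjF (p q : Pn n) : Bf (Fop n p) q = Bf p (Dop n q) := by
  rw [Fop_apply, Dop_apply, Bf_sum_left, Bf_sum_right]
  apply Finset.sum_congr rfl
  intro i _
  rw [adj_X_mul, adj_pderiv]

lemma adjDk (k : ℕ) (p q : Pn n) : Bf ((Dop n ^ k) p) q = Bf p ((Fop n ^ k) q) := by
  induction k generalizing p with
  | zero => simp
  | succ k ih =>
    rw [pow_succ, Module.End.mul_apply, ih, adjD, pow_succ', Module.End.mul_apply]

noncomputable def cj (p : Pn n) : Pn n := map (starRingEnd ℂ) p

lemma cj_coeff (s : Idx n →₀ ℕ) (p : Pn n) :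
    coeff s (cj p) = (starRingEnd ℂ) (coeff s p) := coeff_map _ _ _

lemma cj_smul (c : ℂ) (p : Pn n) : cj (c • p) = (starRingEnd ℂ) c • cj p := by
  unfold cj
  rw [smul_eq_C_mul, map_mul, map_C, smul_eq_C_mul]

lemma cj_add (p q : Pn n) : cj (p + q) = cj p + cj q := map_add _ _ _

lemma cj_D (p : Pn n) : cj (Dop n p) = Dop n (cj p) := by
  unfold cj
  rw [Dop_apply, Dop_apply, map_sum]
  apply Finset.sum_congr rfl
  intro i _
  rw [map_mul, map_X, pderiv_map]

lemma cj_F (p : Pn n) : cj (Fop n p) = Fop n (cj p) := by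
  unfold cj
  rw [Fop_apply, Fop_apply, map_sum]
  apply Finset.sum_congr rfl
  intro i _
  rw [map_mul, map_X, pderiv_map]

lemma cj_Fpow (j : ℕ) (p : Pn n) : cj ((Fop n ^ j) p) = (Fop n ^ j) (cj p) := by
  induction j with
  | zero => simp
  | succ j ih =>
    rw [pow_succ', Module.End.mul_apply, cj_F, ih, ← Module.End.mul_apply, ← pow_succ']

def NN (z : ℂ) : Prop := 0 ≤ z.re ∧ z.im = 0

lemma NN_add {z₁ z₂ : ℂ} (h1 : NN z₁) (h2 : NN z₂) : NN (z₁ + z₂) := by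
  constructor
  · simp only [Complex.add_re]; linarith [h1.1, h2.1]
  · simp [h1.2, h2.2]

lemma NN_natmul (c : ℕ) {z : ℂ} (h : NN z) : NN ((c : ℂ) * z) := by
  constructor
  · simp only [Complex.mul_re, Complex.natCast_re, Complex.natCast_im, h.2, mul_zero, zero_mul,
      sub_zero]
    exact mul_nonneg (by positivity) h.1
  · simp [Complex.mul_im, h.2]

lemma Bf_self_eq (p : Pn n) :
    Bf p (cj p) = ((∑ s ∈ p.support, Complex.normSq (coeff s p) * wfac s : ℝ) : ℂ) := by
  unfold Bf
  push_cast
  apply Finset.sum_congr rfl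
  intro s _
  rw [cj_coeff, Complex.mul_conj]

lemma NN_Bf_self (p : Pn n) : NN (Bf p (cj p)) := by
  rw [Bf_self_eq]
  constructor
  · rw [Complex.ofReal_re]
    apply Finset.sum_nonneg
    intro s _
    exact mul_nonneg (Complex.normSq_nonneg _) (by positivity)
  · rw [Complex.ofReal_im]

lemma Bf_self_eq_zero {p : Pn n} (h : Bf p (cj p) = 0) : p = 0 := by
  rw [Bf_self_eq] at h
  have h0 : (∑ s ∈ p.support, Complex.normSq (coeff s p) * wfac s : ℝ) = 0 := by
    exact_mod_cast h
  have hterm : ∀ s ∈ p.support, Complex.normSq (coeff s p) * wfac s = 0 := by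
    intro s hs
    have := (Finset.sum_eq_zero_iff_of_nonneg
      (fun s _ => mul_nonneg (Complex.normSq_nonneg _) (by positivity))).mp h0
    exact this s hs
  ext s
  rw [coeff_zero]
  by_cases hs : s ∈ p.support
  · have := hterm s hs
    have hw : (0:ℝ) < wfac s := by exact_mod_cast wfac_pos s
    have : Complex.normSq (coeff s p) = 0 := by
      rcases mul_eq_zero.mp this with h' | h'
      · exact h'
      · linarith
    exact Complex.normSq_eq_zero.mp this
  · exact MvPolynomial.notMem_support_iff.mp hs

lemma NN_crunch {z₁ z₂ : ℂ} (c : ℕ) (hc : 0 < c) (h1 : NN z₁) (h2 : NN z₂)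
    (h : z₁ + (c : ℂ) * z₂ = 0) : z₂ = 0 := by
  have hre : z₁.re + (c : ℝ) * z₂.re = 0 := by
    have := congrArg Complex.re h
    simpa [Complex.add_re, Complex.mul_re, h2.2] using this
  have hc' : (0:ℝ) < c := by exact_mod_cast hc
  have : z₂.re = 0 := by nlinarith [h1.1, h2.1]
  exact Complex.ext this h2.2


lemma keyI' {a b : ℕ} (j : ℕ) {p : Pn n} (hp : p ∈ Vab n a b) (hja : j + 1 ≤ a)
    (hjb : b ≤ a - (j + 1) + 1) :
    Dop n ((Fop n ^ (j + 1)) p)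
      = (Fop n ^ (j + 1)) (Dop n p)
        + (((j + 1) * (a - (j + 1) + 1 - b) : ℕ) : ℂ) • ((Fop n ^ j) p) := by
  have hp' : p ∈ Vab n ((a - (j + 1)) + j + 1) b := by
    rwa [show (a - (j + 1)) + j + 1 = a by omega]
  have h := keyI j (a - (j + 1)) b p hp'
  rw [h]
  congr 1
  congr 1
  push_cast [Nat.cast_sub hjb, Nat.cast_sub (show j + 1 ≤ a by omega)]
  ring

lemma Gnn {a b : ℕ} {p : Pn n} (hp : p ∈ Vab n a b) :
    ∀ j, b + j ≤ a →
      NN (Bf ((Fop n ^ j) (Dop n p)) (cj (Dop n ((Fop n ^ j) p)))) := by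
  intro j
  induction j with
  | zero =>
    intro _
    simpa using NN_Bf_self (Dop n p)
  | succ j ih =>
    intro hj
    have hja : j + 1 ≤ a := by omega
    have hjb : b ≤ a - (j + 1) + 1 := by omega
    have hkey := keyI' j hp hja hjb
    have hc : (0:ℕ) < (j + 1) * (a - (j + 1) + 1 - b) ∨ True := Or.inr trivial
    rw [hkey, cj_add, Bf_add_right, cj_smul]
    have hconj : (starRingEnd ℂ) (((j + 1) * (a - (j + 1) + 1 - b) : ℕ) : ℂ)
        = (((j + 1) * (a - (j + 1) + 1 - b) : ℕ) : ℂ) := by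
      rw [Complex.conj_natCast]
    rw [hconj, Bf_smul_right]
    apply NN_add
    · exact NN_Bf_self _
    · apply NN_natmul
      have hstep : Bf ((Fop n ^ (j+1)) (Dop n p)) (cj ((Fop n ^ j) p))
          = Bf ((Fop n ^ j) (Dop n p)) (cj (Dop n ((Fop n ^ j) p))) := by
        rw [pow_succ', Module.End.mul_apply, adjF, ← cj_D]
      rw [hstep]
      exact ih (by omega)

lemma Finj : ∀ (k a b : ℕ) (p : Pn n), p ∈ Vab n a b → b + k ≤ a →
    (Fop n ^ k) p = 0 → p = 0
  | 0, a, b, p, hp, hab, h0 => by simpa using h0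
  | (k+1), a, b, p, hp, hab, h0 => by
    have hka : k + 1 ≤ a := by omega
    have hkb : b ≤ a - (k + 1) + 1 := by omega
    have hkey := keyI' k hp hka hkb
    rw [h0, map_zero] at hkey
    have heq : (0 : ℂ) = Bf ((Fop n ^ (k+1)) (Dop n p)) (cj ((Fop n ^ k) p))
        + ((((k + 1) * (a - (k + 1) + 1 - b) : ℕ)) : ℂ)
          * Bf ((Fop n ^ k) p) (cj ((Fop n ^ k) p)) := by
      have := congrArg (fun q => Bf q (cj ((Fop n ^ k) p))) hkey.symm
      simp only [Bf_add_left, Bf_smul_left, Bf_zero_left] at this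
      exact this.symm
    have hG : NN (Bf ((Fop n ^ (k+1)) (Dop n p)) (cj ((Fop n ^ k) p))) := by
      have hstep : Bf ((Fop n ^ (k+1)) (Dop n p)) (cj ((Fop n ^ k) p))
          = Bf ((Fop n ^ k) (Dop n p)) (cj (Dop n ((Fop n ^ k) p))) := by
        rw [pow_succ', Module.End.mul_apply, adjF, ← cj_D]
      rw [hstep]
      exact Gnn hp k (by omega)
    have hcpos : 0 < (k + 1) * (a - (k + 1) + 1 - b) := by
      apply Nat.mul_pos (by omega)
      omega
    have hzero : Bf ((Fop n ^ k) p) (cj ((Fop n ^ k) p)) = 0 :=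
      NN_crunch _ hcpos hG (NN_Bf_self _) heq.symm
    have hFk : (Fop n ^ k) p = 0 := Bf_self_eq_zero hzero
    exact Finj k a b p hp (by omega) hFk

lemma Dk_Fj_inj (k δ a b : ℕ) (p : Pn n) (hp : p ∈ Vab n a b)
    (hw : b + (k + δ) ≤ a)
    (h0 : (Dop n ^ k) ((Fop n ^ (k + δ)) p) = 0) : p = 0 := by
  have h1 : Bf ((Dop n ^ k) ((Fop n ^ (k + δ)) p)) (cj ((Fop n ^ δ) p)) = 0 := by
    rw [h0, Bf_zero_left]
  rw [adjDk] at h1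
  have h2 : (Fop n ^ k) (cj ((Fop n ^ δ) p)) = cj ((Fop n ^ (k + δ)) p) := by
    rw [← cj_Fpow]
    rw [← Module.End.mul_apply, ← pow_add]
  rw [h2] at h1
  have h3 : (Fop n ^ (k + δ)) p = 0 := Bf_self_eq_zero h1
  exact Finj (k + δ) a b p hp hw h3


def Sab (n a b : ℕ) : Set (Idx n →₀ ℕ) := {d | sx d = a ∧ sy d = b}

lemma Vab_eq (a b : ℕ) : Vab n a b = restrictSupport ℂ (Sab n a b) := by
  ext p
  rw [mem_Vab, mem_restrictSupport_iff]
  constructor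
  · intro h d hd
    exact h d (by simpa [MvPolynomial.mem_support_iff] using hd)
  · intro h d hd
    exact h (by simpa [MvPolynomial.mem_support_iff] using hd)

def Tty (n c : ℕ) := {f : Fin (n + 1) →₀ ℕ // (∑ i, f i) = c}

noncomputable def symEquiv (c : ℕ) : Tty n c ≃ Sym (Fin (n + 1)) c where
  toFun f := ⟨Finsupp.toMultiset f.1, by
    rw [Finsupp.card_toMultiset, Finsupp.sum_fintype _ _ (fun i => rfl)]
    exact f.2⟩
  invFun m := ⟨Multiset.toFinsupp (m : Multiset (Fin (n + 1))), by
    have h1 : Finsupp.toMultiset (Multiset.toFinsupp (m : Multiset (Fin (n+1)))) = m :=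
      Multiset.toFinsupp_toMultiset _
    have h2 := Finsupp.card_toMultiset (Multiset.toFinsupp (m : Multiset (Fin (n+1))))
    rw [h1, Finsupp.sum_fintype _ _ (fun i => rfl)] at h2
    simp only [id] at h2
    rw [← h2]
    exact m.2⟩
  left_inv f := Subtype.ext (Finsupp.toMultiset_toFinsupp _)
  right_inv m := Sym.ext (by simp)

noncomputable def sabEquiv (a b : ℕ) : ↥(Sab n a b) ≃ (Tty n a) × (Tty n b) where
  toFun d := (⟨(Finsupp.sumFinsuppEquivProdFinsupp d.1).1, by
      calc ∑ i, (Finsupp.sumFinsuppEquivProdFinsupp d.1).1 i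
          = ∑ i, (d.1 : Idx n →₀ ℕ) (Sum.inl i) :=
            Finset.sum_congr rfl (fun i _ => Finsupp.fst_sumFinsuppEquivProdFinsupp _ _)
        _ = a := d.2.1⟩,
    ⟨(Finsupp.sumFinsuppEquivProdFinsupp d.1).2, by
      calc ∑ i, (Finsupp.sumFinsuppEquivProdFinsupp d.1).2 i
          = ∑ i, (d.1 : Idx n →₀ ℕ) (Sum.inr i) :=
            Finset.sum_congr rfl (fun i _ => Finsupp.snd_sumFinsuppEquivProdFinsupp _ _)
        _ = b := d.2.2⟩)
  invFun x := ⟨Finsupp.sumFinsuppEquivProdFinsupp.symm (x.1.1, x.2.1), by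
    have hL : ∀ i, (Finsupp.sumFinsuppEquivProdFinsupp.symm
        ((x.1.1 : Fin (n+1) →₀ ℕ), (x.2.1 : Fin (n+1) →₀ ℕ))) (Sum.inl i) = x.1.1 i := by
      intro i
      rw [← Finsupp.fst_sumFinsuppEquivProdFinsupp, Equiv.apply_symm_apply]
    have hR : ∀ i, (Finsupp.sumFinsuppEquivProdFinsupp.symm
        ((x.1.1 : Fin (n+1) →₀ ℕ), (x.2.1 : Fin (n+1) →₀ ℕ))) (Sum.inr i) = x.2.1 i := by
      intro i
      rw [← Finsupp.snd_sumFinsuppEquivProdFinsupp, Equiv.apply_symm_apply]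
    constructor
    · show (∑ i, _ = a)
      calc ∑ i, (Finsupp.sumFinsuppEquivProdFinsupp.symm (x.1.1, x.2.1)
            : Idx n →₀ ℕ) (Sum.inl i)
          = ∑ i, (x.1.1 : Fin (n+1) →₀ ℕ) i := Finset.sum_congr rfl (fun i _ => hL i)
        _ = a := x.1.2
    · show (∑ i, _ = b)
      calc ∑ i, (Finsupp.sumFinsuppEquivProdFinsupp.symm (x.1.1, x.2.1)
            : Idx n →₀ ℕ) (Sum.inr i)
          = ∑ i, (x.2.1 : Fin (n+1) →₀ ℕ) i := Finset.sum_congr rfl (fun i _ => hR i)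
        _ = b := x.2.2⟩
  left_inv d := Subtype.ext (by
    show Finsupp.sumFinsuppEquivProdFinsupp.symm (_, _) = _
    rw [Prod.mk.eta, Equiv.symm_apply_apply])
  right_inv x := by
    refine Prod.ext (Subtype.ext ?_) (Subtype.ext ?_)
    · show (Finsupp.sumFinsuppEquivProdFinsupp
        (Finsupp.sumFinsuppEquivProdFinsupp.symm (x.1.1, x.2.1))).1 = _
      rw [Equiv.apply_symm_apply]
    · show (Finsupp.sumFinsuppEquivProdFinsupp
        (Finsupp.sumFinsuppEquivProdFinsupp.symm (x.1.1, x.2.1))).2 = _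
      rw [Equiv.apply_symm_apply]

noncomputable def sabSymEquiv (a b : ℕ) :
    ↥(Sab n a b) ≃ Sym (Fin (n + 1)) a × Sym (Fin (n + 1)) b :=
  (sabEquiv a b).trans (Equiv.prodCongr (symEquiv a) (symEquiv b))

noncomputable instance sabFintype (a b : ℕ) : Fintype ↥(Sab n a b) :=
  Fintype.ofEquiv _ (sabSymEquiv a b).symm

def Pc (n c : ℕ) : ℕ := (n + c).choose c

lemma card_Sab (a b : ℕ) : Fintype.card ↥(Sab n a b) = Pc n a * Pc n b := by
  rw [Fintype.card_congr (sabSymEquiv a b), Fintype.card_prod]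
  have h : ∀ c : ℕ, Fintype.card (Sym (Fin (n + 1)) c) = Pc n c := by
    intro c
    rw [Sym.card_sym_eq_choose, Fintype.card_fin]
    congr 1
    omega
  rw [h, h]

noncomputable instance VabFinite (a b : ℕ) : Module.Finite ℂ ↥(Vab n a b) := by
  rw [Vab_eq]
  exact Module.Finite.of_basis (basisRestrictSupport ℂ (Sab n a b))

lemma finrank_Vab (a b : ℕ) :
    Module.finrank ℂ ↥(Vab n a b) = Pc n a * Pc n b := by
  rw [Vab_eq, Module.finrank_eq_card_basis (basisRestrictSupport ℂ (Sab n a b)), card_Sab]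

lemma Pc_mul_factorial (t c : ℕ) :
    Pc t c * t.factorial = ∏ i ∈ Finset.range t, (c + 1 + i) := by
  have h1 : (c + 1).ascFactorial t = t.factorial * (c + t).choose t :=
    Nat.ascFactorial_eq_factorial_mul_choose c t
  have h2 : Pc t c = (c + t).choose t := by
    unfold Pc
    rw [show t + c = c + t by omega]
    rw [← Nat.choose_symm (show c ≤ c + t by omega)]
    congr 1
    omega
  have h3 : ∀ u : ℕ, (c + 1).ascFactorial u = ∏ i ∈ Finset.range u, (c + 1 + i) := by
    intro u
    induction u with
    | zero => simp
    | succ u ih => rw [Finset.prod_range_succ, Nat.ascFactorial_succ, ih]; ring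
  rw [h2, mul_comm, ← h1, h3]


lemma prod_diff_le (e U : ℝ) (he : 0 ≤ e) (hU : 0 ≤ U) :
    ∀ (t : ℕ) (f g : ℕ → ℝ),
    (∀ i, i < t → 0 ≤ g i) → (∀ i, i < t → g i ≤ f i) → (∀ i, i < t → f i ≤ U) →
    (∀ i, i < t → f i - g i ≤ e) →
    ∏ i ∈ Finset.range t, f i - ∏ i ∈ Finset.range t, g i ≤ t * e * U ^ (t - 1)
  | 0, f, g, hg, hfg, hf, hd => by simp
  | (t+1), f, g, hg, hfg, hf, hd => by
    have IH := prod_diff_le e U he hU t f g (fun i hi => hg i (by omega))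
      (fun i hi => hfg i (by omega)) (fun i hi => hf i (by omega)) (fun i hi => hd i (by omega))
    rw [Finset.prod_range_succ, Finset.prod_range_succ]
    have hgn : (0:ℝ) ≤ ∏ i ∈ Finset.range t, g i :=
      Finset.prod_nonneg (fun i hi => hg i (by simp at hi; omega))
    have hgU : ∏ i ∈ Finset.range t, g i ≤ U ^ t := by
      calc ∏ i ∈ Finset.range t, g i ≤ ∏ _i ∈ Finset.range t, U := by
            apply Finset.prod_le_prod
            · intro i hi; simp only [Finset.mem_range] at hi; exact hg i (by omega)
            · intro i hi; simp only [Finset.mem_range] at hi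
              exact le_trans (hfg i (by omega)) (hf i (by omega))
        _ = U ^ t := by rw [Finset.prod_const, Finset.card_range]
    have hmono : ∏ i ∈ Finset.range t, g i ≤ ∏ i ∈ Finset.range t, f i := by
      apply Finset.prod_le_prod
      · intro i hi; simp only [Finset.mem_range] at hi; exact hg i (by omega)
      · intro i hi; simp only [Finset.mem_range] at hi; exact hfg i (by omega)
    have hft : 0 ≤ f t := le_trans (hg t (by omega)) (hfg t (by omega))
    have hftU : f t ≤ U := hf t (by omega)
    have hdt : f t - g t ≤ e := hd t (by omega)
    have hgt : 0 ≤ g t := hg t (by omega)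
    have key : (∏ i ∈ Finset.range t, f i) * f t - (∏ i ∈ Finset.range t, g i) * g t
        = (∏ i ∈ Finset.range t, f i - ∏ i ∈ Finset.range t, g i) * f t
          + (∏ i ∈ Finset.range t, g i) * (f t - g t) := by ring
    rw [key]
    have h1 : (∏ i ∈ Finset.range t, f i - ∏ i ∈ Finset.range t, g i) * f t
        ≤ (t * e * U ^ (t-1)) * U := by
      apply mul_le_mul IH hftU hft
      positivity
    have hgft : g t ≤ f t := hfg t (by omega)
    have h2 : (∏ i ∈ Finset.range t, g i) * (f t - g t) ≤ U ^ t * e := by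
      apply mul_le_mul hgU hdt (by linarith) (by positivity)
    have h3 : (t * e * U ^ (t-1)) * U ≤ t * e * U ^ t := by
      rcases Nat.eq_zero_or_pos t with h | h
      · subst h; simp
      · apply le_of_eq
        rw [mul_assoc, ← pow_succ, show t - 1 + 1 = t by omega]
    have : ((t:ℝ)+1) * e * U ^ t = t * e * U^t + U^t * e := by ring
    rw [show ((t+1 : ℕ):ℝ) = (t:ℝ)+1 by push_cast; ring, show (t + 1 - 1 : ℕ) = t from rfl, this]
    linarith

end Ck

set_option maxHeartbeats 1000000 in
open Ck in
/-- For `a1 ≥ a2 ≥ 1`, the cokernel of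
`D^k : V_{m·a1−k, m·a2+k−(n+1)} → V_{m·a1, m·a2−(n+1)}` has dimension `O(m^{2n−2})`. -/
theorem cokernel_bound_of_a1_ge_a2 (n k a1 a2 : ℕ)
    (hn : 1 ≤ n) (hk : 1 ≤ k) (ha2 : 1 ≤ a2) (h12 : a2 ≤ a1) :
    ∃ C : ℝ, 0 < C ∧ ∃ M : ℕ, ∀ m : ℕ, M ≤ m → 0 < m →
      ∀ g : (Vab n (m * a1 - k) (m * a2 + k - (n + 1))) →ₗ[ℂ]
            (Vab n (m * a1) (m * a2 - (n + 1))),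
        (∀ v, (g v : MvPolynomial (Fin (n + 1) ⊕ Fin (n + 1)) ℂ)
            = ((Dop n) ^ k) (v : MvPolynomial (Fin (n + 1) ⊕ Fin (n + 1)) ℂ)) →
        (Module.finrank ℂ
            (↥(Vab n (m * a1) (m * a2 - (n + 1))) ⧸ LinearMap.range g) : ℝ)
          ≤ C * (m : ℝ) ^ (2 * n - 2) := by
  classical
  refine ⟨(n:ℝ) * (k*k) * (2*(a1:ℝ))^(2*n-2) + 1, by positivity, n + 2*k + 2*k*k + 2, ?_⟩
  intro m hM hm
  set A := m * a1 with hA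
  set Bp := m * a2 - (n+1) with hBp
  intro g hg
  have hma2 : n + 2*k + 2*k*k + 2 ≤ m * a2 := by
    have h1 : m ≤ m * a2 := Nat.le_mul_of_pos_right _ (by omega)
    omega
  have hAa2 : m * a2 ≤ A := Nat.mul_le_mul_left m h12
  have hBpval : Bp + (n+1) = m * a2 := by omega
  have hwtle : Bp + (n+1) ≤ A := by omega
  set wt := A - Bp with hwtdef
  have hwtge : n + 1 ≤ wt := by omega
  set δ := k - wt with hδdef
  set j := k + δ with hjdef
  have hδk : δ ≤ k := by omega
  have hkeyw : k ≤ wt + δ := by omega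
  have hδBp : δ ≤ Bp := by omega
  have hkA : k ≤ A := by omega
  -- the injective map
  have hmemW : ∀ z : Pn n, z ∈ Vab n (A + δ) (Bp - δ) →
      (Fop n ^ j) z ∈ Vab n (m * a1 - k) (m * a2 + k - (n + 1)) := by
    intro z hz
    have h1 : z ∈ Vab n ((A - k) + j) (Bp - δ) := by
      rwa [show (A - k) + j = A + δ by omega]
    have h2 := memFpow j (A - k) z h1
    have h3 : (Bp - δ) + j = m * a2 + k - (n+1) := by omega
    rwa [h3] at h2
  set W := Vab n (A + δ) (Bp - δ) with hW
  let ψ : ↥W →ₗ[ℂ] ↥(Vab n (m * a1 - k) (m * a2 + k - (n + 1))) :=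
    LinearMap.codRestrict _ ((Fop n ^ j) ∘ₗ W.subtype) (fun z => hmemW z.1 z.2)
  let φ := g ∘ₗ ψ
  have hφinj : Function.Injective φ := by
    rw [← LinearMap.ker_eq_bot, eq_bot_iff]
    intro z hz
    rw [LinearMap.mem_ker] at hz
    have hval : ((g (ψ z) : ↥(Vab n A Bp)) : Pn n) = (Dop n ^ k) ((ψ z : Pn n)) := hg (ψ z)
    have hψz : ((ψ z : Pn n)) = (Fop n ^ j) (z : Pn n) := by
      simp only [ψ, LinearMap.codRestrict_apply, LinearMap.comp_apply, Submodule.coe_subtype]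
      rfl
    have hz0 : (Dop n ^ k) ((Fop n ^ j) (z : Pn n)) = 0 := by
      rw [← hψz, ← hval]
      have : φ z = 0 := hz
      rw [show g (ψ z) = φ z from rfl, this, Submodule.coe_zero]
    have := Dk_Fj_inj k δ (A + δ) (Bp - δ) (z : Pn n) z.2 (by omega) hz0
    simpa [Submodule.mem_bot] using Subtype.ext this
  haveI : Module.Finite ℂ ↥(Vab n A Bp) := VabFinite A Bp
  have hr1 : Module.finrank ℂ ↥(LinearMap.range φ) = Module.finrank ℂ ↥W :=
    LinearMap.finrank_range_of_inj hφinj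
  have hr2 : LinearMap.range φ ≤ LinearMap.range g := LinearMap.range_comp_le_range ψ g
  have hr3 : Module.finrank ℂ ↥(LinearMap.range φ) ≤ Module.finrank ℂ ↥(LinearMap.range g) :=
    Submodule.finrank_mono hr2
  have hq := Submodule.finrank_quotient_add_finrank (LinearMap.range g)
  have hfW : Module.finrank ℂ ↥W = Pc n (A + δ) * Pc n (Bp - δ) := finrank_Vab _ _
  have hfT : Module.finrank ℂ ↥(Vab n A Bp) = Pc n A * Pc n Bp := finrank_Vab _ _
  have hmain : Module.finrank ℂ (↥(Vab n A Bp) ⧸ LinearMap.range g)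
      + Pc n (A + δ) * Pc n (Bp - δ) ≤ Pc n A * Pc n Bp := by
    rw [← hfW, ← hr1, ← hfT, ← hq]
    omega
  -- numeric estimate
  set PT := Pc n A * Pc n Bp with hPT
  set PW := Pc n (A + δ) * Pc n (Bp - δ) with hPW
  have hnum : (PT : ℝ) - (PW : ℝ) ≤ ((n:ℝ) * (k*k) * (2*(a1:ℝ))^(2*n-2)) * (m:ℝ)^(2*n-2) := by
    have hmA : m ≤ A := le_trans (Nat.le_mul_of_pos_right m (by omega)) hAa2
    set F : ℕ → ℝ := fun i => ((A:ℝ)+1+i) * ((Bp:ℝ)+1+i) with hF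
    set G : ℕ → ℝ := fun i => ((A:ℝ)+(δ:ℝ)+1+i) * ((Bp:ℝ)-(δ:ℝ)+1+i) with hG
    set e : ℝ := (δ:ℝ) * ((wt:ℝ) + (δ:ℝ)) with he
    set U : ℝ := (2*(A:ℝ))^2 with hU
    have he0 : 0 ≤ e := by positivity
    have hU0 : 0 ≤ U := by positivity
    have hcast1 : ((wt:ℕ):ℝ) = (A:ℝ) - (Bp:ℝ) := by
      rw [hwtdef, Nat.cast_sub (by omega : Bp ≤ A)]
    have hcastδ : (((Bp - δ : ℕ)):ℝ) = (Bp:ℝ) - (δ:ℝ) := Nat.cast_sub hδBp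
    have hprodPc : ∀ c : ℕ, (Pc n c : ℝ) * (n.factorial:ℝ)
        = ∏ i ∈ Finset.range n, ((c:ℝ)+1+(i:ℝ)) := by
      intro c
      have h0 := congrArg (Nat.cast : ℕ → ℝ) (Pc_mul_factorial n c)
      push_cast at h0
      exact h0
    have hT : (PT:ℝ) * ((n.factorial:ℝ) * (n.factorial:ℝ)) = ∏ i ∈ Finset.range n, F i := by
      rw [hPT]
      push_cast
      rw [show ((Pc n A : ℝ) * (Pc n Bp : ℝ)) * ((n.factorial:ℝ) * (n.factorial:ℝ))
        = ((Pc n A : ℝ) * (n.factorial:ℝ)) * ((Pc n Bp : ℝ) * (n.factorial:ℝ)) by ring,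
        hprodPc A, hprodPc Bp, ← Finset.prod_mul_distrib]
    have hWp : (PW:ℝ) * ((n.factorial:ℝ) * (n.factorial:ℝ)) = ∏ i ∈ Finset.range n, G i := by
      rw [hPW]
      push_cast
      rw [show ((Pc n (A+δ) : ℝ) * (Pc n (Bp-δ) : ℝ)) * ((n.factorial:ℝ) * (n.factorial:ℝ))
        = ((Pc n (A+δ) : ℝ) * (n.factorial:ℝ)) * ((Pc n (Bp-δ) : ℝ) * (n.factorial:ℝ)) by ring,
        hprodPc (A+δ), hprodPc (Bp-δ), ← Finset.prod_mul_distrib]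
      apply Finset.prod_congr rfl
      intro i _
      rw [hG]
      push_cast [hcastδ]
      ring
    have hGF : ∀ i : ℕ, G i = F i - e := by
      intro i
      rw [hG, hF, he, hcast1]
      ring
    have hBpδ : (0:ℝ) ≤ (Bp:ℝ) - (δ:ℝ) := by
      rw [← hcastδ]; positivity
    have hG0 : ∀ i, i < n → 0 ≤ G i := by
      intro i _
      rw [hG]
      apply mul_nonneg
      · positivity
      · have : (0:ℝ) ≤ (i:ℝ) := by positivity
        linarith
    have hGleF : ∀ i, i < n → G i ≤ F i := by
      intro i _
      rw [hGF]; linarith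
    have hFU : ∀ i, i < n → F i ≤ U := by
      intro i hi
      have h1 : (A + 1 + i : ℕ) ≤ 2*A := by omega
      have h2 : (Bp + 1 + i : ℕ) ≤ 2*A := by omega
      have h1' : ((A:ℝ)+1+(i:ℝ)) ≤ 2*(A:ℝ) := by exact_mod_cast h1
      have h2' : ((Bp:ℝ)+1+(i:ℝ)) ≤ 2*(A:ℝ) := by exact_mod_cast h2
      rw [hF, hU]
      have hx : (0:ℝ) ≤ (A:ℝ)+1+(i:ℝ) := by positivity
      have hy : (0:ℝ) ≤ (Bp:ℝ)+1+(i:ℝ) := by positivity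
      calc ((A:ℝ)+1+i) * ((Bp:ℝ)+1+i) ≤ (2*(A:ℝ)) * (2*(A:ℝ)) :=
            mul_le_mul h1' h2' hy (by linarith)
        _ = (2*(A:ℝ))^2 := by ring
    have hdiffe : ∀ i, i < n → F i - G i ≤ e := by
      intro i _
      rw [hGF]; linarith
    have hkey := prod_diff_le e U he0 hU0 n F G hG0 hGleF hFU hdiffe
    have hXpos : (0:ℝ) ≤ ∏ i ∈ Finset.range n, F i - ∏ i ∈ Finset.range n, G i := by
      have := Finset.prod_le_prod (s := Finset.range n) (f := G) (g := F)
        (fun i hi => hG0 i (Finset.mem_range.mp hi))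
        (fun i hi => hGleF i (Finset.mem_range.mp hi))
      linarith
    have hfac1 : (1:ℝ) ≤ (n.factorial:ℝ) * (n.factorial:ℝ) := by
      have h1 : 1 ≤ n.factorial := Nat.one_le_iff_ne_zero.mpr (Nat.factorial_ne_zero n)
      have h1' : (1:ℝ) ≤ (n.factorial:ℝ) := by exact_mod_cast h1
      nlinarith
    have hPTPW : ((PT:ℝ) - (PW:ℝ)) * ((n.factorial:ℝ) * (n.factorial:ℝ))
        = ∏ i ∈ Finset.range n, F i - ∏ i ∈ Finset.range n, G i := by
      rw [sub_mul, hT, hWp]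
    have step1 : (PT:ℝ) - (PW:ℝ) ≤ ∏ i ∈ Finset.range n, F i - ∏ i ∈ Finset.range n, G i := by
      nlinarith [hPTPW, hXpos, hfac1]
    -- bound e and U powers
    have heNk : δ * (wt + δ) ≤ k * k := by
      have hcase : δ = 0 ∨ wt + δ = k := by omega
      rcases hcase with h | h
      · rw [h]; simp
      · rw [h]
        exact Nat.mul_le_mul_right k hδk
    have hek : e ≤ (k:ℝ) * (k:ℝ) := by
      have : e = ((δ * (wt + δ) : ℕ) : ℝ) := by rw [he]; push_cast; ring
      rw [this]
      exact_mod_cast heNk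
    have hA2m : (A:ℝ) = (a1:ℝ) * (m:ℝ) := by rw [hA]; push_cast; ring
    have hUpow : U ^ (n-1) = (2*(a1:ℝ))^(2*n-2) * (m:ℝ)^(2*n-2) := by
      rw [hU, hA2m, show (2*((a1:ℝ)*(m:ℝ)))^2 = ((2*(a1:ℝ))*(m:ℝ))^2 by ring, ← pow_mul,
        show 2*(n-1) = 2*n-2 by omega, mul_pow]
    have hUn0 : (0:ℝ) ≤ U ^ (n-1) := by positivity
    have step2 : (n:ℝ) * e * U^(n-1)
        ≤ ((n:ℝ) * ((k:ℝ)*(k:ℝ)) * (2*(a1:ℝ))^(2*n-2)) * (m:ℝ)^(2*n-2) := by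
      have h1 : (n:ℝ) * e ≤ (n:ℝ) * ((k:ℝ)*(k:ℝ)) :=
        mul_le_mul_of_nonneg_left hek (by positivity)
      calc (n:ℝ) * e * U^(n-1) ≤ ((n:ℝ) * ((k:ℝ)*(k:ℝ))) * U^(n-1) :=
            mul_le_mul_of_nonneg_right h1 hUn0
        _ = ((n:ℝ) * ((k:ℝ)*(k:ℝ))) * ((2*(a1:ℝ))^(2*n-2) * (m:ℝ)^(2*n-2)) := by rw [hUpow]
        _ = ((n:ℝ) * ((k:ℝ)*(k:ℝ)) * (2*(a1:ℝ))^(2*n-2)) * (m:ℝ)^(2*n-2) := by ring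
    calc (PT:ℝ) - (PW:ℝ) ≤ ∏ i ∈ Finset.range n, F i - ∏ i ∈ Finset.range n, G i := step1
      _ ≤ (n:ℝ) * e * U^(n-1) := hkey
      _ ≤ ((n:ℝ) * ((k:ℝ)*(k:ℝ)) * (2*(a1:ℝ))^(2*n-2)) * (m:ℝ)^(2*n-2) := step2
      _ = ((n:ℝ) * (k*k) * (2*(a1:ℝ))^(2*n-2)) * (m:ℝ)^(2*n-2) := by push_cast; ring
  have hcoker : (Module.finrank ℂ (↥(Vab n A Bp) ⧸ LinearMap.range g) : ℝ)
      ≤ (PT : ℝ) - (PW : ℝ) := by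
    have := hmain
    push_cast
    have hc : (Module.finrank ℂ (↥(Vab n A Bp) ⧸ LinearMap.range g) : ℝ) + (PW:ℝ) ≤ (PT:ℝ) := by
      exact_mod_cast Nat.cast_le.mpr this
    linarith
  have hm2 : (0:ℝ) ≤ (m:ℝ)^(2*n-2) := by positivity
  calc (Module.finrank ℂ (↥(Vab n A Bp) ⧸ LinearMap.range g) : ℝ)
      ≤ (PT : ℝ) - (PW : ℝ) := hcoker
    _ ≤ ((n:ℝ) * (k*k) * (2*(a1:ℝ))^(2*n-2)) * (m:ℝ)^(2*n-2) := hnum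
    _ ≤ ((n:ℝ) * (k*k) * (2*(a1:ℝ))^(2*n-2) + 1) * (m:ℝ)^(2*n-2) := by
        apply mul_le_mul_of_nonneg_right _ hm2
        linarith
end

section
/- Let n ≥ 1, k ≥ 1 and let a2 ≥ a1 ≥ 1 be integers. Then there exists a constant C > 0 (depending on n, k, a1, a2) such that for all sufficiently large positive integers m, the kernel of the linear map D^k : V_{m·a1−k, m·a2+k−(n+1)} → V_{m·a1, m·a2−(n+1)} has ℂ-dimension at most C·m^{2n−2}. -/
open MvPolynomial

namespace KB
variable {n : ℕ}
abbrev wtf (n : ℕ) : Fin (n+1) ⊕ Fin (n+1) → ℕ × ℕ :=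
  Sum.elim (fun _ => ((1 : ℕ), (0 : ℕ))) (fun _ => ((0 : ℕ), (1 : ℕ)))
noncomputable def Eop (n : ℕ) :
    Module.End ℂ (MvPolynomial (Fin (n + 1) ⊕ Fin (n + 1)) ℂ) :=
  ∑ i : Fin (n + 1),
    (LinearMap.mulLeft ℂ (X (Sum.inr i))).comp (pderiv (Sum.inl i)).toLinearMap
lemma Dop_apply (p : MvPolynomial (Fin (n + 1) ⊕ Fin (n + 1)) ℂ) :
    Dop n p = ∑ i : Fin (n+1), X (Sum.inl i) * pderiv (Sum.inr i) p := by simp [Dop]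
lemma Eop_apply (p : MvPolynomial (Fin (n + 1) ⊕ Fin (n + 1)) ℂ) :
    Eop n p = ∑ i : Fin (n+1), X (Sum.inr i) * pderiv (Sum.inl i) p := by simp [Eop]
lemma mem_Vab {a b : ℕ} {p : MvPolynomial (Fin (n + 1) ⊕ Fin (n + 1)) ℂ} :
    p ∈ Vab n a b ↔ p.IsWeightedHomogeneous (wtf n) (a, b) := Iff.rfl
lemma weight_eq (d : (Fin (n+1) ⊕ Fin (n+1)) →₀ ℕ) :
    Finsupp.weight (wtf n) d
      = (∑ i : Fin (n+1), d (Sum.inl i), ∑ i : Fin (n+1), d (Sum.inr i)) := by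
  rw [Finsupp.weight_apply, Finsupp.sum_fintype]
  · rw [Fintype.sum_sum_type]
    apply Prod.ext
    · simp [Prod.fst_sum]
    · simp [Prod.snd_sum]
  · intro i; simp

-- new material

lemma sub_single_add {σ : Type*} [DecidableEq σ] (d : σ →₀ ℕ) (j : σ) (h : d j ≠ 0) :
    (d - Finsupp.single j 1) + Finsupp.single j 1 = d := by
  ext x
  simp only [Finsupp.add_apply, Finsupp.tsub_apply, Finsupp.single_apply]
  by_cases hx : j = x
  · subst hx; simp; omega
  · simp [hx]

lemma pderiv_mem {m' : ℕ × ℕ} {j : Fin (n+1) ⊕ Fin (n+1)}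
    {p : MvPolynomial (Fin (n + 1) ⊕ Fin (n + 1)) ℂ}
    (hp : p ∈ weightedHomogeneousSubmodule ℂ (wtf n) (m' + wtf n j)) :
    (pderiv j p : MvPolynomial (Fin (n + 1) ⊕ Fin (n + 1)) ℂ)
      ∈ weightedHomogeneousSubmodule ℂ (wtf n) m' := by
  classical
  rw [p.as_sum, map_sum]
  apply Submodule.sum_mem
  intro d hd
  rw [pderiv_monomial]
  by_cases hdj : d j = 0
  · rw [hdj]; simp
  · rw [mem_weightedHomogeneousSubmodule]
    have hw : Finsupp.weight (wtf n) d = m' + wtf n j := by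
      exact (mem_weightedHomogeneousSubmodule _ _ _ _).mp hp (mem_support_iff.mp hd)
    have hsplit : Finsupp.weight (wtf n) (d - Finsupp.single j 1) + wtf n j = m' + wtf n j := by
      have : Finsupp.weight (wtf n) ((d - Finsupp.single j 1) + Finsupp.single j 1)
          = Finsupp.weight (wtf n) (d - Finsupp.single j 1) + wtf n j := by
        rw [map_add]
        congr 1
        rw [Finsupp.weight_apply, Finsupp.sum_single_index] <;> simp
      rw [sub_single_add d j hdj] at this
      rw [← this, hw]
    have hw' : Finsupp.weight (wtf n) (d - Finsupp.single j 1) = m' := by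
      exact add_right_cancel hsplit
    exact isWeightedHomogeneous_monomial _ _ _ hw'

lemma Dop_mem {a b : ℕ} {p : MvPolynomial (Fin (n + 1) ⊕ Fin (n + 1)) ℂ}
    (hp : p ∈ Vab n a (b+1)) : Dop n p ∈ Vab n (a+1) b := by
  rw [Dop_apply]
  apply Submodule.sum_mem
  intro i _
  have h1 : (pderiv (Sum.inr i) p : MvPolynomial (Fin (n + 1) ⊕ Fin (n + 1)) ℂ)
      ∈ weightedHomogeneousSubmodule ℂ (wtf n) (a, b) := by
    apply pderiv_mem
    have : ((a:ℕ), b) + wtf n (Sum.inr i) = (a, b+1) := by simp [Prod.ext_iff]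
    rw [this]
    exact hp
  have h2 : (X (Sum.inl i) : MvPolynomial (Fin (n + 1) ⊕ Fin (n + 1)) ℂ).IsWeightedHomogeneous
      (wtf n) ((1,0)) := by
    have := isWeightedHomogeneous_X ℂ (wtf n) (Sum.inl i)
    simpa using this
  rw [mem_Vab]
  have := h2.mul ((mem_weightedHomogeneousSubmodule _ _ _ _).mp h1)
  have heq : ((1:ℕ),(0:ℕ)) + ((a:ℕ), b) = ((a+1 : ℕ), b) := by simp [Prod.ext_iff]; omega
  rwa [heq] at this

lemma Eop_mem {a b : ℕ} {p : MvPolynomial (Fin (n + 1) ⊕ Fin (n + 1)) ℂ}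
    (hp : p ∈ Vab n (a+1) b) : Eop n p ∈ Vab n a (b+1) := by
  rw [Eop_apply]
  apply Submodule.sum_mem
  intro i _
  have h1 : (pderiv (Sum.inl i) p : MvPolynomial (Fin (n + 1) ⊕ Fin (n + 1)) ℂ)
      ∈ weightedHomogeneousSubmodule ℂ (wtf n) (a, b) := by
    apply pderiv_mem
    have : ((a:ℕ), b) + wtf n (Sum.inl i) = (a+1, b) := by simp [Prod.ext_iff]
    rw [this]
    exact hp
  have h2 : (X (Sum.inr i) : MvPolynomial (Fin (n + 1) ⊕ Fin (n + 1)) ℂ).IsWeightedHomogeneous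
      (wtf n) ((0,1)) := by
    have := isWeightedHomogeneous_X ℂ (wtf n) (Sum.inr i)
    simpa using this
  rw [mem_Vab]
  have := h2.mul ((mem_weightedHomogeneousSubmodule _ _ _ _).mp h1)
  have heq : ((0:ℕ),(1:ℕ)) + ((a:ℕ), b) = ((a : ℕ), b+1) := by simp [Prod.ext_iff]; omega
  rwa [heq] at this

lemma Dop_zero {a : ℕ} {p : MvPolynomial (Fin (n + 1) ⊕ Fin (n + 1)) ℂ}
    (hp : p ∈ Vab n a 0) : Dop n p = 0 := by
  classical
  rw [Dop_apply]
  apply Finset.sum_eq_zero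
  intro i _
  have : (pderiv (Sum.inr i) p : MvPolynomial (Fin (n + 1) ⊕ Fin (n + 1)) ℂ) = 0 := by
    rw [p.as_sum, map_sum]
    apply Finset.sum_eq_zero
    intro d hd
    have hw := (mem_Vab.mp hp) (mem_support_iff.mp hd)
    rw [weight_eq] at hw
    have h2 : ∑ j : Fin (n+1), d (Sum.inr j) = 0 := congrArg Prod.snd hw
    have h3 : d (Sum.inr i) = 0 := by
      have := Finset.sum_eq_zero_iff.mp h2 i (Finset.mem_univ i)
      exact this
    rw [pderiv_monomial, h3]
    simp
  rw [this, mul_zero]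

lemma Eop_zero {b : ℕ} {p : MvPolynomial (Fin (n + 1) ⊕ Fin (n + 1)) ℂ}
    (hp : p ∈ Vab n 0 b) : Eop n p = 0 := by
  classical
  rw [Eop_apply]
  apply Finset.sum_eq_zero
  intro i _
  have : (pderiv (Sum.inl i) p : MvPolynomial (Fin (n + 1) ⊕ Fin (n + 1)) ℂ) = 0 := by
    rw [p.as_sum, map_sum]
    apply Finset.sum_eq_zero
    intro d hd
    have hw := (mem_Vab.mp hp) (mem_support_iff.mp hd)
    rw [weight_eq] at hw
    have h2 : ∑ j : Fin (n+1), d (Sum.inl j) = 0 := congrArg Prod.fst hw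
    have h3 : d (Sum.inl i) = 0 := by
      have := Finset.sum_eq_zero_iff.mp h2 i (Finset.mem_univ i)
      exact this
    rw [pderiv_monomial, h3]
    simp
  rw [this, mul_zero]

lemma X_mul_pderiv_monomial (j : Fin (n+1) ⊕ Fin (n+1)) (d : (Fin (n+1) ⊕ Fin (n+1)) →₀ ℕ)
    (c : ℂ) :
    X j * pderiv j (monomial d c) = (d j) • monomial d c := by
  classical
  rw [pderiv_monomial]
  by_cases hdj : d j = 0
  · rw [hdj]; simp
  · rw [X, monomial_mul, smul_monomial]
    have hds : Finsupp.single j 1 + (d - Finsupp.single j 1) = d := by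
      exact (add_comm _ _).trans (sub_single_add d j hdj)
    simp only [hds]
    congr 1
    simp only [nsmul_eq_mul, one_mul]
    ring

lemma euler_inl {a b : ℕ} {p : MvPolynomial (Fin (n + 1) ⊕ Fin (n + 1)) ℂ}
    (hp : p ∈ Vab n a b) :
    ∑ i : Fin (n+1), X (Sum.inl i) * pderiv (Sum.inl i) p = a • p := by
  classical
  conv_lhs => rw [p.as_sum]
  have : ∀ i : Fin (n+1), X (Sum.inl i) * pderiv (Sum.inl i)
      (∑ d ∈ p.support, monomial d (coeff d p))
      = ∑ d ∈ p.support, X (Sum.inl i) * pderiv (Sum.inl i) (monomial d (coeff d p)) := by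
    intro i; rw [map_sum, Finset.mul_sum]
  rw [Finset.sum_congr rfl fun i _ => this i, Finset.sum_comm]
  conv_rhs => rw [p.as_sum, Finset.smul_sum]
  apply Finset.sum_congr rfl
  intro d hd
  rw [Finset.sum_congr rfl fun i _ => X_mul_pderiv_monomial (Sum.inl i) d (coeff d p),
    ← Finset.sum_smul]
  congr 1
  have hw := (mem_Vab.mp hp) (mem_support_iff.mp hd)
  rw [weight_eq] at hw
  exact congrArg Prod.fst hw

lemma euler_inr {a b : ℕ} {p : MvPolynomial (Fin (n + 1) ⊕ Fin (n + 1)) ℂ}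
    (hp : p ∈ Vab n a b) :
    ∑ i : Fin (n+1), X (Sum.inr i) * pderiv (Sum.inr i) p = b • p := by
  classical
  conv_lhs => rw [p.as_sum]
  have : ∀ i : Fin (n+1), X (Sum.inr i) * pderiv (Sum.inr i)
      (∑ d ∈ p.support, monomial d (coeff d p))
      = ∑ d ∈ p.support, X (Sum.inr i) * pderiv (Sum.inr i) (monomial d (coeff d p)) := by
    intro i; rw [map_sum, Finset.mul_sum]
  rw [Finset.sum_congr rfl fun i _ => this i, Finset.sum_comm]
  conv_rhs => rw [p.as_sum, Finset.smul_sum]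
  apply Finset.sum_congr rfl
  intro d hd
  rw [Finset.sum_congr rfl fun i _ => X_mul_pderiv_monomial (Sum.inr i) d (coeff d p),
    ← Finset.sum_smul]
  congr 1
  have hw := (mem_Vab.mp hp) (mem_support_iff.mp hd)
  rw [weight_eq] at hw
  exact congrArg Prod.snd hw

lemma pderiv_comm (i j : Fin (n+1) ⊕ Fin (n+1)) (p : MvPolynomial (Fin (n + 1) ⊕ Fin (n + 1)) ℂ) :
    pderiv i (pderiv j p) = pderiv j (pderiv i p) := by
  classical
  induction p using MvPolynomial.induction_on' with
  | monomial d c =>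
    by_cases hij : i = j
    · subst hij; rfl
    · rw [pderiv_monomial, pderiv_monomial, pderiv_monomial, pderiv_monomial]
      have h1 : ((d - Finsupp.single j 1 : (Fin (n+1) ⊕ Fin (n+1)) →₀ ℕ)) i = d i := by
        simp [Finsupp.tsub_apply, Finsupp.single_apply, Ne.symm hij]
      have h2 : ((d - Finsupp.single i 1 : (Fin (n+1) ⊕ Fin (n+1)) →₀ ℕ)) j = d j := by
        simp [Finsupp.tsub_apply, Finsupp.single_apply, hij]
      rw [h1, h2]
      have h3 : d - Finsupp.single j 1 - Finsupp.single i 1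
          = d - Finsupp.single i 1 - Finsupp.single j 1 := by
        ext x
        simp only [Finsupp.tsub_apply]
        omega
      rw [h3]
      congr 1
      ring
  | add p q hp hq => simp [map_add, hp, hq]

lemma comm {a b : ℕ} {p : MvPolynomial (Fin (n + 1) ⊕ Fin (n + 1)) ℂ}
    (hp : p ∈ Vab n a b) :
    Dop n (Eop n p) + b • p = Eop n (Dop n p) + a • p := by
  classical
  have hDE : Dop n (Eop n p)
      = a • p + ∑ i : Fin (n+1), ∑ j : Fin (n+1),
          X (Sum.inl i) * (X (Sum.inr j) * pderiv (Sum.inr i) (pderiv (Sum.inl j) p)) := by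
    rw [Eop_apply, Dop_apply]
    have step1 : ∀ i : Fin (n+1),
        pderiv (Sum.inr i) (∑ j : Fin (n+1), X (Sum.inr j) * pderiv (Sum.inl j) p)
        = pderiv (Sum.inl i) p
          + ∑ j : Fin (n+1), X (Sum.inr j) * pderiv (Sum.inr i) (pderiv (Sum.inl j) p) := by
      intro i
      rw [map_sum]
      have h : ∀ j : Fin (n+1), pderiv (Sum.inr i) (X (Sum.inr j) * pderiv (Sum.inl j) p)
          = (if j = i then pderiv (Sum.inl j) p else 0)
            + X (Sum.inr j) * pderiv (Sum.inr i) (pderiv (Sum.inl j) p) := by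
        intro j
        rw [pderiv_mul]
        congr 1
        by_cases hji : j = i
        · subst hji; rw [pderiv_X_self, one_mul, if_pos rfl]
        · rw [pderiv_X_of_ne (by simpa using hji), zero_mul, if_neg hji]
      rw [Finset.sum_congr rfl fun j _ => h j, Finset.sum_add_distrib]
      congr 1
      simp
    rw [Finset.sum_congr rfl fun i _ => by rw [step1 i, mul_add]]
    rw [Finset.sum_add_distrib, euler_inl hp]
    congr 1
    exact Finset.sum_congr rfl fun i _ => Finset.mul_sum _ _ _
  have hED : Eop n (Dop n p)
      = b • p + ∑ j : Fin (n+1), ∑ i : Fin (n+1),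
          X (Sum.inr j) * (X (Sum.inl i) * pderiv (Sum.inl j) (pderiv (Sum.inr i) p)) := by
    rw [Dop_apply, Eop_apply]
    have step1 : ∀ j : Fin (n+1),
        pderiv (Sum.inl j) (∑ i : Fin (n+1), X (Sum.inl i) * pderiv (Sum.inr i) p)
        = pderiv (Sum.inr j) p
          + ∑ i : Fin (n+1), X (Sum.inl i) * pderiv (Sum.inl j) (pderiv (Sum.inr i) p) := by
      intro j
      rw [map_sum]
      have h : ∀ i : Fin (n+1), pderiv (Sum.inl j) (X (Sum.inl i) * pderiv (Sum.inr i) p)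
          = (if i = j then pderiv (Sum.inr i) p else 0)
            + X (Sum.inl i) * pderiv (Sum.inl j) (pderiv (Sum.inr i) p) := by
        intro i
        rw [pderiv_mul]
        congr 1
        by_cases hij : i = j
        · subst hij; rw [pderiv_X_self, one_mul, if_pos rfl]
        · rw [pderiv_X_of_ne (by simpa using hij), zero_mul, if_neg hij]
      rw [Finset.sum_congr rfl fun i _ => h i, Finset.sum_add_distrib]
      congr 1
      simp
    rw [Finset.sum_congr rfl fun j _ => by rw [step1 j, mul_add]]
    rw [Finset.sum_add_distrib, euler_inr hp]
    congr 1
    exact Finset.sum_congr rfl fun j _ => Finset.mul_sum _ _ _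
  have hmix : ∑ i : Fin (n+1), ∑ j : Fin (n+1),
          X (Sum.inl i) * (X (Sum.inr j) * pderiv (Sum.inr i) (pderiv (Sum.inl j) p))
      = ∑ j : Fin (n+1), ∑ i : Fin (n+1),
          X (Sum.inr j) * (X (Sum.inl i) * pderiv (Sum.inl j) (pderiv (Sum.inr i) p)) := by
    rw [Finset.sum_comm]
    apply Finset.sum_congr rfl
    intro j _
    apply Finset.sum_congr rfl
    intro i _
    rw [pderiv_comm]
    ring
  rw [hDE, hED, hmix]
  abel

/-! ### Dimension of `Vab` -/

def SS (n a b : ℕ) : Set ((Fin (n+1) ⊕ Fin (n+1)) →₀ ℕ) :=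
  {d | Finsupp.weight (wtf n) d = (a, b)}

noncomputable def eqSym (n a b : ℕ) :
    ↥(SS n a b) ≃ (Sym (Fin (n+1)) a × Sym (Fin (n+1)) b) := by
  classical
  refine Equiv.trans (Equiv.subtypeEquiv Finsupp.sumFinsuppEquivProdFinsupp ?_)
    (Equiv.trans (Equiv.subtypeProdEquivProd)
      (Equiv.prodCongr (Sym.equivNatSum (Fin (n+1)) a).symm (Sym.equivNatSum (Fin (n+1)) b).symm))
  intro d
  show Finsupp.weight (wtf n) d = (a, b) ↔ _
  rw [weight_eq, Prod.mk.injEq]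
  constructor
  · rintro ⟨h1, h2⟩
    constructor
    · rw [Finsupp.sum_fintype _ _ (fun i => rfl)]
      simpa [Finsupp.fst_sumFinsuppEquivProdFinsupp] using h1
    · rw [Finsupp.sum_fintype _ _ (fun i => rfl)]
      simpa [Finsupp.snd_sumFinsuppEquivProdFinsupp] using h2
  · rintro ⟨h1, h2⟩
    rw [Finsupp.sum_fintype _ _ (fun i => rfl)] at h1 h2
    constructor
    · simpa [Finsupp.fst_sumFinsuppEquivProdFinsupp] using h1
    · simpa [Finsupp.snd_sumFinsuppEquivProdFinsupp] using h2

noncomputable instance (n a b : ℕ) : Fintype ↥(SS n a b) :=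
  Fintype.ofEquiv _ (eqSym n a b).symm

lemma card_SS (n a b : ℕ) :
    Fintype.card ↥(SS n a b) = (n+a).choose a * (n+b).choose b := by
  rw [Fintype.card_congr (eqSym n a b), Fintype.card_prod,
    Sym.card_sym_eq_choose, Sym.card_sym_eq_choose, Fintype.card_fin]
  congr 2 <;> omega

noncomputable def VabEquiv (n a b : ℕ) : ↥(Vab n a b) ≃ₗ[ℂ] (↥(SS n a b) →₀ ℂ) :=
  (LinearEquiv.ofEq _ _
    (weightedHomogeneousSubmodule_eq_finsupp_supported ℂ (wtf n) ((a : ℕ), (b : ℕ)))).trans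
    (AddMonoidAlgebra.supportedEquivFinsupp _)

instance (n a b : ℕ) : FiniteDimensional ℂ ↥(Vab n a b) :=
  Module.Finite.equiv (VabEquiv n a b).symm

lemma finrank_Vab (n a b : ℕ) :
    Module.finrank ℂ ↥(Vab n a b) = (n+a).choose a * (n+b).choose b := by
  rw [(VabEquiv n a b).finrank_eq, Module.finrank_finsupp_self, card_SS]

/-! ### sl2-type operator identities -/

lemma commz {a b : ℕ} {p : MvPolynomial (Fin (n + 1) ⊕ Fin (n + 1)) ℂ}
    (hp : p ∈ Vab n a b) :
    Dop n (Eop n p) = Eop n (Dop n p) + ((a : ℤ) - (b : ℤ)) • p := by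
  have h := comm hp
  have ha : (a : ℕ) • p = (a : ℤ) • p := (natCast_zsmul p a).symm
  have hb : (b : ℕ) • p = (b : ℤ) • p := (natCast_zsmul p b).symm
  rw [ha, hb] at h
  rw [sub_smul, eq_sub_of_add_eq h]
  abel

lemma chainED (b : ℕ) : ∀ a : ℕ, b ≤ a → ∀ s : ℤ, 1 ≤ s →
    ∀ p ∈ Vab n a b, Eop n (Dop n p) + s • p = 0 → p = 0 := by
  induction b with
  | zero =>
    intro a _ s hs p hp h
    rw [Dop_zero hp, map_zero, zero_add] at h
    have : ((s : ℂ)) • p = 0 := by rwa [Int.cast_smul_eq_zsmul]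
    rcases smul_eq_zero.mp this with h' | h'
    · exact absurd h' (by exact_mod_cast (by omega : s ≠ 0))
    · exact h'
  | succ b ih =>
    intro a hba s hs p hp h
    have hq : Dop n p ∈ Vab n (a+1) b := Dop_mem hp
    have hEq : Eop n (Dop n p) = -(s • p) := by
      rw [eq_neg_iff_add_eq_zero]; exact h
    have hcq := commz hq
    -- Dop (Eop q) = Eop (Dop q) + ((a+1:ℤ) - b) • q  where q = Dop n p
    have hDEq : Dop n (Eop n (Dop n p)) = -(s • Dop n p) := by
      rw [hEq, map_neg, map_zsmul]
    have key : Eop n (Dop n (Dop n p)) + (s + ((a : ℤ) + 1 - b)) • (Dop n p) = 0 := by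
      have h1 : Eop n (Dop n (Dop n p))
          = -(s • Dop n p) - (((a+1 : ℕ) : ℤ) - (b : ℤ)) • (Dop n p) := by
        rw [← hDEq, hcq]; abel
      rw [h1]
      push_cast
      module
    have hs' : 1 ≤ s + ((a : ℤ) + 1 - b) := by omega
    have hq0 : Dop n p = 0 := ih (a+1) (by omega) _ hs' (Dop n p) hq key
    rw [hq0, map_zero, zero_add] at h
    have : ((s : ℂ)) • p = 0 := by rwa [Int.cast_smul_eq_zsmul]
    rcases smul_eq_zero.mp this with h' | h'
    · exact absurd h' (by exact_mod_cast (by omega : s ≠ 0))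
    · exact h'

lemma chainDE (a : ℕ) : ∀ b : ℕ, a ≤ b → ∀ s : ℤ, 1 ≤ s →
    ∀ p ∈ Vab n a b, Dop n (Eop n p) + s • p = 0 → p = 0 := by
  induction a with
  | zero =>
    intro b _ s hs p hp h
    rw [Eop_zero hp, map_zero, zero_add] at h
    have : ((s : ℂ)) • p = 0 := by rwa [Int.cast_smul_eq_zsmul]
    rcases smul_eq_zero.mp this with h' | h'
    · exact absurd h' (by exact_mod_cast (by omega : s ≠ 0))
    · exact h'
  | succ a ih =>
    intro b hab s hs p hp h
    have hq : Eop n p ∈ Vab n a (b+1) := Eop_mem hp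
    have hDq : Dop n (Eop n p) = -(s • p) := by
      rw [eq_neg_iff_add_eq_zero]; exact h
    have hcq := commz hq
    -- Dop (Eop q) = Eop (Dop q) + ((a:ℤ) - (b+1)) • q  where q = Eop n p
    have hEDq : Eop n (Dop n (Eop n p)) = -(s • Eop n p) := by
      rw [hDq, map_neg, map_zsmul]
    have key : Dop n (Eop n (Eop n p)) + (s + ((b : ℤ) + 1 - a)) • (Eop n p) = 0 := by
      have h1 : Dop n (Eop n (Eop n p))
          = -(s • Eop n p) + ((a : ℤ) - ((b+1 : ℕ) : ℤ)) • (Eop n p) := by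
        rw [← hEDq, hcq]
      rw [h1]
      push_cast
      module
    have hs' : 1 ≤ s + ((b : ℤ) + 1 - a) := by omega
    have hq0 : Eop n p = 0 := ih (b+1) (by omega) _ hs' (Eop n p) hq key
    rw [hq0, map_zero, zero_add] at h
    have : ((s : ℂ)) • p = 0 := by rwa [Int.cast_smul_eq_zsmul]
    rcases smul_eq_zero.mp this with h' | h'
    · exact absurd h' (by exact_mod_cast (by omega : s ≠ 0))
    · exact h'

noncomputable def PhiED (n : ℕ) : List ℤ → MvPolynomial (Fin (n + 1) ⊕ Fin (n + 1)) ℂ →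
    MvPolynomial (Fin (n + 1) ⊕ Fin (n + 1)) ℂ
  | [], p => p
  | c :: l, p => PhiED n l (Eop n (Dop n p) + c • p)

noncomputable def PhiDE (n : ℕ) : List ℤ → MvPolynomial (Fin (n + 1) ⊕ Fin (n + 1)) ℂ →
    MvPolynomial (Fin (n + 1) ⊕ Fin (n + 1)) ℂ
  | [], p => p
  | c :: l, p => PhiDE n l (Dop n (Eop n p) + c • p)

lemma uED_mem {a b : ℕ} {p : MvPolynomial (Fin (n + 1) ⊕ Fin (n + 1)) ℂ}
    (hp : p ∈ Vab n a b) : Eop n (Dop n p) ∈ Vab n a b := by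
  cases b with
  | zero => rw [Dop_zero hp, map_zero]; exact Submodule.zero_mem _
  | succ b => exact Eop_mem (Dop_mem hp)

lemma uDE_mem {a b : ℕ} {p : MvPolynomial (Fin (n + 1) ⊕ Fin (n + 1)) ℂ}
    (hp : p ∈ Vab n a b) : Dop n (Eop n p) ∈ Vab n a b := by
  cases a with
  | zero => rw [Eop_zero hp, map_zero]; exact Submodule.zero_mem _
  | succ a => exact Dop_mem (Eop_mem hp)


lemma zsmul_mem_Vab {a b : ℕ} (c : ℤ) {p : MvPolynomial (Fin (n + 1) ⊕ Fin (n + 1)) ℂ}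
    (hp : p ∈ Vab n a b) : c • p ∈ Vab n a b := by
  rw [← Int.cast_smul_eq_zsmul ℂ]
  exact Submodule.smul_mem _ _ hp

lemma PhiED_zero_inj {a b : ℕ} (hba : b ≤ a) :
    ∀ l : List ℤ, (∀ c ∈ l, 1 ≤ c) →
    ∀ p ∈ Vab n a b, PhiED n l p = 0 → p = 0 := by
  intro l
  induction l with
  | nil => intro _ p _ h; exact h
  | cons c l ih =>
    intro hc p hp h
    rw [PhiED] at h
    have h1 : Eop n (Dop n p) + c • p = 0 :=
      ih (fun c' hc' => hc c' (List.mem_cons_of_mem _ hc'))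
        _ (Submodule.add_mem _ (uED_mem hp) (zsmul_mem_Vab c hp)) h
    exact chainED b a hba c (hc c List.mem_cons_self) p hp h1

lemma PhiDE_zero_inj {a b : ℕ} (hab : a ≤ b) :
    ∀ l : List ℤ, (∀ c ∈ l, 1 ≤ c) →
    ∀ p ∈ Vab n a b, PhiDE n l p = 0 → p = 0 := by
  intro l
  induction l with
  | nil => intro _ p _ h; exact h
  | cons c l ih =>
    intro hc p hp h
    rw [PhiDE] at h
    have h1 : Dop n (Eop n p) + c • p = 0 :=
      ih (fun c' hc' => hc c' (List.mem_cons_of_mem _ hc'))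
        _ (Submodule.add_mem _ (uDE_mem hp) (zsmul_mem_Vab c hp)) h
    exact chainDE a b hab c (hc c List.mem_cons_self) p hp h1

lemma swapED (A B : ℕ) : ∀ (l : List ℤ) (p : MvPolynomial (Fin (n + 1) ⊕ Fin (n + 1)) ℂ),
    p ∈ Vab n (A+1) B →
    Dop n (PhiED n l (Eop n p))
      = PhiED n (l.map (· + ((A:ℤ) + 1 - (B:ℤ)))) (Dop n (Eop n p)) := by
  intro l
  induction l with
  | nil => intro p hp; rfl
  | cons c l ih =>
    intro p hp
    have hEp : Eop n p ∈ Vab n A (B+1) := Eop_mem hp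
    have hw : Dop n (Eop n p) ∈ Vab n (A+1) B := Dop_mem hEp
    have hp' : Dop n (Eop n p) + c • p ∈ Vab n (A+1) B :=
      Submodule.add_mem _ hw (zsmul_mem_Vab c hp)
    have hEp' : Eop n (Dop n (Eop n p)) + c • Eop n p
        = Eop n (Dop n (Eop n p) + c • p) := by rw [map_add, map_zsmul]
    rw [PhiED, hEp', ih _ hp', List.map_cons, PhiED]
    congr 1
    have h1 := commz hp'
    have h2 := commz hp
    have h3 : Eop n (Dop n (Dop n (Eop n p) + c • p))
        = Eop n (Dop n (Dop n (Eop n p))) + c • Eop n (Dop n p) := by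
      simp only [map_add, map_zsmul]
    rw [h1, h3]
    have h5 : Eop n (Dop n p) = Dop n (Eop n p) - (((A+1:ℕ):ℤ) - (B:ℤ)) • p := by
      rw [h2]; abel
    rw [h5]
    push_cast
    module

lemma swapDE (A B : ℕ) : ∀ (l : List ℤ) (p : MvPolynomial (Fin (n + 1) ⊕ Fin (n + 1)) ℂ),
    p ∈ Vab n A (B+1) →
    Eop n (PhiDE n l (Dop n p))
      = PhiDE n (l.map (· + ((B:ℤ) + 1 - (A:ℤ)))) (Eop n (Dop n p)) := by
  intro l
  induction l with
  | nil => intro p hp; rfl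
  | cons c l ih =>
    intro p hp
    have hDp : Dop n p ∈ Vab n (A+1) B := Dop_mem hp
    have hw : Eop n (Dop n p) ∈ Vab n A (B+1) := Eop_mem hDp
    have hp' : Eop n (Dop n p) + c • p ∈ Vab n A (B+1) :=
      Submodule.add_mem _ hw (zsmul_mem_Vab c hp)
    have hDp' : Dop n (Eop n (Dop n p)) + c • Dop n p
        = Dop n (Eop n (Dop n p) + c • p) := by rw [map_add, map_zsmul]
    rw [PhiDE, hDp', ih _ hp', List.map_cons, PhiDE]
    congr 1
    have h1 := commz hp'
    have h2 := commz hp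
    -- h1 : D(E p') = E(D p') + ((A:ℤ) - (B+1)) • p'  where p' = E(Dp) + c•p
    -- want : E(D p') = D(E p') + ((B+1) - A) • p'
    have h1' : Eop n (Dop n (Eop n (Dop n p) + c • p))
        = Dop n (Eop n (Eop n (Dop n p) + c • p))
          + (((B+1:ℕ):ℤ) - (A:ℤ)) • (Eop n (Dop n p) + c • p) := by
      rw [h1]; push_cast; module
    have h3 : Dop n (Eop n (Eop n (Dop n p) + c • p))
        = Dop n (Eop n (Eop n (Dop n p))) + c • Dop n (Eop n p) := by
      simp only [map_add, map_zsmul]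
    rw [h1', h3]
    have h5 : Dop n (Eop n p) = Eop n (Dop n p) + (((A:ℕ):ℤ) - ((B+1:ℕ):ℤ)) • p := commz hp
    rw [h5]
    push_cast
    module

def Lf (k : ℕ) (μ : ℤ) : List ℤ := (List.range k).map (fun i : ℕ => ((i:ℤ) + 1) * (μ - (i:ℤ)))

lemma Lf_succ (k : ℕ) (μ : ℤ) : Lf (k+1) μ = μ :: (Lf k (μ-2)).map (· + μ) := by
  unfold Lf
  rw [List.range_succ_eq_map, List.map_cons, List.map_map, List.map_map]
  congr 1
  · push_cast; ring
  · apply List.map_congr_left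
    intro i _
    simp only [Function.comp_apply]
    push_cast
    ring

lemma Lf_pos (k : ℕ) (μ : ℤ) (hμ : (k:ℤ) ≤ μ) : ∀ c ∈ Lf k μ, 1 ≤ c := by
  intro c hc
  rw [Lf, List.mem_map] at hc
  obtain ⟨i, hi, rfl⟩ := hc
  rw [List.mem_range] at hi
  have h1 : 1 ≤ (i:ℤ) + 1 := by omega
  have h2 : 1 ≤ μ - (i:ℤ) := by omega
  nlinarith

lemma mainED : ∀ (k A B : ℕ), k ≤ A → ∀ p ∈ Vab n A B,
    ((Dop n)^k) (((Eop n)^k) p) = PhiED n (Lf k ((A:ℤ) - (B:ℤ))) p := by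
  intro k
  induction k with
  | zero => intro A B _ p _; simp [Lf, PhiED]
  | succ k ih =>
    intro A B hk p hp
    obtain ⟨A', rfl⟩ : ∃ A', A = A' + 1 := ⟨A-1, by omega⟩
    have hEp : Eop n p ∈ Vab n A' (B+1) := Eop_mem hp
    have e1 : ((Eop n)^(k+1)) p = ((Eop n)^k) (Eop n p) := by rw [pow_succ]; rfl
    rw [e1]
    have e2 : ((Dop n)^(k+1)) (((Eop n)^k) (Eop n p))
        = Dop n (((Dop n)^k) (((Eop n)^k) (Eop n p))) := by rw [pow_succ']; rfl
    rw [e2, ih A' (B+1) (by omega) _ hEp]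
    have hl : ((A':ℤ) - ((B+1:ℕ):ℤ)) = ((A':ℤ) + 1 - (B:ℤ)) - 2 := by push_cast; ring
    rw [hl, swapED A' B _ p hp]
    have hμ : (((A'+1:ℕ)):ℤ) - (B:ℤ) = (A':ℤ) + 1 - (B:ℤ) := by push_cast; ring
    rw [hμ, Lf_succ, PhiED, commz hp, hμ]

lemma mainDE : ∀ (k A B : ℕ), k ≤ B → ∀ p ∈ Vab n A B,
    ((Eop n)^k) (((Dop n)^k) p) = PhiDE n (Lf k ((B:ℤ) - (A:ℤ))) p := by
  intro k
  induction k with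
  | zero => intro A B _ p _; simp [Lf, PhiDE]
  | succ k ih =>
    intro A B hk p hp
    obtain ⟨B', rfl⟩ : ∃ B', B = B' + 1 := ⟨B-1, by omega⟩
    have hDp : Dop n p ∈ Vab n (A+1) B' := Dop_mem hp
    have e1 : ((Dop n)^(k+1)) p = ((Dop n)^k) (Dop n p) := by rw [pow_succ]; rfl
    rw [e1]
    have e2 : ((Eop n)^(k+1)) (((Dop n)^k) (Dop n p))
        = Eop n (((Eop n)^k) (((Dop n)^k) (Dop n p))) := by rw [pow_succ']; rfl
    rw [e2, ih (A+1) B' (by omega) _ hDp]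
    have hl : ((B':ℤ) - ((A+1:ℕ):ℤ)) = ((B':ℤ) + 1 - (A:ℤ)) - 2 := by push_cast; ring
    rw [hl, swapDE A B' _ p hp]
    have hμ : (((B'+1:ℕ)):ℤ) - (A:ℤ) = (B':ℤ) + 1 - (A:ℤ) := by push_cast; ring
    rw [hμ, Lf_succ, PhiDE]
    have hc := commz hp
    -- E(Dp) = D(Ep) + ((B'+1) - A) • p
    have hc' : Eop n (Dop n p)
        = Dop n (Eop n p) + ((B':ℤ) + 1 - (A:ℤ)) • p := by
      rw [hc]; push_cast; module
    rw [hc']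

lemma Epow_mem : ∀ (j A B : ℕ) (p : MvPolynomial (Fin (n + 1) ⊕ Fin (n + 1)) ℂ),
    p ∈ Vab n (A+j) B → ((Eop n)^j) p ∈ Vab n A (B+j) := by
  intro j
  induction j with
  | zero => intro A B p hp; simpa using hp
  | succ j ih =>
    intro A B p hp
    have e1 : ((Eop n)^(j+1)) p = ((Eop n)^j) (Eop n p) := by rw [pow_succ]; rfl
    rw [e1]
    have hp' : p ∈ Vab n ((A+j)+1) B := by
      have : A + (j+1) = (A+j)+1 := by omega
      rwa [this] at hp
    have hEp : Eop n p ∈ Vab n (A+j) (B+1) := Eop_mem hp'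
    have := ih A (B+1) (Eop n p) hEp
    have heq : B + 1 + j = B + (j+1) := by omega
    rwa [heq] at this

lemma Dpow_mem : ∀ (j A B : ℕ) (p : MvPolynomial (Fin (n + 1) ⊕ Fin (n + 1)) ℂ),
    p ∈ Vab n A (B+j) → ((Dop n)^j) p ∈ Vab n (A+j) B := by
  intro j
  induction j with
  | zero => intro A B p hp; simpa using hp
  | succ j ih =>
    intro A B p hp
    have e1 : ((Dop n)^(j+1)) p = ((Dop n)^j) (Dop n p) := by rw [pow_succ]; rfl
    rw [e1]
    have hp' : p ∈ Vab n A ((B+j)+1) := by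
      have : B + (j+1) = (B+j)+1 := by omega
      rwa [this] at hp
    have hDp : Dop n p ∈ Vab n (A+1) (B+j) := Dop_mem hp'
    have := ih (A+1) B (Dop n p) hDp
    have heq : A + 1 + j = A + (j+1) := by omega
    rwa [heq] at this

lemma surjD (k A B : ℕ) (hBk : B + k ≤ A) :
    ∀ w ∈ Vab n A B, ∃ v ∈ Vab n (A-k) (B+k), ((Dop n)^k) v = w := by
  have hkA : k ≤ A := by omega
  -- the operator T = D^k ∘ E^k as an endomorphism of Vab n A B
  have hmemT : ∀ q ∈ Vab n A B, ((Dop n)^k) (((Eop n)^k) q) ∈ Vab n A B := by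
    intro q hq
    have hq' : q ∈ Vab n ((A-k)+k) B := by
      have : (A-k)+k = A := by omega
      rwa [this]
    have h1 : ((Eop n)^k) q ∈ Vab n (A-k) (B+k) := Epow_mem k (A-k) B q hq'
    have h2 : ((Dop n)^k) (((Eop n)^k) q) ∈ Vab n ((A-k)+k) B := Dpow_mem k (A-k) B _ h1
    have : (A-k)+k = A := by omega
    rwa [this] at h2
  let T : ↥(Vab n A B) →ₗ[ℂ] ↥(Vab n A B) :=
    { toFun := fun q => ⟨((Dop n)^k) (((Eop n)^k) q.1), hmemT q.1 q.2⟩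
      map_add' := by intro x y; ext; simp [map_add]
      map_smul' := by intro c x; ext; simp }
  have hTinj : Function.Injective T := by
    rw [injective_iff_map_eq_zero]
    intro q hq
    have hq1 : ((Dop n)^k) (((Eop n)^k) q.1) = 0 := by
      have := congrArg (Subtype.val) hq
      simpa [T] using this
    rw [mainED k A B hkA _ q.2] at hq1
    have hq0 : q.1 = 0 := by
      apply PhiED_zero_inj (by omega : B ≤ A) (Lf k ((A:ℤ) - (B:ℤ)))
        (Lf_pos k _ (by omega)) _ q.2 hq1
    exact Subtype.ext hq0
  have hTsurj : Function.Surjective T := LinearMap.surjective_of_injective hTinj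
  intro w hw
  obtain ⟨q, hq⟩ := hTsurj ⟨w, hw⟩
  have hq' : q.1 ∈ Vab n ((A-k)+k) B := by
    have : (A-k)+k = A := by omega
    rw [this]; exact q.2
  refine ⟨((Eop n)^k) q.1, Epow_mem k (A-k) B q.1 hq', ?_⟩
  have := congrArg (Subtype.val) hq
  simpa [T] using this

lemma injD (k A B : ℕ) (hAk : A + k ≤ B) :
    ∀ p ∈ Vab n A B, ((Dop n)^k) p = 0 → p = 0 := by
  intro p hp h
  have h1 : ((Eop n)^k) (((Dop n)^k) p) = 0 := by rw [h, map_zero]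
  rw [mainDE k A B (by omega) p hp] at h1
  exact PhiDE_zero_inj (by omega : A ≤ B) (Lf k ((B:ℤ) - (A:ℤ)))
    (Lf_pos k _ (by omega)) p hp h1

/-! ### Binomial inequalities -/

lemma step_ineq (A B t : ℕ) (h : A + 1 ≤ B + (t+1)) (hB : 1 ≤ B) :
    A.choose (t+1) * B.choose (t+1)
      ≤ (A+1).choose (t+1) * (B-1).choose (t+1) + A.choose t * (B-1).choose t := by
  obtain ⟨B', rfl⟩ : ∃ B', B = B'+1 := ⟨B-1, by omega⟩
  simp only [Nat.add_sub_cancel]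
  have hA : (A+1).choose (t+1) = A.choose t + A.choose (t+1) := Nat.choose_succ_succ A t
  have hBp : (B'+1).choose (t+1) = B'.choose t + B'.choose (t+1) := Nat.choose_succ_succ B' t
  rw [hA, hBp]
  have key : A.choose (t+1) * B'.choose t
      ≤ A.choose t * (B'.choose (t+1) + B'.choose t) := by
    have e1 : A.choose (t+1) * (t+1) = A.choose t * (A - t) := Nat.choose_succ_right_eq A t
    have e2 : B'.choose (t+1) * (t+1) = B'.choose t * (B' - t) := Nat.choose_succ_right_eq B' t
    apply Nat.le_of_mul_le_mul_right _ (Nat.succ_pos t)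
    calc A.choose (t+1) * B'.choose t * (t+1)
        = (A.choose (t+1) * (t+1)) * B'.choose t := by ring
      _ = (A.choose t * (A - t)) * B'.choose t := by rw [e1]
      _ ≤ (A.choose t * ((B' - t) + (t+1))) * B'.choose t := by
          have : A - t ≤ (B' - t) + (t+1) := by omega
          exact Nat.mul_le_mul_right _ (Nat.mul_le_mul_left _ this)
      _ = A.choose t * (B'.choose t * (B' - t) + B'.choose t * (t+1)) := by ring
      _ = A.choose t * (B'.choose (t+1) * (t+1) + B'.choose t * (t+1)) := by rw [e2]
      _ = A.choose t * (B'.choose (t+1) + B'.choose t) * (t+1) := by ring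
  nlinarith [key]

lemma tele : ∀ (k A B t : ℕ), A + 2*k ≤ B + t + 2 → k ≤ B →
    A.choose (t+1) * B.choose (t+1)
      ≤ (A+k).choose (t+1) * (B-k).choose (t+1) + k * ((A+k).choose t * B.choose t) := by
  intro k
  induction k with
  | zero => intro A B t h hk; simp
  | succ k ih =>
    intro A B t h hkB
    have hstep := step_ineq A B t (by omega) (by omega)
    have hIH := ih (A+1) (B-1) t (by omega) (by omega)
    have m2 : (B-1).choose t ≤ B.choose t := Nat.choose_le_choose t (by omega)
    have m3 : A.choose t ≤ (A+(k+1)).choose t := Nat.choose_le_choose t (by omega)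
    have hAe : A+1+k = A+(k+1) := by omega
    have hBe : B-1-k = B-(k+1) := by omega
    rw [hAe, hBe] at hIH
    have t1 : k * ((A+(k+1)).choose t * (B-1).choose t)
        ≤ k * ((A+(k+1)).choose t * B.choose t) :=
      Nat.mul_le_mul_left _ (Nat.mul_le_mul_left _ m2)
    have t2 : A.choose t * (B-1).choose t ≤ (A+(k+1)).choose t * B.choose t :=
      Nat.mul_le_mul m3 m2
    calc A.choose (t+1) * B.choose (t+1)
        ≤ (A+1).choose (t+1) * (B-1).choose (t+1) + A.choose t * (B-1).choose t := hstep
      _ ≤ ((A+(k+1)).choose (t+1) * (B-(k+1)).choose (t+1)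
            + k * ((A+(k+1)).choose t * (B-1).choose t)) + A.choose t * (B-1).choose t :=
          Nat.add_le_add_right hIH _
      _ = (A+(k+1)).choose (t+1) * (B-(k+1)).choose (t+1)
            + (k * ((A+(k+1)).choose t * (B-1).choose t) + A.choose t * (B-1).choose t) := by
          ring
      _ ≤ (A+(k+1)).choose (t+1) * (B-(k+1)).choose (t+1)
            + (k * ((A+(k+1)).choose t * B.choose t) + (A+(k+1)).choose t * B.choose t) :=
          Nat.add_le_add_left (Nat.add_le_add t1 t2) _
      _ = (A+(k+1)).choose (t+1) * (B-(k+1)).choose (t+1)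
            + (k+1) * ((A+(k+1)).choose t * B.choose t) := by ring

lemma choose_flip (c x : ℕ) : (c+x).choose x = (c+x).choose c := by
  rw [← Nat.choose_symm (by omega : x ≤ c + x), show c + x - x = c by omega]

end KB


/-- For `a2 ≥ a1 ≥ 1`, the kernel of
`D^k : V_{m·a1−k, m·a2+k−(n+1)} → V_{m·a1, m·a2−(n+1)}` has dimension `O(m^{2n−2})`. -/
theorem kernel_bound_of_a2_ge_a1 (n k a1 a2 : ℕ)
    (hn : 1 ≤ n) (hk : 1 ≤ k) (ha1 : 1 ≤ a1) (h12 : a1 ≤ a2) :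
    ∃ C : ℝ, 0 < C ∧ ∃ M : ℕ, ∀ m : ℕ, M ≤ m → 0 < m →
      ∀ g : (Vab n (m * a1 - k) (m * a2 + k - (n + 1))) →ₗ[ℂ]
            (Vab n (m * a1) (m * a2 - (n + 1))),
        (∀ v, (g v : MvPolynomial (Fin (n + 1) ⊕ Fin (n + 1)) ℂ)
            = ((Dop n) ^ k) (v : MvPolynomial (Fin (n + 1) ⊕ Fin (n + 1)) ℂ)) →
        (Module.finrank ℂ (LinearMap.ker g) : ℝ)
          ≤ C * (m : ℝ) ^ (2 * n - 2) := by
  classical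
  set c1 : ℕ := a2 + k + n + 1 with hc1def
  refine ⟨(k : ℝ) * (c1 : ℝ) ^ (2*n-2) + 1, by positivity, n + k + 1, ?_⟩
  intro m hM hm g hg
  have hmn : n + 1 ≤ m := by omega
  have hmk : k ≤ m := by omega
  have hma1 : m ≤ m * a1 := Nat.le_mul_of_pos_right m (by omega)
  have hma2 : m ≤ m * a2 := Nat.le_mul_of_pos_right m (by omega)
  have ha21 : m * a1 ≤ m * a2 := Nat.mul_le_mul_left m h12
  have hpow : (0:ℝ) ≤ (m:ℝ) ^ (2*n-2) := by positivity
  by_cases hcase : m * a1 + (n+1) ≤ m * a2 + k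
  · -- injective case : D^k is injective on the domain
    have hker : LinearMap.ker g = ⊥ := by
      rw [LinearMap.ker_eq_bot']
      intro v hv
      have h0 : ((Dop n)^k) (v : MvPolynomial (Fin (n + 1) ⊕ Fin (n + 1)) ℂ) = 0 := by
        rw [← hg v]
        exact congrArg Subtype.val hv
      have hle : (m*a1 - k) + k ≤ m*a2 + k - (n+1) := by omega
      exact Subtype.ext (KB.injD k (m*a1 - k) (m*a2 + k - (n+1)) hle v.1 v.2 h0)
    rw [hker, finrank_bot]
    push_cast
    positivity
  · push_neg at hcase
    have hEq : m * a2 = m * a1 := by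
      rcases Nat.lt_or_ge a1 a2 with hlt | hge
      · have h2 : m * (a1+1) ≤ m * a2 := Nat.mul_le_mul_left m hlt
        rw [Nat.mul_add, Nat.mul_one] at h2
        omega
      · exact le_antisymm (Nat.mul_le_mul_left m hge) ha21
    have hkn : k ≤ n + 1 := by omega
    have hsurjcond : (m*a2 - (n+1)) + k ≤ m*a1 := by omega
    have hidx : m*a2 + k - (n+1) = (m*a2 - (n+1)) + k := by omega
    -- g is surjective
    have hsurj : Function.Surjective g := by
      intro w
      obtain ⟨v, hv, hDv⟩ := KB.surjD k (m*a1) (m*a2 - (n+1)) hsurjcond w.1 w.2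
      have hv' : v ∈ Vab n (m*a1 - k) (m*a2 + k - (n+1)) := by rw [hidx]; exact hv
      exact ⟨⟨v, hv'⟩, Subtype.ext (by rw [hg]; exact hDv)⟩
    have hrange : LinearMap.range g = ⊤ := LinearMap.range_eq_top.mpr hsurj
    have hrn := LinearMap.finrank_range_add_finrank_ker g
    rw [hrange, finrank_top] at hrn
    have hdom : Module.finrank ℂ ↥(Vab n (m * a1 - k) (m * a2 + k - (n + 1)))
        = (n + (m*a1 - k)).choose n * (n + ((m*a2 - (n+1)) + k)).choose n := by
      rw [hidx, KB.finrank_Vab, KB.choose_flip, KB.choose_flip]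
    have hcod : Module.finrank ℂ ↥(Vab n (m * a1) (m * a2 - (n + 1)))
        = (n + m*a1).choose n * (n + (m*a2 - (n+1))).choose n := by
      rw [KB.finrank_Vab, KB.choose_flip, KB.choose_flip]
    have hn1 : n - 1 + 1 = n := by omega
    have htele := KB.tele k (n + (m*a1 - k)) (n + ((m*a2 - (n+1)) + k)) (n-1)
      (by omega) (by omega)
    rw [hn1] at htele
    rw [show (n + (m*a1 - k)) + k = n + m*a1 by omega] at htele
    rw [show (n + ((m*a2 - (n+1)) + k)) - k = n + (m*a2 - (n+1)) by omega] at htele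
    have hker_le : Module.finrank ℂ ↥(LinearMap.ker g)
        ≤ k * ((n + m*a1).choose (n-1) * (n + ((m*a2 - (n+1)) + k)).choose (n-1)) := by
      omega
    -- numeric bound
    have hb1 : n + m*a1 ≤ c1 * m := by
      have e1 : n * 1 ≤ n * m := Nat.mul_le_mul_left n (by omega)
      have e2 : m * a1 ≤ m * a2 := ha21
      have e3 : c1 * m = a2 * m + k * m + n * m + m := by rw [hc1def]; ring
      have e4 : m * a2 = a2 * m := Nat.mul_comm m a2
      omega
    have hb2 : n + ((m*a2 - (n+1)) + k) ≤ c1 * m := by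
      have e1 : n * 1 ≤ n * m := Nat.mul_le_mul_left n (by omega)
      have e3 : c1 * m = a2 * m + k * m + n * m + m := by rw [hc1def]; ring
      have e4 : m * a2 = a2 * m := Nat.mul_comm m a2
      have e5 : k * 1 ≤ k * m := Nat.mul_le_mul_left k (by omega)
      omega
    have hErr : k * ((n + m*a1).choose (n-1) * (n + ((m*a2 - (n+1)) + k)).choose (n-1))
        ≤ k * ((c1*m)^(n-1) * (c1*m)^(n-1)) := by
      apply Nat.mul_le_mul_left
      apply Nat.mul_le_mul
      · exact (Nat.choose_le_pow _ _).trans (Nat.pow_le_pow_left hb1 _)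
      · exact (Nat.choose_le_pow _ _).trans (Nat.pow_le_pow_left hb2 _)
    have hfinal : Module.finrank ℂ ↥(LinearMap.ker g) ≤ k * ((c1*m)^(n-1) * (c1*m)^(n-1)) :=
      hker_le.trans hErr
    calc (Module.finrank ℂ ↥(LinearMap.ker g) : ℝ)
        ≤ ((k * ((c1*m)^(n-1) * (c1*m)^(n-1)) : ℕ) : ℝ) := Nat.cast_le.mpr hfinal
      _ = (k : ℝ) * ((c1:ℝ)*(m:ℝ))^(2*n-2) := by
          push_cast
          rw [← pow_add, show (n-1)+(n-1) = 2*n-2 by omega]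
      _ = ((k : ℝ) * (c1 : ℝ)^(2*n-2)) * (m:ℝ)^(2*n-2) := by rw [mul_pow]; ring
      _ ≤ ((k : ℝ) * (c1 : ℝ)^(2*n-2) + 1) * (m:ℝ)^(2*n-2) := by nlinarith
end

section
/- Let n ≥ 1, k ≥ 1 and let a1 > a2 ≥ 1 be integers. Then for all sufficiently large positive integers m, the linear map D^k : V_{m·a1−k, m·a2+k−(n+1)} → V_{m·a1, m·a2−(n+1)} is surjective. -/
open MvPolynomial

namespace SurjAux
open Finsupp

abbrev Bw (n : ℕ) : (Fin (n + 1) ⊕ Fin (n + 1)) → ℕ × ℕ :=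
  Sum.elim (fun _ => ((1 : ℕ), (0 : ℕ))) (fun _ => ((0 : ℕ), (1 : ℕ)))

abbrev MvP (n : ℕ) := MvPolynomial (Fin (n + 1) ⊕ Fin (n + 1)) ℂ

noncomputable def Eop (n : ℕ) : Module.End ℂ (MvP n) :=
  ∑ i : Fin (n + 1),
    (LinearMap.mulLeft ℂ (X (Sum.inr i))).comp (pderiv (Sum.inl i)).toLinearMap

variable {n : ℕ}

theorem mem_Vab_iff {a b : ℕ} {p : MvP n} :
    p ∈ Vab n a b ↔ p.IsWeightedHomogeneous (Bw n) (a, b) := Iff.rfl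
theorem weight_eq (d : (Fin (n+1) ⊕ Fin (n+1)) →₀ ℕ) :
    Finsupp.weight (Bw n) d = (∑ i, d (Sum.inl i), ∑ i, d (Sum.inr i)) := by
  rw [Finsupp.weight_apply, Finsupp.sum_fintype _ _ (by intro a; simp), Fintype.sum_sum_type]
  apply Prod.ext <;> simp [Prod.fst_sum, Prod.snd_sum]

theorem weight_single_inl (i : Fin (n+1)) :
    Finsupp.weight (Bw n) (single (Sum.inl i) 1) = (1, 0) := by
  rw [weight_eq]; simp [Finsupp.single_apply]

theorem weight_single_inr (i : Fin (n+1)) :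
    Finsupp.weight (Bw n) (single (Sum.inr i) 1) = (0, 1) := by
  rw [weight_eq]; simp [Finsupp.single_apply]

theorem Dop_apply (p : MvP n) :
    Dop n p = ∑ i : Fin (n+1), X (Sum.inl i) * pderiv (Sum.inr i) p := by
  simp [Dop, LinearMap.sum_apply]

theorem Eop_apply (p : MvP n) :
    Eop n p = ∑ i : Fin (n+1), X (Sum.inr i) * pderiv (Sum.inl i) p := by
  simp [Eop, LinearMap.sum_apply]

theorem X_mul_pderiv_monomial {σ : Type*} [DecidableEq σ] (u v : σ)
    (d : σ →₀ ℕ) (c : ℂ) :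
    X u * pderiv v (monomial d c) = monomial (d - single v 1 + single u 1) (c * d v) := by
  rw [pderiv_monomial, X, monomial_mul, one_mul, add_comm]

theorem pderiv_comm' {σ : Type*} [DecidableEq σ] {u v : σ} (huv : u ≠ v)
    (p : MvPolynomial σ ℂ) :
    pderiv u (pderiv v p) = pderiv v (pderiv u p) := by
  have key : ∀ (d : σ →₀ ℕ) (c : ℂ),
      pderiv u (pderiv v (monomial d c)) = pderiv v (pderiv u (monomial d c)) := by
    intro d c
    have h1 : (d - single v 1 : σ →₀ ℕ) u = d u := by
      rw [tsub_apply, single_eq_of_ne huv]; simp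
    have h2 : (d - single u 1 : σ →₀ ℕ) v = d v := by
      rw [tsub_apply, single_eq_of_ne huv.symm]; simp
    have h3 : d - single v 1 - single u 1 = d - single u 1 - single v 1 := by
      ext a; simp only [tsub_apply]; omega
    simp only [pderiv_monomial, h1, h2, h3]
    ring_nf
  conv_lhs => rw [p.as_sum]
  conv_rhs => rw [p.as_sum]
  simp only [map_sum, key]

theorem X_mul_pderiv_self_monomial {σ : Type*} [DecidableEq σ] (u : σ) (d : σ →₀ ℕ) (c : ℂ) :
    X u * pderiv u (monomial d c) = (d u : ℂ) • monomial d c := by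
  rw [pderiv_monomial, X, monomial_mul, one_mul, smul_monomial]
  rcases Nat.eq_zero_or_pos (d u) with h0 | h1
  · simp [h0]
  · have hle : single u 1 ≤ d := by rw [Finsupp.single_le_iff]; exact h1
    rw [add_comm, tsub_add_cancel_of_le hle, mul_comm, smul_eq_mul]

theorem euler_x {a b : ℕ} {p : MvP n} (hp : p ∈ Vab n a b) :
    ∑ i : Fin (n+1), X (Sum.inl i) * pderiv (Sum.inl i) p = (a : ℂ) • p := by
  calc ∑ i : Fin (n+1), X (Sum.inl i) * pderiv (Sum.inl i) p
      = ∑ i : Fin (n+1), ∑ d ∈ p.support,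
          X (Sum.inl i) * pderiv (Sum.inl i) (monomial d (coeff d p)) := by
        apply Finset.sum_congr rfl
        intro i _
        conv_lhs => rw [p.as_sum]
        rw [map_sum, Finset.mul_sum]
    _ = ∑ d ∈ p.support, ∑ i : Fin (n+1),
          X (Sum.inl i) * pderiv (Sum.inl i) (monomial d (coeff d p)) := Finset.sum_comm
    _ = ∑ d ∈ p.support, (a : ℂ) • monomial d (coeff d p) := by
        apply Finset.sum_congr rfl
        intro d hd
        have hwd : Finsupp.weight (Bw n) d = (a, b) :=
          hp (MvPolynomial.mem_support_iff.mp hd)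
        rw [weight_eq, Prod.mk.injEq] at hwd
        simp only [X_mul_pderiv_self_monomial]
        rw [← Finset.sum_smul]
        norm_cast
        rw [hwd.1]
    _ = (a : ℂ) • p := by rw [← Finset.smul_sum, ← p.as_sum]

theorem euler_y {a b : ℕ} {p : MvP n} (hp : p ∈ Vab n a b) :
    ∑ i : Fin (n+1), X (Sum.inr i) * pderiv (Sum.inr i) p = (b : ℂ) • p := by
  calc ∑ i : Fin (n+1), X (Sum.inr i) * pderiv (Sum.inr i) p
      = ∑ i : Fin (n+1), ∑ d ∈ p.support,
          X (Sum.inr i) * pderiv (Sum.inr i) (monomial d (coeff d p)) := by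
        apply Finset.sum_congr rfl
        intro i _
        conv_lhs => rw [p.as_sum]
        rw [map_sum, Finset.mul_sum]
    _ = ∑ d ∈ p.support, ∑ i : Fin (n+1),
          X (Sum.inr i) * pderiv (Sum.inr i) (monomial d (coeff d p)) := Finset.sum_comm
    _ = ∑ d ∈ p.support, (b : ℂ) • monomial d (coeff d p) := by
        apply Finset.sum_congr rfl
        intro d hd
        have hwd : Finsupp.weight (Bw n) d = (a, b) :=
          hp (MvPolynomial.mem_support_iff.mp hd)
        rw [weight_eq, Prod.mk.injEq] at hwd
        simp only [X_mul_pderiv_self_monomial]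
        rw [← Finset.sum_smul]
        norm_cast
        rw [hwd.2]
    _ = (b : ℂ) • p := by rw [← Finset.smul_sum, ← p.as_sum]

theorem Dop_Eop (p : MvP n) :
    Dop n (Eop n p)
      = (∑ i : Fin (n+1), X (Sum.inl i) * pderiv (Sum.inl i) p)
        + ∑ i : Fin (n+1), ∑ j : Fin (n+1),
            X (Sum.inl i) * (X (Sum.inr j) * pderiv (Sum.inr i) (pderiv (Sum.inl j) p)) := by
  rw [Dop_apply, Eop_apply]
  have step : ∀ i : Fin (n+1),
      X (Sum.inl i) * pderiv (Sum.inr i) (∑ j : Fin (n+1), X (Sum.inr j) * pderiv (Sum.inl j) p)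
      = X (Sum.inl i) * pderiv (Sum.inl i) p
        + ∑ j : Fin (n+1),
            X (Sum.inl i) * (X (Sum.inr j) * pderiv (Sum.inr i) (pderiv (Sum.inl j) p)) := by
    intro i
    rw [map_sum, Finset.mul_sum]
    have term : ∀ j : Fin (n+1),
        X (Sum.inl i) * pderiv (Sum.inr i) (X (Sum.inr j) * pderiv (Sum.inl j) p)
        = X (Sum.inl i) * (pderiv (Sum.inr i) (X (Sum.inr j)) * pderiv (Sum.inl j) p)
          + X (Sum.inl i) * (X (Sum.inr j) * pderiv (Sum.inr i) (pderiv (Sum.inl j) p)) := by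
      intro j
      rw [pderiv_mul, mul_add]
    simp only [term]
    rw [Finset.sum_add_distrib]
    congr 1
    rw [Finset.sum_eq_single i]
    · rw [pderiv_X_self, one_mul]
    · intro j _ hne
      rw [pderiv_X_of_ne (by simpa using hne), zero_mul, mul_zero]
    · intro h; exact absurd (Finset.mem_univ i) h
  simp only [step]
  rw [Finset.sum_add_distrib]

theorem Eop_Dop (p : MvP n) :
    Eop n (Dop n p)
      = (∑ i : Fin (n+1), X (Sum.inr i) * pderiv (Sum.inr i) p)
        + ∑ i : Fin (n+1), ∑ j : Fin (n+1),
            X (Sum.inr i) * (X (Sum.inl j) * pderiv (Sum.inl i) (pderiv (Sum.inr j) p)) := by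
  rw [Eop_apply, Dop_apply]
  have step : ∀ i : Fin (n+1),
      X (Sum.inr i) * pderiv (Sum.inl i) (∑ j : Fin (n+1), X (Sum.inl j) * pderiv (Sum.inr j) p)
      = X (Sum.inr i) * pderiv (Sum.inr i) p
        + ∑ j : Fin (n+1),
            X (Sum.inr i) * (X (Sum.inl j) * pderiv (Sum.inl i) (pderiv (Sum.inr j) p)) := by
    intro i
    rw [map_sum, Finset.mul_sum]
    have term : ∀ j : Fin (n+1),
        X (Sum.inr i) * pderiv (Sum.inl i) (X (Sum.inl j) * pderiv (Sum.inr j) p)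
        = X (Sum.inr i) * (pderiv (Sum.inl i) (X (Sum.inl j)) * pderiv (Sum.inr j) p)
          + X (Sum.inr i) * (X (Sum.inl j) * pderiv (Sum.inl i) (pderiv (Sum.inr j) p)) := by
      intro j
      rw [pderiv_mul, mul_add]
    simp only [term]
    rw [Finset.sum_add_distrib]
    congr 1
    rw [Finset.sum_eq_single i]
    · rw [pderiv_X_self, one_mul]
    · intro j _ hne
      rw [pderiv_X_of_ne (by simpa using hne), zero_mul, mul_zero]
    · intro h; exact absurd (Finset.mem_univ i) h
  simp only [step]
  rw [Finset.sum_add_distrib]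

theorem DE_ED (p : MvP n) :
    Dop n (Eop n p) - Eop n (Dop n p)
      = (∑ i : Fin (n+1), X (Sum.inl i) * pderiv (Sum.inl i) p)
        - ∑ i : Fin (n+1), X (Sum.inr i) * pderiv (Sum.inr i) p := by
  rw [Dop_Eop, Eop_Dop]
  have hswap :
      ∑ i : Fin (n+1), ∑ j : Fin (n+1),
          X (Sum.inl i) * (X (Sum.inr j) * pderiv (Sum.inr i) (pderiv (Sum.inl j) p))
      = ∑ i : Fin (n+1), ∑ j : Fin (n+1),
          X (Sum.inr i) * (X (Sum.inl j) * pderiv (Sum.inl i) (pderiv (Sum.inr j) p)) := by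
    rw [Finset.sum_comm]
    apply Finset.sum_congr rfl
    intro i _
    apply Finset.sum_congr rfl
    intro j _
    rw [pderiv_comm' (by simp : (Sum.inr j : Fin (n+1) ⊕ Fin (n+1)) ≠ Sum.inl i)]
    ring
  rw [hswap]
  abel






theorem Dop_mem {a b : ℕ} {p : MvP n} (hp : p ∈ Vab n a (b+1)) :
    Dop n p ∈ Vab n (a+1) b := by
  nth_rewrite 1 [p.as_sum]
  rw [map_sum]
  apply Submodule.sum_mem
  intro d hd
  have hwd : Finsupp.weight (Bw n) d = (a, b+1) := hp (MvPolynomial.mem_support_iff.mp hd)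
  rw [Dop_apply]
  apply Submodule.sum_mem
  intro i _
  rw [X_mul_pderiv_monomial]
  rcases Nat.eq_zero_or_pos (d (Sum.inr i)) with h0 | h1
  · simp [h0, Submodule.zero_mem]
  · rw [mem_Vab_iff]
    apply isWeightedHomogeneous_monomial
    have hle : single (Sum.inr i) 1 ≤ d := by
      rw [Finsupp.single_le_iff]; exact h1
    have hfe : d - single (Sum.inr i) 1 + single (Sum.inl i) 1 + single (Sum.inr i) 1
        = d + single (Sum.inl i) 1 := by
      rw [add_right_comm, tsub_add_cancel_of_le hle]
    have hw := congrArg (Finsupp.weight (Bw n)) hfe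
    rw [map_add, map_add, map_add, weight_single_inl, weight_single_inr, hwd] at hw
    rw [map_add, weight_single_inl]
    rcases hWeq : Finsupp.weight (Bw n) (d - single (Sum.inr i) 1) with ⟨u, v⟩
    rw [hWeq] at hw
    simp only [Prod.mk_add_mk, Prod.mk.injEq] at hw ⊢
    omega

theorem Eop_mem {a b : ℕ} {p : MvP n} (hp : p ∈ Vab n (a+1) b) :
    Eop n p ∈ Vab n a (b+1) := by
  nth_rewrite 1 [p.as_sum]
  rw [map_sum]
  apply Submodule.sum_mem
  intro d hd
  have hwd : Finsupp.weight (Bw n) d = (a+1, b) := hp (MvPolynomial.mem_support_iff.mp hd)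
  rw [Eop_apply]
  apply Submodule.sum_mem
  intro i _
  rw [X_mul_pderiv_monomial]
  rcases Nat.eq_zero_or_pos (d (Sum.inl i)) with h0 | h1
  · simp [h0, Submodule.zero_mem]
  · rw [mem_Vab_iff]
    apply isWeightedHomogeneous_monomial
    have hle : single (Sum.inl i) 1 ≤ d := by
      rw [Finsupp.single_le_iff]; exact h1
    have hfe : d - single (Sum.inl i) 1 + single (Sum.inr i) 1 + single (Sum.inl i) 1
        = d + single (Sum.inr i) 1 := by
      rw [add_right_comm, tsub_add_cancel_of_le hle]
    have hw := congrArg (Finsupp.weight (Bw n)) hfe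
    rw [map_add, map_add, map_add, weight_single_inr, weight_single_inl, hwd] at hw
    rw [map_add, weight_single_inr]
    rcases hWeq : Finsupp.weight (Bw n) (d - single (Sum.inl i) 1) with ⟨u, v⟩
    rw [hWeq] at hw
    simp only [Prod.mk_add_mk, Prod.mk.injEq] at hw ⊢
    omega

theorem Dop_eq_zero {a : ℕ} {p : MvP n} (hp : p ∈ Vab n a 0) :
    Dop n p = 0 := by
  nth_rewrite 1 [p.as_sum]
  rw [map_sum]
  apply Finset.sum_eq_zero
  intro d hd
  have hwd : Finsupp.weight (Bw n) d = (a, 0) := hp (MvPolynomial.mem_support_iff.mp hd)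
  rw [weight_eq, Prod.mk.injEq] at hwd
  have hz : ∀ i : Fin (n+1), d (Sum.inr i) = 0 := fun i =>
    Finset.sum_eq_zero_iff.mp hwd.2 i (Finset.mem_univ i)
  rw [Dop_apply]
  apply Finset.sum_eq_zero
  intro i _
  rw [X_mul_pderiv_monomial, hz i]
  simp


theorem commutator {a b : ℕ} {p : MvP n} (hp : p ∈ Vab n a b) :
    Dop n (Eop n p) = Eop n (Dop n p) + ((a : ℂ) - (b : ℂ)) • p := by
  have hde := DE_ED p
  rw [euler_x hp, euler_y hp] at hde
  rw [sub_smul]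
  exact (sub_eq_iff_eq_add.mp hde).trans (add_comm _ _)


instance VabFD (n a b : ℕ) : FiniteDimensional ℂ (Vab n a b) := by
  apply Submodule.finiteDimensional_of_le
    (S₂ := restrictTotalDegree (Fin (n+1) ⊕ Fin (n+1)) ℂ (a + b))
  intro p hp
  rw [mem_restrictTotalDegree]
  apply Finset.sup_le
  intro d hd
  have hwd : Finsupp.weight (Bw n) d = (a, b) := hp (MvPolynomial.mem_support_iff.mp hd)
  rw [weight_eq, Prod.mk.injEq] at hwd
  have : (d.sum fun _ e => e) = (∑ i, d (Sum.inl i)) + ∑ i, d (Sum.inr i) := by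
    rw [Finsupp.sum_fintype _ _ (fun _ => rfl), Fintype.sum_sum_type]
  rw [this, hwd.1, hwd.2]

/-- Key injectivity lemma (sl₂-style). -/
theorem Qlem : ∀ (b : ℕ), ∀ (c t : ℕ), 1 ≤ t → ∀ v : MvP n, v ∈ Vab n (b + c) b →
    Eop n (Dop n v) = (-(t : ℂ)) • v → v = 0 := by
  intro b
  induction b with
  | zero =>
    intro c t ht v hv hE
    rw [Dop_eq_zero hv, map_zero] at hE
    rcases smul_eq_zero.mp hE.symm with h | h
    · exact absurd h (by simp; omega)
    · exact h
  | succ b ih =>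
    intro c t ht v hv hE
    have hvmem : v ∈ Vab n ((b + 1 + c)) (b + 1) := by
      rw [show b + 1 + c = b + 1 + c from rfl]; exact hv
    have hwmem : Dop n v ∈ Vab n (b + (c + 2)) b := by
      have := Dop_mem (a := b + 1 + c) (b := b) hvmem
      rw [show b + 1 + c + 1 = b + (c + 2) from by omega] at this
      exact this
    have hDEw : Dop n (Eop n (Dop n v)) = (-(t : ℂ)) • (Dop n v) := by
      rw [hE, map_smul]
    have hcomm := commutator (a := b + (c + 2)) (b := b) hwmem
    rw [hDEw] at hcomm
    have hcast : ((b + (c + 2) : ℕ) : ℂ) - (b : ℕ) = ((c + 2 : ℕ) : ℂ) := by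
      push_cast; ring
    rw [hcast] at hcomm
    have hEDw : Eop n (Dop n (Dop n v)) = (-((t + (c + 2) : ℕ) : ℂ)) • (Dop n v) := by
      have h1 : Eop n (Dop n (Dop n v))
          = (-(t : ℂ)) • Dop n v - ((c + 2 : ℕ) : ℂ) • Dop n v := by
        rw [eq_sub_iff_add_eq, ← hcomm]
      rw [h1, ← sub_smul]
      congr 1
      push_cast; ring
    have hw0 : Dop n v = 0 := ih (c + 2) (t + (c + 2)) (by omega) _ hwmem hEDw
    rw [hw0, map_zero] at hE
    rcases smul_eq_zero.mp hE.symm with h | h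
    · exact absurd h (by simp; omega)
    · exact h

/-- One-step surjectivity. -/
theorem step_surj {a b : ℕ} (hba : b ≤ a) {p : MvP n} (hp : p ∈ Vab n (a+1) b) :
    ∃ q ∈ Vab n a (b+1), Dop n q = p := by
  have hmaps : ∀ x ∈ Vab n (a+1) b, (Dop n ∘ₗ Eop n) x ∈ Vab n (a+1) b :=
    fun x hx => Dop_mem (Eop_mem hx)
  set L := LinearMap.restrict (Dop n ∘ₗ Eop n) hmaps with hL
  have hinj : Function.Injective L := by
    rw [injective_iff_map_eq_zero]
    intro v hv
    have hDE : Dop n (Eop n (v : MvP n)) = 0 := by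
      have := congrArg (Subtype.val) hv
      simpa [hL, LinearMap.restrict_apply] using this
    have hc := commutator (a := a+1) (b := b) v.2
    rw [hDE] at hc
    have ht : Eop n (Dop n (v : MvP n)) = (-((a + 1 - b : ℕ) : ℂ)) • (v : MvP n) := by
      have h1 := eq_neg_of_add_eq_zero_left hc.symm
      have h2 : ((a + 1 - b : ℕ) : ℂ) = ((a + 1 : ℕ) : ℂ) - ((b : ℕ) : ℂ) :=
        Nat.cast_sub (by omega : b ≤ a + 1)
      rw [h1, h2]
      exact (neg_smul _ _).symm
    have hvm : (v : MvP n) ∈ Vab n (b + (a + 1 - b)) b := by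
      rw [show b + (a + 1 - b) = a + 1 from by omega]; exact v.2
    have := Qlem b (a + 1 - b) (a + 1 - b) (by omega) (v : MvP n) hvm ht
    exact Subtype.ext this
  have hsurj := LinearMap.surjective_of_injective hinj
  obtain ⟨v, hv⟩ := hsurj ⟨p, hp⟩
  refine ⟨Eop n (v : MvP n), Eop_mem v.2, ?_⟩
  have := congrArg (Subtype.val) hv
  simpa [hL, LinearMap.restrict_apply] using this

/-- Iterated surjectivity. -/
theorem chain : ∀ (k A B : ℕ), B + k ≤ A + 1 → ∀ p ∈ Vab n (A + k) B,
    ∃ q ∈ Vab n A (B + k), ((Dop n) ^ k) q = p := by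
  intro k
  induction k with
  | zero => intro A B h p hp; exact ⟨p, by simpa using hp, by simp⟩
  | succ k ih =>
    intro A B h p hp
    have hp' : p ∈ Vab n ((A + k) + 1) B := by
      rw [show (A + k) + 1 = A + (k + 1) from by omega]; exact hp
    obtain ⟨q1, hq1, hDq1⟩ := step_surj (a := A + k) (b := B) (by omega) hp'
    obtain ⟨q, hq, hDkq⟩ := ih A (B + 1) (by omega) q1 hq1
    refine ⟨q, ?_, ?_⟩
    · rw [show B + (k + 1) = B + 1 + k from by omega]; exact hq
    · rw [pow_succ']
      rw [Module.End.mul_apply, hDkq, hDq1]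

end SurjAux

/-- For `a1 > a2 ≥ 1`, the map
`D^k : V_{m·a1−k, m·a2+k−(n+1)} → V_{m·a1, m·a2−(n+1)}` is eventually surjective. -/
theorem surjective_of_a1_gt_a2 (n k a1 a2 : ℕ)
    (hn : 1 ≤ n) (hk : 1 ≤ k) (ha2 : 1 ≤ a2) (h12 : a2 < a1) :
    ∃ M : ℕ, ∀ m : ℕ, M ≤ m → 0 < m →
      ∀ g : (Vab n (m * a1 - k) (m * a2 + k - (n + 1))) →ₗ[ℂ]
            (Vab n (m * a1) (m * a2 - (n + 1))),
        (∀ v, (g v : MvPolynomial (Fin (n + 1) ⊕ Fin (n + 1)) ℂ)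
            = ((Dop n) ^ k) (v : MvPolynomial (Fin (n + 1) ⊕ Fin (n + 1)) ℂ)) →
        Function.Surjective g := by
  refine ⟨2 * k + n + 1, fun m hm hmpos g hg => ?_⟩
  have hma : m * a2 + m ≤ m * a1 := by
    have h' := Nat.mul_le_mul_left m (show a2 + 1 ≤ a1 from h12)
    have h'' : m * (a2 + 1) = m * a2 + m := by ring
    omega
  have hm2 : m ≤ m * a2 := Nat.le_mul_of_pos_right m (by omega)
  have h1 : k ≤ m * a1 := by omega
  have h2 : n + 1 ≤ m * a2 := by omega
  intro w
  have hw : (w : SurjAux.MvP n) ∈ Vab n ((m * a1 - k) + k) (m * a2 - (n + 1)) := by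
    rw [show (m * a1 - k) + k = m * a1 from by omega]; exact w.2
  obtain ⟨p, hp, hDkp⟩ := SurjAux.chain k (m * a1 - k) (m * a2 - (n + 1)) (by omega) _ hw
  have hp' : p ∈ Vab n (m * a1 - k) (m * a2 + k - (n + 1)) := by
    rw [show m * a2 + k - (n + 1) = (m * a2 - (n + 1)) + k from by omega]; exact hp
  refine ⟨⟨p, hp'⟩, ?_⟩
  apply Subtype.ext
  rw [hg ⟨p, hp'⟩]
  exact hDkp
end

section
/- Let n ≥ 1, k ≥ 1 and let a1 > a2 ≥ 1 be integers. Then for all sufficiently large positive integers m, the kernel of the linear map D^k : V_{m·a1−k, m·a2+k−(n+1)} → V_{m·a1, m·a2−(n+1)} has ℂ-dimension exactly C(m·a1−k+n, n)·C(m·a2+k−1, n) − C(m·a1+n, n)·C(m·a2−1, n), where C(·,·) denotes the binomial coefficient. -/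
open MvPolynomial

namespace BiHomAux

/-- Index type. -/
abbrev Idx (n : ℕ) := Fin (n + 1) ⊕ Fin (n + 1)

/-- Weight function. -/
abbrev Wt (n : ℕ) : Idx n → ℕ × ℕ :=
  Sum.elim (fun _ => ((1 : ℕ), (0 : ℕ))) (fun _ => ((0 : ℕ), (1 : ℕ)))

/-- Polynomial ring. -/
abbrev Pn (n : ℕ) := MvPolynomial (Idx n) ℂ

variable {n : ℕ}

lemma weight_eq (d : Idx n →₀ ℕ) :
    Finsupp.weight (Wt n) d = (∑ i, d (Sum.inl i), ∑ i, d (Sum.inr i)) := by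
  rw [Finsupp.weight_apply, Finsupp.sum_fintype _ _ (by intro i; simp)]
  rw [Fintype.sum_sum_type]
  simp [Prod.ext_iff, Prod.fst_sum, Prod.snd_sum, Prod.smul_mk]

lemma mem_Vab {a b : ℕ} {p : Pn n} :
    p ∈ Vab n a b ↔ ∀ d : Idx n →₀ ℕ, coeff d p ≠ 0 →
      Finsupp.weight (Wt n) d = ((a : ℕ), (b : ℕ)) :=
  Iff.rfl

lemma weight_single_inl (i : Fin (n+1)) :
    Finsupp.weight (Wt n) (Finsupp.single (Sum.inl i : Idx n) 1) = ((1 : ℕ), (0 : ℕ)) := by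
  rw [weight_eq]; simp [Finsupp.single_apply]

lemma weight_single_inr (i : Fin (n+1)) :
    Finsupp.weight (Wt n) (Finsupp.single (Sum.inr i : Idx n) 1) = ((0 : ℕ), (1 : ℕ)) := by
  rw [weight_eq]; simp [Finsupp.single_apply]

lemma image_mem {a b : ℕ} {p : Pn n} (L : Pn n →ₗ[ℂ] Pn n) {V : Submodule ℂ (Pn n)}
    (hp : p ∈ Vab n a b)
    (h : ∀ s : Idx n →₀ ℕ, Finsupp.weight (Wt n) s = (a, b) → ∀ r : ℂ,
      L (monomial s r) ∈ V) : L p ∈ V := by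
  rw [show L p = ∑ s ∈ p.support, L (monomial s (coeff s p)) by
    conv_lhs => rw [← support_sum_monomial_coeff p]
    rw [map_sum]]
  exact Submodule.sum_mem _ fun s hs => h s (hp (mem_support_iff.mp hs)) _

lemma mul_X_mem_inl {a b : ℕ} {p : Pn n} (i : Fin (n + 1)) (hp : p ∈ Vab n a b) :
    X (Sum.inl i) * p ∈ Vab n (a + 1) b := by
  have h1 := (isWeightedHomogeneous_X ℂ (Wt n) (Sum.inl i)).mul hp
  have h2 : (Wt n (Sum.inl i) + (a, b)) = ((a + 1 : ℕ), b) := by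
    simp [Prod.ext_iff]; omega
  rw [h2] at h1
  exact h1

lemma mul_X_mem_inr {a b : ℕ} {p : Pn n} (i : Fin (n + 1)) (hp : p ∈ Vab n a b) :
    X (Sum.inr i) * p ∈ Vab n a (b + 1) := by
  have h1 := (isWeightedHomogeneous_X ℂ (Wt n) (Sum.inr i)).mul hp
  have h2 : (Wt n (Sum.inr i) + (a, b)) = ((a : ℕ), (b + 1 : ℕ)) := by
    simp [Prod.ext_iff]; omega
  rw [h2] at h1
  exact h1

lemma pderiv_mem_inr {a b : ℕ} {p : Pn n} (i : Fin (n + 1)) (hp : p ∈ Vab n a (b + 1)) :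
    pderiv (Sum.inr i) p ∈ Vab n a b := by
  refine image_mem (pderiv (Sum.inr i)).toLinearMap hp (fun s hs r => ?_)
  rw [Derivation.coeFn_coe, pderiv_monomial]
  rcases Nat.eq_zero_or_pos (s (Sum.inr i)) with h0 | h0
  · rw [h0]; simp
  · have hle : Finsupp.single (Sum.inr i : Idx n) 1 ≤ s := by
      rw [Finsupp.single_le_iff]; omega
    have hadd : (s - Finsupp.single (Sum.inr i) 1) + Finsupp.single (Sum.inr i) 1 = s :=
      tsub_add_cancel_of_le hle
    have h3 := congrArg (Finsupp.weight (Wt n)) hadd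
    rw [map_add, weight_single_inr, hs] at h3
    have h4 : Finsupp.weight (Wt n) (s - Finsupp.single (Sum.inr i) 1) = ((a : ℕ), (b : ℕ)) := by
      rcases hwt : Finsupp.weight (Wt n) (s - Finsupp.single (Sum.inr i) 1) with ⟨w1, w2⟩
      rw [hwt] at h3
      have e1 := congrArg Prod.fst h3
      have e2 := congrArg Prod.snd h3
      simp only [Prod.fst_add, Prod.snd_add] at e1 e2
      simp only [Prod.mk.injEq]
      constructor <;> omega
    exact mem_Vab.mpr (fun d hd => by
      rw [coeff_monomial] at hd
      split_ifs at hd with hds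
      · rw [← hds]; exact h4
      · exact absurd rfl hd)

lemma pderiv_mem_inl {a b : ℕ} {p : Pn n} (i : Fin (n + 1)) (hp : p ∈ Vab n (a + 1) b) :
    pderiv (Sum.inl i) p ∈ Vab n a b := by
  refine image_mem (pderiv (Sum.inl i)).toLinearMap hp (fun s hs r => ?_)
  rw [Derivation.coeFn_coe, pderiv_monomial]
  rcases Nat.eq_zero_or_pos (s (Sum.inl i)) with h0 | h0
  · rw [h0]; simp
  · have hle : Finsupp.single (Sum.inl i : Idx n) 1 ≤ s := by
      rw [Finsupp.single_le_iff]; omega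
    have hadd : (s - Finsupp.single (Sum.inl i) 1) + Finsupp.single (Sum.inl i) 1 = s :=
      tsub_add_cancel_of_le hle
    have h3 := congrArg (Finsupp.weight (Wt n)) hadd
    rw [map_add, weight_single_inl, hs] at h3
    have h4 : Finsupp.weight (Wt n) (s - Finsupp.single (Sum.inl i) 1) = ((a : ℕ), (b : ℕ)) := by
      rcases hwt : Finsupp.weight (Wt n) (s - Finsupp.single (Sum.inl i) 1) with ⟨w1, w2⟩
      rw [hwt] at h3
      have e1 := congrArg Prod.fst h3
      have e2 := congrArg Prod.snd h3
      simp only [Prod.fst_add, Prod.snd_add] at e1 e2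
      simp only [Prod.mk.injEq]
      constructor <;> omega
    exact mem_Vab.mpr (fun d hd => by
      rw [coeff_monomial] at hd
      split_ifs at hd with hds
      · rw [← hds]; exact h4
      · exact absurd rfl hd)

/-- The lowering operator `F = ∑ i, y_i · ∂/∂x_i`. -/
noncomputable def Fop (n : ℕ) : Module.End ℂ (Pn n) :=
  ∑ i : Fin (n + 1),
    (LinearMap.mulLeft ℂ (X (Sum.inr i))).comp (pderiv (Sum.inl i)).toLinearMap

/-- The Euler operator in the x variables. -/
noncomputable def Exop (n : ℕ) : Module.End ℂ (Pn n) :=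
  ∑ i : Fin (n + 1),
    (LinearMap.mulLeft ℂ (X (Sum.inl i))).comp (pderiv (Sum.inl i)).toLinearMap

/-- The Euler operator in the y variables. -/
noncomputable def Eyop (n : ℕ) : Module.End ℂ (Pn n) :=
  ∑ i : Fin (n + 1),
    (LinearMap.mulLeft ℂ (X (Sum.inr i))).comp (pderiv (Sum.inr i)).toLinearMap

lemma Dop_apply (p : Pn n) :
    Dop n p = ∑ i, X (Sum.inl i) * pderiv (Sum.inr i) p := by
  simp [Dop, LinearMap.sum_apply]

lemma Fop_apply (p : Pn n) :
    Fop n p = ∑ i, X (Sum.inr i) * pderiv (Sum.inl i) p := by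
  simp [Fop, LinearMap.sum_apply]

lemma Exop_apply (p : Pn n) :
    Exop n p = ∑ i, X (Sum.inl i) * pderiv (Sum.inl i) p := by
  simp [Exop, LinearMap.sum_apply]

lemma Eyop_apply (p : Pn n) :
    Eyop n p = ∑ i, X (Sum.inr i) * pderiv (Sum.inr i) p := by
  simp [Eyop, LinearMap.sum_apply]

lemma Dop_mem {a b : ℕ} {p : Pn n} (hp : p ∈ Vab n a (b + 1)) :
    Dop n p ∈ Vab n (a + 1) b := by
  rw [Dop_apply]
  exact Submodule.sum_mem _ fun i _ => mul_X_mem_inl i (pderiv_mem_inr i hp)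

lemma Fop_mem {a b : ℕ} {p : Pn n} (hp : p ∈ Vab n (a + 1) b) :
    Fop n p ∈ Vab n a (b + 1) := by
  rw [Fop_apply]
  exact Submodule.sum_mem _ fun i _ => mul_X_mem_inr i (pderiv_mem_inl i hp)

lemma pderiv_eq_zero_of_bdeg_zero {a : ℕ} {p : Pn n} (i : Fin (n+1))
    (hp : p ∈ Vab n a 0) : pderiv (Sum.inr i) p = 0 := by
  rw [show p = ∑ s ∈ p.support, monomial s (coeff s p) from (support_sum_monomial_coeff p).symm,
    map_sum]
  apply Finset.sum_eq_zero
  intro s hs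
  have hw := hp (mem_support_iff.mp hs)
  rw [weight_eq] at hw
  have h2 : (∑ j, s (Sum.inr j)) = 0 := congrArg Prod.snd hw
  have h3 : s (Sum.inr i) = 0 := by
    rw [Finset.sum_eq_zero_iff] at h2
    exact h2 i (Finset.mem_univ i)
  rw [pderiv_monomial, h3]
  simp

lemma Dop_zero {a : ℕ} {p : Pn n} (hp : p ∈ Vab n a 0) : Dop n p = 0 := by
  rw [Dop_apply]
  apply Finset.sum_eq_zero
  intro i _
  rw [pderiv_eq_zero_of_bdeg_zero i hp, mul_zero]

lemma X_mul_pderiv_monomial (j : Idx n) (s : Idx n →₀ ℕ) (r : ℂ) :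
    X j * pderiv j (monomial s r) = (s j : ℂ) • monomial s r := by
  rw [pderiv_monomial]
  rcases Nat.eq_zero_or_pos (s j) with h0 | h0
  · rw [h0]; simp
  · have hle : Finsupp.single j 1 ≤ s := by rw [Finsupp.single_le_iff]; omega
    rw [X, monomial_mul, add_tsub_cancel_of_le hle, smul_monomial]
    congr 1
    rw [smul_eq_mul]
    ring

lemma Exop_eq {a b : ℕ} {p : Pn n} (hp : p ∈ Vab n a b) :
    Exop n p = (a : ℂ) • p := by
  have hd := support_sum_monomial_coeff p
  calc Exop n p = Exop n (∑ s ∈ p.support, monomial s (coeff s p)) := by rw [hd]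
    _ = ∑ s ∈ p.support, Exop n (monomial s (coeff s p)) := map_sum _ _ _
    _ = ∑ s ∈ p.support, (a : ℂ) • monomial s (coeff s p) := by
        apply Finset.sum_congr rfl
        intro s hs
        rw [Exop_apply]
        simp_rw [X_mul_pderiv_monomial]
        rw [← Finset.sum_smul]
        have hw := hp (mem_support_iff.mp hs)
        rw [weight_eq] at hw
        have h1 : (∑ i, s (Sum.inl i)) = a := congrArg Prod.fst hw
        rw [← h1]
        norm_cast
    _ = (a : ℂ) • p := by rw [← Finset.smul_sum, hd]

lemma Eyop_eq {a b : ℕ} {p : Pn n} (hp : p ∈ Vab n a b) :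
    Eyop n p = (b : ℂ) • p := by
  have hd := support_sum_monomial_coeff p
  calc Eyop n p = Eyop n (∑ s ∈ p.support, monomial s (coeff s p)) := by rw [hd]
    _ = ∑ s ∈ p.support, Eyop n (monomial s (coeff s p)) := map_sum _ _ _
    _ = ∑ s ∈ p.support, (b : ℂ) • monomial s (coeff s p) := by
        apply Finset.sum_congr rfl
        intro s hs
        rw [Eyop_apply]
        simp_rw [X_mul_pderiv_monomial]
        rw [← Finset.sum_smul]
        have hw := hp (mem_support_iff.mp hs)
        rw [weight_eq] at hw
        have h1 : (∑ i, s (Sum.inr i)) = b := congrArg Prod.snd hw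
        rw [← h1]
        norm_cast
    _ = (b : ℂ) • p := by rw [← Finset.smul_sum, hd]

lemma pderiv_comm' (u v : Idx n) (p : Pn n) :
    pderiv u (pderiv v p) = pderiv v (pderiv u p) := by
  rcases eq_or_ne u v with rfl | huv
  · rfl
  · induction p using MvPolynomial.induction_on' with
    | monomial s r =>
      rw [pderiv_monomial, pderiv_monomial, pderiv_monomial, pderiv_monomial]
      rw [Finsupp.tsub_apply, Finsupp.tsub_apply,
        Finsupp.single_eq_of_ne' huv.symm, Finsupp.single_eq_of_ne' huv]
      rw [tsub_tsub, tsub_tsub, add_comm (Finsupp.single v 1)]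
      simp only [Nat.sub_zero]
      congr 1
      ring
    | add p q hp hq => rw [map_add, map_add, map_add, map_add, hp, hq]

lemma sum_pderiv_X_mul (j : Fin (n+1)) (A : Fin (n+1) → Pn n) :
    ∑ i, pderiv (Sum.inl j : Idx n) (X (Sum.inl i)) * A i = A j := by
  rw [Finset.sum_eq_single j]
  · rw [pderiv_X_self, one_mul]
  · intro i _ hij
    rw [pderiv_X_of_ne (by simpa using hij), zero_mul]
  · intro h; exact absurd (Finset.mem_univ j) h

lemma sum_pderiv_Y_mul (j : Fin (n+1)) (A : Fin (n+1) → Pn n) :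
    ∑ i, pderiv (Sum.inr j : Idx n) (X (Sum.inr i)) * A i = A j := by
  rw [Finset.sum_eq_single j]
  · rw [pderiv_X_self, one_mul]
  · intro i _ hij
    rw [pderiv_X_of_ne (by simpa using hij), zero_mul]
  · intro h; exact absurd (Finset.mem_univ j) h

lemma FD_expand (p : Pn n) :
    Fop n (Dop n p) = Eyop n p
      + ∑ j, ∑ i, X (Sum.inr j) * (X (Sum.inl i) * pderiv (Sum.inl j) (pderiv (Sum.inr i) p)) := by
  rw [Fop_apply, Eyop_apply, ← Finset.sum_add_distrib]
  apply Finset.sum_congr rfl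
  intro j _
  rw [Dop_apply, map_sum]
  simp_rw [pderiv_mul]
  rw [Finset.sum_add_distrib, sum_pderiv_X_mul j (fun i => pderiv (Sum.inr i) p)]
  rw [mul_add, Finset.mul_sum]

lemma DF_expand (p : Pn n) :
    Dop n (Fop n p) = Exop n p
      + ∑ j, ∑ i, X (Sum.inl j) * (X (Sum.inr i) * pderiv (Sum.inr j) (pderiv (Sum.inl i) p)) := by
  rw [Dop_apply, Exop_apply, ← Finset.sum_add_distrib]
  apply Finset.sum_congr rfl
  intro j _
  rw [Fop_apply, map_sum]
  simp_rw [pderiv_mul]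
  rw [Finset.sum_add_distrib, sum_pderiv_Y_mul j (fun i => pderiv (Sum.inl i) p)]
  rw [mul_add, Finset.mul_sum]

lemma op_comm (p : Pn n) :
    Fop n (Dop n p) + Exop n p = Dop n (Fop n p) + Eyop n p := by
  rw [FD_expand, DF_expand]
  have h : (∑ j, ∑ i, X (Sum.inr j) * (X (Sum.inl i) * pderiv (Sum.inl j) (pderiv (Sum.inr i) p)))
      = ∑ j, ∑ i, X (Sum.inl j) * (X (Sum.inr i) * pderiv (Sum.inr j) (pderiv (Sum.inl i) p)) := by
    rw [Finset.sum_comm]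
    apply Finset.sum_congr rfl; intro i _
    apply Finset.sum_congr rfl; intro j _
    rw [pderiv_comm', mul_left_comm]
  rw [h]
  abel

lemma comm {a b : ℕ} {p : Pn n} (hp : p ∈ Vab n a b) :
    Fop n (Dop n p) + (a : ℂ) • p = Dop n (Fop n p) + (b : ℂ) • p := by
  rw [← Exop_eq hp, ← Eyop_eq hp]; exact op_comm p

lemma Dpow_succ_apply (N : ℕ) (x : Pn n) :
    (Dop n ^ (N + 1)) x = Dop n ((Dop n ^ N) x) := by
  rw [pow_succ', Module.End.mul_apply]

lemma Dpow_mem {A B : ℕ} {q : Pn n} (hq : q ∈ Vab n A B) :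
    ∀ N, N ≤ B → (Dop n ^ N) q ∈ Vab n (A + N) (B - N) := by
  intro N
  induction N with
  | zero => intro _; simpa using hq
  | succ N ih =>
    intro hN
    have h1 := ih (by omega)
    have h2 : B - N = (B - (N + 1)) + 1 := by omega
    rw [h2] at h1
    have h3 := Dop_mem h1
    rw [Dpow_succ_apply]
    exact h3

lemma key_identity {A B : ℕ} {q : Pn n} (hq : q ∈ Vab n A B) :
    ∀ N, N ≤ B →
      (Dop n ^ (N + 1)) (Fop n q) + (((N + 1) * B : ℕ) : ℂ) • (Dop n ^ N) q
        = Fop n ((Dop n ^ (N + 1)) q)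
          + (((N + 1) * (A + N) : ℕ) : ℂ) • (Dop n ^ N) q := by
  intro N
  induction N with
  | zero =>
    intro _
    have h := (comm hq).symm
    simpa [Dpow_succ_apply] using h
  | succ N ih =>
    intro hN
    have hid := ih (by omega)
    have h1 := congrArg (⇑(Dop n)) hid
    rw [map_add, map_add, LinearMap.map_smul, LinearMap.map_smul,
      ← Dpow_succ_apply, ← Dpow_succ_apply] at h1
    have hmem := Dpow_mem hq (N + 1) hN
    have h2 := comm hmem
    rw [← Dpow_succ_apply] at h2
    have hBc : ((B - (N + 1) : ℕ) : ℂ) = (B : ℂ) - ((N : ℂ) + 1) := by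
      rw [Nat.cast_sub hN]; push_cast; ring
    rw [hBc] at h2
    push_cast at h1 h2 ⊢
    have e2 := eq_sub_of_add_eq h2.symm
    rw [e2] at h1
    have e1 := eq_sub_of_add_eq h1
    rw [e1]
    module

lemma EF_injective {A B : ℕ} (hAB : B < A) {q : Pn n} (hq : q ∈ Vab n A B)
    (h0 : Dop n (Fop n q) = 0) : q = 0 := by
  by_contra hq0
  classical
  have hzero : (Dop n ^ (B + 1)) q = 0 := by
    have hm := Dpow_mem hq B le_rfl
    rw [Nat.sub_self] at hm
    rw [Dpow_succ_apply]
    exact Dop_zero hm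
  have hex : ∃ N, (Dop n ^ N) q = 0 := ⟨B + 1, hzero⟩
  have hN₀ : (Dop n ^ Nat.find hex) q = 0 := Nat.find_spec hex
  have hpos : 0 < Nat.find hex := by
    rcases Nat.eq_zero_or_pos (Nat.find hex) with h | h
    · exfalso; apply hq0; rw [h, pow_zero] at hN₀; simpa using hN₀
    · exact h
  have hle : Nat.find hex ≤ B + 1 := Nat.find_le hzero
  obtain ⟨N, hNeq⟩ : ∃ N, Nat.find hex = N + 1 := ⟨Nat.find hex - 1, by omega⟩
  have hNB : N ≤ B := by omega
  have hmin : (Dop n ^ N) q ≠ 0 := Nat.find_min hex (by omega)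
  have hid := key_identity hq N hNB
  have hl : (Dop n ^ (N + 1)) (Fop n q) = 0 := by
    rw [pow_succ, Module.End.mul_apply, h0, map_zero]
  rw [hNeq] at hN₀
  simp only [hl, hN₀, map_zero, zero_add] at hid
  have hsc : (((N + 1) * B : ℕ) : ℂ) = (((N + 1) * (A + N) : ℕ) : ℂ) := by
    have h2 : ((((N + 1) * B : ℕ) : ℂ) - (((N + 1) * (A + N) : ℕ) : ℂ)) • (Dop n ^ N) q = 0 := by
      rw [sub_smul, hid, sub_self]
    rcases smul_eq_zero.mp h2 with h | h
    · exact sub_eq_zero.mp h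
    · exact absurd h hmin
  have hnat : (N + 1) * B = (N + 1) * (A + N) := Nat.cast_injective hsc
  have : B = A + N := by
    have := Nat.eq_of_mul_eq_mul_left (by omega : 0 < N + 1) hnat
    exact this
  omega

/-- The exponent set of `Vab`. -/
def Sset (n a b : ℕ) : Set (Idx n →₀ ℕ) :=
  { d | Finsupp.weight (Wt n) d = ((a : ℕ), (b : ℕ)) }

noncomputable def SsetEquiv (n a b : ℕ) :
    Sset n a b ≃ Sym (Fin (n + 1)) a × Sym (Fin (n + 1)) b := by
  refine Equiv.trans
    (Finsupp.sumFinsuppEquivProdFinsupp.subtypeEquiv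
      (q := fun ud : (Fin (n+1) →₀ ℕ) × (Fin (n+1) →₀ ℕ) =>
        (ud.1.sum fun _ => id) = a ∧ (ud.2.sum fun _ => id) = b) ?_)
    (Equiv.trans (Equiv.subtypeProdEquivProd
      (p := fun u : Fin (n+1) →₀ ℕ => (u.sum fun _ => id) = a)
      (q := fun v : Fin (n+1) →₀ ℕ => (v.sum fun _ => id) = b))
      (Equiv.prodCongr (Sym.equivNatSum _ a).symm (Sym.equivNatSum _ b).symm))
  intro d
  show Finsupp.weight (Wt n) d = ((a : ℕ), (b : ℕ)) ↔ _
  rw [weight_eq, Prod.mk.injEq]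
  rw [Finsupp.sum_fintype _ _ (fun _ => rfl), Finsupp.sum_fintype _ _ (fun _ => rfl)]
  simp only [id_eq, Finsupp.fst_sumFinsuppEquivProdFinsupp,
    Finsupp.snd_sumFinsuppEquivProdFinsupp]

noncomputable instance (n a b : ℕ) : Fintype (Sset n a b) :=
  Fintype.ofEquiv _ (SsetEquiv n a b).symm

lemma card_Sset (n a b : ℕ) :
    Fintype.card (Sset n a b) = (a + n).choose n * (b + n).choose n := by
  rw [Fintype.card_congr (SsetEquiv n a b), Fintype.card_prod,
    Sym.card_sym_eq_choose, Sym.card_sym_eq_choose, Fintype.card_fin]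
  have h2 : ∀ c : ℕ, (n + 1 + c - 1).choose c = (c + n).choose n := by
    intro c
    have h1 : n + 1 + c - 1 = c + n := by omega
    rw [h1]
    have := Nat.choose_symm (Nat.le_add_right c n)
    rw [Nat.add_sub_cancel_left] at this
    exact this.symm
  rw [h2, h2]

lemma Vab_eq_restrict (n a b : ℕ) :
    Vab n a b = restrictSupport ℂ (Sset n a b) :=
  weightedHomogeneousSubmodule_eq_finsupp_supported ℂ (Wt n) (a, b)

instance (n a b : ℕ) : FiniteDimensional ℂ (Vab n a b) := by
  have hfin : Finite (Sset n a b) := Finite.of_equiv _ (SsetEquiv n a b).symm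
  have h1 : Module.Finite ℂ (restrictSupport ℂ (Sset n a b)) :=
    Module.Finite.of_basis (basisRestrictSupport ℂ _)
  exact Module.Finite.equiv (LinearEquiv.ofEq _ _ (Vab_eq_restrict n a b)).symm

lemma finrank_Vab (n a b : ℕ) :
    Module.finrank ℂ (Vab n a b) = (a + n).choose n * (b + n).choose n := by
  rw [LinearEquiv.finrank_eq (LinearEquiv.ofEq _ _ (Vab_eq_restrict n a b)),
    Module.finrank_eq_card_basis (basisRestrictSupport ℂ (Sset n a b)), card_Sset]

lemma step_surj {A B : ℕ} (hBA : B ≤ A) :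
    ∀ q ∈ Vab n (A + 1) B, ∃ p ∈ Vab n A (B + 1), Dop n p = q := by
  have hF : ∀ p ∈ Vab n (A + 1) B, Fop n p ∈ Vab n A (B + 1) := fun p hp => Fop_mem hp
  have hD : ∀ p ∈ Vab n A (B + 1), Dop n p ∈ Vab n (A + 1) B := fun p hp => Dop_mem hp
  let φ : (Vab n (A + 1) B) →ₗ[ℂ] (Vab n A (B + 1)) := (Fop n).restrict hF
  let ε : (Vab n A (B + 1)) →ₗ[ℂ] (Vab n (A + 1) B) := (Dop n).restrict hD
  have hinj : Function.Injective (ε.comp φ) := by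
    rw [← LinearMap.ker_eq_bot, LinearMap.ker_eq_bot']
    intro x hx
    have hx' : Dop n (Fop n (x : Pn n)) = 0 := by
      have := congrArg Subtype.val hx
      simpa [ε, φ, LinearMap.restrict_apply] using this
    have := EF_injective (by omega : B < A + 1) x.2 hx'
    exact Subtype.ext this
  have hsurj : Function.Surjective (ε.comp φ) :=
    (LinearMap.injective_iff_surjective_of_finrank_eq_finrank rfl).mp hinj
  intro q hq
  obtain ⟨x, hx⟩ := hsurj ⟨q, hq⟩
  refine ⟨(φ x : Pn n), (φ x).2, ?_⟩
  have := congrArg Subtype.val hx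
  simpa [ε, LinearMap.restrict_apply] using this

lemma pow_surj (k : ℕ) : ∀ A B : ℕ, B + k ≤ A →
    ∀ q ∈ Vab n (A + k) B, ∃ p ∈ Vab n A (B + k), (Dop n ^ k) p = q := by
  induction k with
  | zero => intro A B _ q hq; exact ⟨q, by simpa using hq, by simp⟩
  | succ k ih =>
    intro A B hk q hq
    have h1 : ∃ r ∈ Vab n (A + k) (B + 1), Dop n r = q := by
      apply step_surj (by omega)
      rw [show A + k + 1 = A + (k + 1) from rfl]
      exact hq
    obtain ⟨r, hr, hrq⟩ := h1
    obtain ⟨p, hp, hpr⟩ := ih A (B + 1) (by omega) r hr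
    refine ⟨p, by rwa [show B + 1 + k = B + (k + 1) by omega] at hp, ?_⟩
    rw [Dpow_succ_apply, hpr, hrq]

end BiHomAux

open BiHomAux in
/-- For `a1 > a2 ≥ 1` and `m` large, the kernel of
`D^k : V_{m·a1−k, m·a2+k−(n+1)} → V_{m·a1, m·a2−(n+1)}` has dimension exactly
`C(m·a1−k+n, n)·C(m·a2+k−1, n) − C(m·a1+n, n)·C(m·a2−1, n)`. -/
theorem kernel_dim_of_a1_gt_a2 (n k a1 a2 : ℕ)
    (hn : 1 ≤ n) (hk : 1 ≤ k) (ha2 : 1 ≤ a2) (h12 : a2 < a1) :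
    ∃ M : ℕ, ∀ m : ℕ, M ≤ m → 0 < m →
      ∀ g : (Vab n (m * a1 - k) (m * a2 + k - (n + 1))) →ₗ[ℂ]
            (Vab n (m * a1) (m * a2 - (n + 1))),
        (∀ v, (g v : MvPolynomial (Fin (n + 1) ⊕ Fin (n + 1)) ℂ)
            = ((Dop n) ^ k) (v : MvPolynomial (Fin (n + 1) ⊕ Fin (n + 1)) ℂ)) →
        Module.finrank ℂ (LinearMap.ker g)
          = Nat.choose (m * a1 - k + n) n * Nat.choose (m * a2 + k - 1) n
            - Nat.choose (m * a1 + n) n * Nat.choose (m * a2 - 1) n := by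
  refine ⟨2 * k + n + 1, fun m hm hm0 g hg => ?_⟩
  -- basic arithmetic facts
  have hm2 : m * a2 ≥ m := Nat.le_mul_of_pos_right m ha2
  have hm1 : m * a2 + m ≤ m * a1 := by
    have := Nat.mul_le_mul_left m h12
    rw [Nat.mul_succ] at this
    exact this
  have hk1 : k ≤ m * a1 := by omega
  have hB : m * a2 - (n + 1) + k = m * a2 + k - (n + 1) := by omega
  have hcond : (m * a2 - (n + 1)) + k ≤ m * a1 - k := by omega
  -- surjectivity of g
  have hsurj : Function.Surjective g := by
    rintro ⟨q, hq⟩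
    have hq' : q ∈ Vab n ((m * a1 - k) + k) (m * a2 - (n + 1)) := by
      rw [show (m * a1 - k) + k = m * a1 by omega]
      exact hq
    obtain ⟨p, hp, hpq⟩ :=
      pow_surj k (m * a1 - k) (m * a2 - (n + 1)) hcond q hq'
    rw [hB] at hp
    refine ⟨⟨p, hp⟩, ?_⟩
    apply Subtype.ext
    rw [hg ⟨p, hp⟩]
    exact hpq
  have hrn := LinearMap.finrank_range_add_finrank_ker g
  rw [LinearMap.range_eq_top.mpr hsurj, finrank_top, finrank_Vab, finrank_Vab] at hrn
  rw [show m * a2 - (n + 1) + n = m * a2 - 1 by omega,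
    show m * a2 + k - (n + 1) + n = m * a2 + k - 1 by omega] at hrn
  omega
end

section
/- Let n ≥ 1, k ≥ 1 and let a1 > a2 ≥ 1 be integers. Then there exists a constant c > 0 such that for all sufficiently large positive integers m, the kernel of the linear map D^k : V_{m·a1−k, m·a2+k−(n+1)} → V_{m·a1, m·a2−(n+1)} has ℂ-dimension at least c·m^{2n−1}. -/
open MvPolynomial

namespace KLBaux

abbrev W (n : ℕ) : (Fin (n+1) ⊕ Fin (n+1)) → ℕ × ℕ :=
  Sum.elim (fun _ => ((1 : ℕ), (0 : ℕ))) (fun _ => ((0 : ℕ), (1 : ℕ)))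

variable {n : ℕ}

lemma Dop_apply (p : MvPolynomial (Fin (n+1) ⊕ Fin (n+1)) ℂ) :
    Dop n p = ∑ i : Fin (n+1), X (Sum.inl i) * pderiv (Sum.inr i) p := by
  simp [Dop, LinearMap.sum_apply, LinearMap.mulLeft_apply, LinearMap.comp_apply]

lemma Dop_one : Dop n (1 : MvPolynomial (Fin (n+1) ⊕ Fin (n+1)) ℂ) = 0 := by
  simp [Dop_apply, pderiv_one]

lemma Dop_mul (p q : MvPolynomial (Fin (n+1) ⊕ Fin (n+1)) ℂ) :
    Dop n (p * q) = p * Dop n q + q * Dop n p := by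
  simp only [Dop_apply, pderiv_mul, Finset.mul_sum]
  rw [← Finset.sum_add_distrib]
  exact Finset.sum_congr rfl fun i _ => by ring

lemma Dop_X_inl (i : Fin (n+1)) : Dop n (X (Sum.inl i) : MvPolynomial _ ℂ) = 0 := by
  classical
  simp [Dop_apply]

lemma Dop_X_inr (j : Fin (n+1)) :
    Dop n (X (Sum.inr j) : MvPolynomial _ ℂ) = X (Sum.inl j) := by
  classical
  simp [Dop_apply, Pi.single_apply]

/-- The quadric `x_0 y_{j+1} - x_{j+1} y_0`, killed by `D`. -/
noncomputable def qp (j : Fin n) : MvPolynomial (Fin (n+1) ⊕ Fin (n+1)) ℂ :=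
  X (Sum.inl 0) * X (Sum.inr j.succ) - X (Sum.inl j.succ) * X (Sum.inr 0)

lemma Dop_qp (j : Fin n) : Dop n (qp j) = 0 := by
  rw [qp, map_sub, Dop_mul, Dop_mul, Dop_X_inr, Dop_X_inr, Dop_X_inl, Dop_X_inl]
  ring

/-- The basic kernel elements. -/
noncomputable def Pp (α : Fin (n+1) → ℕ) (c : Fin n → ℕ) :
    MvPolynomial (Fin (n+1) ⊕ Fin (n+1)) ℂ :=
  (∏ i, X (Sum.inl i) ^ α i) * ∏ j, qp j ^ c j

lemma Dop_prod_eq_zero {ι : Type*} (s : Finset ι)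
    (f : ι → MvPolynomial (Fin (n+1) ⊕ Fin (n+1)) ℂ)
    (h : ∀ i ∈ s, Dop n (f i) = 0) : Dop n (∏ i ∈ s, f i) = 0 := by
  refine Finset.prod_induction f (fun x => Dop n x = 0) ?_ Dop_one h
  intro a b ha hb
  rw [Dop_mul, ha, hb]; ring

lemma Dop_pow {p : MvPolynomial (Fin (n+1) ⊕ Fin (n+1)) ℂ} (hp : Dop n p = 0) (c : ℕ) :
    Dop n (p ^ c) = 0 := by
  induction c with
  | zero => simpa using Dop_one
  | succ c ih => rw [pow_succ, Dop_mul, hp, ih]; ring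

lemma Dop_Pp (α : Fin (n+1) → ℕ) (c : Fin n → ℕ) : Dop n (Pp α c) = 0 := by
  rw [Pp, Dop_mul,
    Dop_prod_eq_zero _ _ (fun j _ => Dop_pow (Dop_qp j) (c j)),
    Dop_prod_eq_zero _ _ (fun i _ => Dop_pow (Dop_X_inl i) (α i))]
  ring

lemma isWH_pow {p : MvPolynomial (Fin (n+1) ⊕ Fin (n+1)) ℂ} {d : ℕ × ℕ}
    (h : IsWeightedHomogeneous (W n) p d) (c : ℕ) :
    IsWeightedHomogeneous (W n) (p ^ c) (c • d) := by
  induction c with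
  | zero => simpa using isWeightedHomogeneous_one ℂ (W n)
  | succ c ih => rw [pow_succ, succ_nsmul]; exact ih.mul h

lemma qp_mem (j : Fin n) : IsWeightedHomogeneous (W n) (qp j) ((1 : ℕ), (1 : ℕ)) := by
  have h1 : IsWeightedHomogeneous (W n)
      (X (Sum.inl 0) * X (Sum.inr j.succ) : MvPolynomial _ ℂ) ((1 : ℕ), (1 : ℕ)) :=
    (isWeightedHomogeneous_X ℂ (W n) (Sum.inl 0)).mul
      (isWeightedHomogeneous_X ℂ (W n) (Sum.inr j.succ))
  have h2 : IsWeightedHomogeneous (W n)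
      (X (Sum.inl j.succ) * X (Sum.inr 0) : MvPolynomial _ ℂ) ((1 : ℕ), (1 : ℕ)) :=
    (isWeightedHomogeneous_X ℂ (W n) (Sum.inl j.succ)).mul
      (isWeightedHomogeneous_X ℂ (W n) (Sum.inr 0))
  rw [← mem_weightedHomogeneousSubmodule ℂ] at h1 h2 ⊢
  exact Submodule.sub_mem _ h1 h2

lemma Pp_mem (α : Fin (n+1) → ℕ) (c : Fin n → ℕ) :
    Pp α c ∈ Vab n ((∑ i, α i) + ∑ j, c j) (∑ j, c j) := by
  have h1 : IsWeightedHomogeneous (W n) (∏ i, X (Sum.inl i) ^ α i : MvPolynomial _ ℂ)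
      (∑ i, α i • ((1 : ℕ), (0 : ℕ))) :=
    IsWeightedHomogeneous.prod _ _ _
      (fun i _ => isWH_pow (isWeightedHomogeneous_X ℂ (W n) (Sum.inl i)) (α i))
  have h2 : IsWeightedHomogeneous (W n) (∏ j, qp j ^ c j : MvPolynomial _ ℂ)
      (∑ j, c j • ((1 : ℕ), (1 : ℕ))) :=
    IsWeightedHomogeneous.prod _ _ _ (fun j _ => isWH_pow (qp_mem j) (c j))
  have h := h1.mul h2
  have e : (∑ i, α i • ((1 : ℕ), (0 : ℕ))) + (∑ j, c j • ((1 : ℕ), (1 : ℕ)))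
      = (((∑ i, α i) + ∑ j, c j : ℕ), (∑ j, c j : ℕ)) := by
    apply Prod.ext <;>
      simp [Prod.fst_sum, Prod.snd_sum, Prod.smul_mk, smul_eq_mul]
  rw [e] at h
  exact h

lemma totalDegree_le_of_mem {a b : ℕ} {p : MvPolynomial (Fin (n+1) ⊕ Fin (n+1)) ℂ}
    (hp : p ∈ Vab n a b) : p.totalDegree ≤ a + b := by
  apply Finset.sup_le
  intro d hd
  have h : (Finsupp.weight (W n)) d = (a, b) :=
    hp (MvPolynomial.mem_support_iff.mp hd)
  have h1 : ∑ i ∈ d.support, d i * (W n i).1 = a := by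
    have := congrArg Prod.fst h
    simpa [Finsupp.weight_apply, Finsupp.sum, Prod.fst_sum, smul_eq_mul] using this
  have h2 : ∑ i ∈ d.support, d i * (W n i).2 = b := by
    have := congrArg Prod.snd h
    simpa [Finsupp.weight_apply, Finsupp.sum, Prod.snd_sum, smul_eq_mul] using this
  have key : ∑ i ∈ d.support, d i = a + b := by
    rw [← h1, ← h2, ← Finset.sum_add_distrib]
    refine Finset.sum_congr rfl fun i _ => ?_
    rcases i with i | i <;> simp
  calc (d.sum fun _ e => e) = ∑ i ∈ d.support, d i := rfl
  _ = a + b := key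
  _ ≤ a + b := le_rfl

lemma fdVab (n a b : ℕ) : FiniteDimensional ℂ (Vab n a b) :=
  Submodule.finiteDimensional_of_le
    (S₂ := restrictTotalDegree (Fin (n+1) ⊕ Fin (n+1)) ℂ (a + b))
    (fun p hp => (mem_restrictTotalDegree _ _ _).2 (totalDegree_le_of_mem hp))

/-- Substitution `y_0 ↦ 0`. -/
noncomputable def sub0 (n : ℕ) :
    (Fin (n+1) ⊕ Fin (n+1)) → MvPolynomial (Fin (n+1) ⊕ Fin (n+1)) ℂ :=
  Sum.elim (fun i => X (Sum.inl i)) (fun j => if j = 0 then 0 else X (Sum.inr j))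

/-- Exponent vector of the image of `Pp α c` under the substitution. -/
def Efun (α : Fin (n+1) → ℕ) (c : Fin n → ℕ) : (Fin (n+1) ⊕ Fin (n+1)) → ℕ :=
  Sum.elim (fun i => α i + (if i = 0 then ∑ j, c j else 0))
           (fun j => if h : j = 0 then 0 else c (j.pred h))

lemma monomial_one_prod (e : (Fin (n+1) ⊕ Fin (n+1)) → ℕ) :
    (monomial (Finsupp.equivFunOnFinite.symm e) (1 : ℂ)
      : MvPolynomial (Fin (n+1) ⊕ Fin (n+1)) ℂ) = ∏ s, X s ^ e s := by
  classical
  rw [← prod_X_pow_eq_monomial]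
  rw [Finset.prod_subset (Finset.subset_univ _)
    (fun x _ hx => by
      rw [Finsupp.notMem_support_iff.mp hx, pow_zero])]
  exact Finset.prod_congr rfl fun x _ => by
    rfl

lemma phi_P (α : Fin (n+1) → ℕ) (c : Fin n → ℕ) :
    aeval (sub0 n) (Pp α c)
      = monomial (Finsupp.equivFunOnFinite.symm (Efun α c)) (1 : ℂ) := by
  classical
  rw [monomial_one_prod, Fintype.prod_sum_type]
  have hy : (∏ j : Fin (n+1), (X (Sum.inr j) : MvPolynomial (Fin (n+1) ⊕ Fin (n+1)) ℂ) ^ Efun α c (Sum.inr j))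
      = ∏ j : Fin n, X (Sum.inr j.succ) ^ c j := by
    rw [Fin.prod_univ_succ]
    simp [Efun, Fin.succ_ne_zero, Fin.pred_succ]
  have hx : (∏ i : Fin (n+1), (X (Sum.inl i) : MvPolynomial (Fin (n+1) ⊕ Fin (n+1)) ℂ) ^ Efun α c (Sum.inl i))
      = (∏ i, X (Sum.inl i) ^ α i) * X (Sum.inl 0) ^ (∑ j, c j) := by
    simp only [Efun, Sum.elim_inl, pow_add]
    rw [Finset.prod_mul_distrib]
    congr 1
    have hterm : ∀ i : Fin (n+1),
        (X (Sum.inl i) : MvPolynomial (Fin (n+1) ⊕ Fin (n+1)) ℂ) ^ (if i = (0 : Fin (n+1)) then ∑ j, c j else 0)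
          = (if i = (0 : Fin (n+1)) then X (Sum.inl (0 : Fin (n+1))) ^ (∑ j, c j) else 1) := by
      intro i
      split
      · next h => rw [h]
      · rw [pow_zero]
    rw [Finset.prod_congr rfl (fun i _ => hterm i), Finset.prod_ite_eq' Finset.univ]
    simp
  have hq : ∀ j : Fin n, aeval (sub0 n) (qp j)
      = (X (Sum.inl 0) * X (Sum.inr j.succ) : MvPolynomial (Fin (n+1) ⊕ Fin (n+1)) ℂ) := by
    intro j
    simp [qp, sub0, Fin.succ_ne_zero]
  have h2 : (∏ j : Fin n, (aeval (sub0 n) (qp j)) ^ c j)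
      = (X (Sum.inl 0) : MvPolynomial (Fin (n+1) ⊕ Fin (n+1)) ℂ) ^ (∑ j, c j)
        * ∏ j : Fin n, X (Sum.inr j.succ) ^ c j := by
    rw [Finset.prod_congr rfl fun j _ => by rw [hq j]]
    simp only [mul_pow]
    rw [Finset.prod_mul_distrib, Finset.prod_pow_eq_pow_sum]
  rw [Pp, map_mul, map_prod, map_prod]
  simp only [map_pow]
  rw [h2, hx, hy]
  simp only [aeval_X, sub0, Sum.elim_inl]
  ring

end KLBaux

set_option maxHeartbeats 1000000 in
set_option synthInstance.maxHeartbeats 400000 in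
open KLBaux in
/-- For `a1 > a2 ≥ 1`, the kernel of
`D^k : V_{m·a1−k, m·a2+k−(n+1)} → V_{m·a1, m·a2−(n+1)}` has dimension at least
`c·m^{2n−1}` for some `c > 0` and all sufficiently large `m`. -/
theorem kernel_lower_bound_of_a1_gt_a2 (n k a1 a2 : ℕ)
    (hn : 1 ≤ n) (hk : 1 ≤ k) (ha2 : 1 ≤ a2) (h12 : a2 < a1) :
    ∃ c : ℝ, 0 < c ∧ ∃ M : ℕ, ∀ m : ℕ, M ≤ m → 0 < m →
      ∀ g : (Vab n (m * a1 - k) (m * a2 + k - (n + 1))) →ₗ[ℂ]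
            (Vab n (m * a1) (m * a2 - (n + 1))),
        (∀ v, (g v : MvPolynomial (Fin (n + 1) ⊕ Fin (n + 1)) ℂ)
            = ((Dop n) ^ k) (v : MvPolynomial (Fin (n + 1) ⊕ Fin (n + 1)) ℂ)) →
        c * (m : ℝ) ^ (2 * n - 1) ≤ (Module.finrank ℂ (LinearMap.ker g) : ℝ) := by
  classical
  obtain ⟨n', rfl⟩ : ∃ n', n = n' + 1 := ⟨n - 1, by omega⟩
  refine ⟨(1 / (2 * ((n' + 1 : ℕ) : ℝ))) ^ (2 * (n' + 1) - 1), by positivity,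
    4 * k + 4 * n' + 8, ?_⟩
  intro m hM hm
  set t := m / (2 * (n' + 1)) with ht
  have hmul1 : m * a2 + m ≤ m * a1 := by
    calc m * a2 + m = m * (a2 + 1) := by ring
    _ ≤ m * a1 := Nat.mul_le_mul_left m (by omega)
  have hmul2 : m ≤ m * a2 := by
    calc m = m * 1 := (mul_one m).symm
    _ ≤ m * a2 := Nat.mul_le_mul_left m ha2
  have htle : 2 * ((n' + 1) * t) ≤ m := by
    calc 2 * ((n' + 1) * t) = t * (2 * (n' + 1)) := by ring
    _ ≤ m := Nat.div_mul_le_self m (2 * (n' + 1))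
  set B := m * a2 + k - (n' + 1 + 1) with hB
  set A := m * a1 - k - B with hA
  have hABk : m * a1 - k = A + B := by omega
  have hta : (n' + 1) * t ≤ A := by omega
  have htb : (n' + 1) * t ≤ B := by omega
  intro g hg
  set uf : (Fin (n' + 1) → Fin (t + 1)) → (Fin (n' + 1 + 1) → ℕ) := fun u i =>
    if h : i = 0 then A - ∑ x, (u x : ℕ) else (u (i.pred h) : ℕ) with huf
  set cf : (Fin n' → Fin (t + 1)) → (Fin (n' + 1) → ℕ) := fun v j =>
    if h : j = 0 then B - ∑ x, (v x : ℕ) else (v (j.pred h) : ℕ) with hcf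
  have hule : ∀ (N : ℕ) (u : Fin N → Fin (t + 1)), (∑ x, (u x : ℕ)) ≤ N * t := by
    intro N u
    calc (∑ x, (u x : ℕ)) ≤ ∑ _x : Fin N, t :=
          Finset.sum_le_sum fun x _ => Nat.lt_succ_iff.mp (u x).isLt
    _ = N * t := by simp [Finset.sum_const, Finset.card_univ]
  have husum : ∀ u, (∑ i, uf u i) = A := by
    intro u
    have h1 : (∑ x, (u x : ℕ)) ≤ A := le_trans (hule _ u) hta
    rw [Fin.sum_univ_succ]
    have h0 : uf u 0 = A - ∑ x, (u x : ℕ) := by simp [huf]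
    have hs : ∀ i : Fin (n' + 1), uf u i.succ = u i := by
      intro i
      simp only [huf, dif_neg (Fin.succ_ne_zero i), Fin.pred_succ]
    rw [h0, Finset.sum_congr rfl fun i _ => hs i]
    omega
  have hcsum : ∀ v, (∑ j, cf v j) = B := by
    intro v
    have h1 : (∑ x, (v x : ℕ)) ≤ B := le_trans (hule _ v) (le_trans (Nat.mul_le_mul_right t (by omega)) htb)
    rw [Fin.sum_univ_succ]
    have h0 : cf v 0 = B - ∑ x, (v x : ℕ) := by simp [hcf]
    have hs : ∀ j : Fin n', cf v j.succ = v j := by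
      intro j
      simp only [hcf, dif_neg (Fin.succ_ne_zero j), Fin.pred_succ]
    rw [h0, Finset.sum_congr rfl fun j _ => hs j]
    omega
  clear_value t B A uf cf
  have hmemV : ∀ u v, Pp (uf u) (cf v) ∈ Vab (n' + 1) (m * a1 - k) B := by
    intro u v
    have h := Pp_mem (uf u) (cf v)
    rw [husum u, hcsum v, ← hABk] at h
    exact h
  have hker0 : ∀ u v, ((Dop (n' + 1)) ^ k) (Pp (uf u) (cf v)) = 0 := by
    obtain ⟨k', rfl⟩ : ∃ k', k = k' + 1 := ⟨k - 1, by omega⟩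
    intro u v
    rw [pow_succ, Module.End.mul_apply, Dop_Pp, map_zero]
  have hkermem : ∀ u v, (⟨Pp (uf u) (cf v), hmemV u v⟩ :
      Vab (n' + 1) (m * a1 - k) B) ∈ LinearMap.ker g := by
    intro u v
    rw [LinearMap.mem_ker]
    have h1 := hg ⟨Pp (uf u) (cf v), hmemV u v⟩
    have h2 : (g ⟨Pp (uf u) (cf v), hmemV u v⟩
        : MvPolynomial (Fin (n' + 1 + 1) ⊕ Fin (n' + 1 + 1)) ℂ) = 0 := by
      rw [h1]; exact hker0 u v
    exact Subtype.ext (h2.trans (ZeroMemClass.coe_zero _).symm)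
  have hEinj : Function.Injective
      (fun p : (Fin (n' + 1) → Fin (t + 1)) × (Fin n' → Fin (t + 1)) =>
        Finsupp.equivFunOnFinite.symm (Efun (uf p.1) (cf p.2))) := by
    intro p p' hpp
    have h2 : Efun (uf p.1) (cf p.2) = Efun (uf p'.1) (cf p'.2) :=
      Finsupp.equivFunOnFinite.symm.injective hpp
    have hu : p.1 = p'.1 := by
      funext i
      have h3 := congrFun h2 (Sum.inl i.succ)
      simp only [Efun, Sum.elim_inl, if_neg (Fin.succ_ne_zero i), add_zero] at h3
      simp only [huf, dif_neg (Fin.succ_ne_zero i), Fin.pred_succ] at h3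
      exact Fin.val_injective h3
    have hv : p.2 = p'.2 := by
      funext j
      have h3 := congrFun h2 (Sum.inr (Fin.succ (Fin.succ j)))
      simp only [Efun, Sum.elim_inr, dif_neg (Fin.succ_ne_zero (Fin.succ j)),
        Fin.pred_succ] at h3
      simp only [hcf, dif_neg (Fin.succ_ne_zero j), Fin.pred_succ] at h3
      exact Fin.val_injective h3
    exact Prod.ext hu hv
  have hlin : LinearIndependent ℂ
      (fun p : (Fin (n' + 1) → Fin (t + 1)) × (Fin n' → Fin (t + 1)) =>
        Pp (uf p.1) (cf p.2)) := by
    apply LinearIndependent.of_comp (aeval (sub0 (n' + 1)) :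
      MvPolynomial (Fin (n' + 1 + 1) ⊕ Fin (n' + 1 + 1)) ℂ →ₐ[ℂ]
        MvPolynomial (Fin (n' + 1 + 1) ⊕ Fin (n' + 1 + 1)) ℂ).toLinearMap
    have he : ((aeval (sub0 (n' + 1)) :
        MvPolynomial (Fin (n' + 1 + 1) ⊕ Fin (n' + 1 + 1)) ℂ →ₐ[ℂ]
          MvPolynomial (Fin (n' + 1 + 1) ⊕ Fin (n' + 1 + 1)) ℂ).toLinearMap ∘
          fun p : (Fin (n' + 1) → Fin (t + 1)) × (Fin n' → Fin (t + 1)) =>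
            Pp (uf p.1) (cf p.2))
        = fun p => (monomial (Finsupp.equivFunOnFinite.symm (Efun (uf p.1) (cf p.2)))
            (1 : ℂ)) := by
      funext p
      exact phi_P _ _
    rw [he]
    have hb := (MvPolynomial.basisMonomials (Fin (n' + 1 + 1) ⊕ Fin (n' + 1 + 1))
      ℂ).linearIndependent.comp _ hEinj
    simp only [MvPolynomial.coe_basisMonomials] at hb
    exact hb
  haveI : FiniteDimensional ℂ (Vab (n' + 1) (m * a1 - k) B) := fdVab _ _ _
  have hspan : Submodule.span ℂ (Set.range
      (fun p : (Fin (n' + 1) → Fin (t + 1)) × (Fin n' → Fin (t + 1)) =>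
        Pp (uf p.1) (cf p.2)))
      ≤ (LinearMap.ker g).map (Vab (n' + 1) (m * a1 - k) B).subtype := by
    rw [Submodule.span_le]
    rintro x ⟨p, rfl⟩
    exact ⟨⟨Pp (uf p.1) (cf p.2), hmemV p.1 p.2⟩, hkermem p.1 p.2, rfl⟩
  haveI hfinT : Module.Finite ℂ
      ((LinearMap.ker g).map (Vab (n' + 1) (m * a1 - k) B).subtype) :=
    Submodule.finiteDimensional_of_le (Submodule.map_subtype_le _ _)
  have heq1 : Module.finrank ℂ (Submodule.span ℂ (Set.range
      (fun p : (Fin (n' + 1) → Fin (t + 1)) × (Fin n' → Fin (t + 1)) =>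
        Pp (uf p.1) (cf p.2))))
      = Fintype.card ((Fin (n' + 1) → Fin (t + 1)) × (Fin n' → Fin (t + 1))) :=
    finrank_span_eq_card hlin
  have heq2 : Module.finrank ℂ
      ((LinearMap.ker g).map (Vab (n' + 1) (m * a1 - k) B).subtype)
      = Module.finrank ℂ (LinearMap.ker g) :=
    Submodule.finrank_map_subtype_eq _ _
  have hcard : Fintype.card ((Fin (n' + 1) → Fin (t + 1)) × (Fin n' → Fin (t + 1)))
      ≤ Module.finrank ℂ (LinearMap.ker g) := by
    rw [← heq1, ← heq2]
    exact Submodule.finrank_mono hspan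
  have hcardeq : Fintype.card
      ((Fin (n' + 1) → Fin (t + 1)) × (Fin n' → Fin (t + 1)))
      = (t + 1) ^ (2 * (n' + 1) - 1) := by
    rw [Fintype.card_prod, Fintype.card_fun, Fintype.card_fun, Fintype.card_fin,
      Fintype.card_fin, Fintype.card_fin, ← pow_add]
    congr 1
    omega
  have hfin : ((t + 1) ^ (2 * (n' + 1) - 1) : ℕ) ≤ Module.finrank ℂ (LinearMap.ker g) := by
    rw [← hcardeq]; exact hcard
  have hmlt : (m : ℝ) ≤ 2 * ((n' + 1 : ℕ) : ℝ) * ((t : ℝ) + 1) := by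
    have h3 : m % (2 * (n' + 1)) < 2 * (n' + 1) := Nat.mod_lt _ (by omega)
    have h1 : m < 2 * (n' + 1) * (t + 1) := by
      rw [ht]
      calc m = 2 * (n' + 1) * (m / (2 * (n' + 1))) + m % (2 * (n' + 1)) :=
            (Nat.div_add_mod m (2 * (n' + 1))).symm
      _ < 2 * (n' + 1) * (m / (2 * (n' + 1))) + 2 * (n' + 1) := Nat.add_lt_add_left h3 _
      _ = 2 * (n' + 1) * (m / (2 * (n' + 1)) + 1) := by ring
    have h2 := (Nat.cast_lt (α := ℝ)).mpr h1
    push_cast at h2 ⊢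
    linarith
  have hpos : (0 : ℝ) < 2 * ((n' + 1 : ℕ) : ℝ) := by positivity
  calc (1 / (2 * ((n' + 1 : ℕ) : ℝ))) ^ (2 * (n' + 1) - 1) * (m : ℝ) ^ (2 * (n' + 1) - 1)
      = ((m : ℝ) / (2 * ((n' + 1 : ℕ) : ℝ))) ^ (2 * (n' + 1) - 1) := by
        rw [← mul_pow]; ring_nf
  _ ≤ ((t : ℝ) + 1) ^ (2 * (n' + 1) - 1) := by
        apply pow_le_pow_left₀ (by positivity)
        rw [div_le_iff₀ hpos]
        calc (m : ℝ) ≤ 2 * ((n' + 1 : ℕ) : ℝ) * ((t : ℝ) + 1) := hmlt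
        _ = ((t : ℝ) + 1) * (2 * ((n' + 1 : ℕ) : ℝ)) := by ring
  _ = (((t + 1) ^ (2 * (n' + 1) - 1) : ℕ) : ℝ) := by push_cast; ring
  _ ≤ (Module.finrank ℂ (LinearMap.ker g) : ℝ) := Nat.cast_le.mpr hfin
end

section
/- Let n ≥ 1, k ≥ 1 and let a2 > a1 ≥ 1 be integers. Then there exists a constant c > 0 such that for all sufficiently large positive integers m, the cokernel of the linear map D^k : V_{m·a1−k, m·a2+k−(n+1)} → V_{m·a1, m·a2−(n+1)} has ℂ-dimension at least c·m^{2n−1}. -/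
open MvPolynomial

/-! ### Counting monomials -/

noncomputable def symEquiv (α : Type*) [DecidableEq α] (c : ℕ) :
    {f : α →₀ ℕ // (f.sum fun _ e => e) = c} ≃ Sym α c :=
  Equiv.subtypeEquiv Multiset.toFinsupp.toEquiv.symm (fun f => by
    change _ ↔ Multiset.card (Finsupp.toMultiset f) = c
    rw [Finsupp.card_toMultiset]; rfl)

abbrev wt (n : ℕ) : (Fin (n+1) ⊕ Fin (n+1)) → ℕ × ℕ :=
  Sum.elim (fun _ => ((1:ℕ),(0:ℕ))) (fun _ => ((0:ℕ),(1:ℕ)))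

lemma weight_eq (n : ℕ) (d : (Fin (n+1) ⊕ Fin (n+1)) →₀ ℕ) :
    Finsupp.weight (wt n) d =
      (((Finsupp.sumFinsuppEquivProdFinsupp d).1.sum fun _ e => e),
       ((Finsupp.sumFinsuppEquivProdFinsupp d).2.sum fun _ e => e)) := by
  rw [Finsupp.weight_apply,
    Finsupp.sum_fintype _ _ (fun i => by simp),
    Finsupp.sum_fintype _ _ (fun i => rfl),
    Finsupp.sum_fintype _ _ (fun i => rfl),
    Fintype.sum_sum_type]
  apply Prod.ext <;>
    simp [Prod.fst_sum, Prod.snd_sum, Finsupp.fst_sumFinsuppEquivProdFinsupp,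
      Finsupp.snd_sumFinsuppEquivProdFinsupp, smul_eq_mul]

noncomputable def splitEquiv (n a b : ℕ) :
    {d : (Fin (n+1) ⊕ Fin (n+1)) →₀ ℕ // Finsupp.weight (wt n) d = (a,b)} ≃
      Sym (Fin (n+1)) a × Sym (Fin (n+1)) b :=
  ((Equiv.subtypeEquiv Finsupp.sumFinsuppEquivProdFinsupp (fun d => by
      rw [weight_eq, Prod.mk.injEq])).trans
    Equiv.subtypeProdEquivProd).trans
      (Equiv.prodCongr (symEquiv _ a) (symEquiv _ b))

lemma Vab_linEquiv (n a b : ℕ) :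
    ∃ _ : (Vab n a b) ≃ₗ[ℂ]
      ({d : (Fin (n+1) ⊕ Fin (n+1)) →₀ ℕ | Finsupp.weight (wt n) d = (a,b)} →₀ ℂ), True := by
  have h : Vab n a b = AddMonoidAlgebra.supported ℂ ℂ
      {d : (Fin (n+1) ⊕ Fin (n+1)) →₀ ℕ | Finsupp.weight (wt n) d = (a,b)} :=
    weightedHomogeneousSubmodule_eq_finsupp_supported ℂ (wt n) (a,b)
  exact ⟨(LinearEquiv.ofEq _ _ h).trans (AddMonoidAlgebra.supportedEquivFinsupp _), trivial⟩

instance Vab_fd (n a b : ℕ) : FiniteDimensional ℂ (Vab n a b) := by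
  classical
  obtain ⟨e, -⟩ := Vab_linEquiv n a b
  set S : Set ((Fin (n+1) ⊕ Fin (n+1)) →₀ ℕ) := {d | Finsupp.weight (wt n) d = (a,b)}
  haveI : Finite ↥S := Finite.of_equiv _ (splitEquiv n a b).symm
  haveI := Fintype.ofFinite ↥S
  haveI : Module.Finite ℂ (↥S →₀ ℂ) :=
    Module.Finite.equiv (Finsupp.linearEquivFunOnFinite ℂ ℂ ↥S).symm
  exact Module.Finite.equiv e.symm

lemma finrank_Vab (n a b : ℕ) :
    Module.finrank ℂ (Vab n a b) = (a+n).choose n * (b+n).choose n := by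
  classical
  obtain ⟨e, -⟩ := Vab_linEquiv n a b
  set S : Set ((Fin (n+1) ⊕ Fin (n+1)) →₀ ℕ) := {d | Finsupp.weight (wt n) d = (a,b)}
  haveI : Finite ↥S := Finite.of_equiv _ (splitEquiv n a b).symm
  haveI := Fintype.ofFinite ↥S
  have hcard : Nat.card {d : (Fin (n+1) ⊕ Fin (n+1)) →₀ ℕ // Finsupp.weight (wt n) d = (a,b)}
      = (a+n).choose n * (b+n).choose n := by
    rw [Nat.card_congr (splitEquiv n a b), Nat.card_prod, Nat.card_eq_fintype_card,
      Nat.card_eq_fintype_card, Sym.card_sym_eq_multichoose, Sym.card_sym_eq_multichoose,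
      Nat.multichoose_eq, Nat.multichoose_eq, Fintype.card_fin]
    congr 1
    · rw [show n+1+a-1 = a+n from by omega]; exact Nat.choose_symm_add
    · rw [show n+1+b-1 = b+n from by omega]; exact Nat.choose_symm_add
  rw [e.finrank_eq, Module.finrank_finsupp_self, ← Nat.card_eq_fintype_card]
  exact hcard

/-! ### The combinatorial inequality -/

/-- `Pn n a = (a+1)(a+2)⋯(a+n)` -/
def Pn (n a : ℕ) : ℕ := ∏ i ∈ Finset.range n, (a + 1 + i)

lemma Pn_eq_asc (n a : ℕ) : Pn n a = (a+1).ascFactorial n := by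
  induction n with
  | zero => simp [Pn]
  | succ n ih =>
    rw [Pn, Finset.prod_range_succ, ← Pn, ih, Nat.ascFactorial_succ, mul_comm]

lemma Pn_choose (n a : ℕ) : Pn n a = n.factorial * (a + n).choose n := by
  rw [Pn_eq_asc, Nat.ascFactorial_eq_factorial_mul_choose]

open Finset in
lemma weak_step (n a B : ℕ) (h : a ≤ B) :
    Pn n a * Pn n (B+1) ≤ Pn n (a+1) * Pn n B := by
  unfold Pn
  rw [← Finset.prod_mul_distrib, ← Finset.prod_mul_distrib]
  apply Finset.prod_le_prod'
  intro i _
  nlinarith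

open Finset in
lemma strong_step (n a B : ℕ) (hn : 1 ≤ n) (h : a + 1 ≤ B) :
    Pn n a * Pn n (B+1) + (B - a) * ((a+1)*B)^(n-1) ≤ Pn n (a+1) * Pn n B := by
  obtain ⟨n, rfl⟩ : ∃ m, n = m + 1 := ⟨n-1, (Nat.succ_pred_eq_of_pos hn).symm⟩
  simp only [Nat.add_sub_cancel]
  unfold Pn
  rw [← Finset.prod_mul_distrib, ← Finset.prod_mul_distrib,
    Finset.prod_range_succ', Finset.prod_range_succ']
  have h0 : (a + 1 + 0) * (B + 1 + 1 + 0) + (B - a) = (a + 1 + 1 + 0) * (B + 1 + 0) := by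
    nlinarith [Nat.sub_add_cancel (le_of_lt h)]
  have hprod : (∏ i ∈ range n, ((a+1+(i+1))*(B+1+1+(i+1))))
      ≤ ∏ i ∈ range n, ((a+1+1+(i+1))*(B+1+(i+1))) := by
    apply Finset.prod_le_prod'
    intro i _
    nlinarith
  have hlow : ((a+1)*B)^n ≤ ∏ i ∈ range n, ((a+1+1+(i+1))*(B+1+(i+1))) := by
    calc ((a+1)*B)^n = ∏ _i ∈ range n, ((a+1)*B) := by
          rw [Finset.prod_const, Finset.card_range]
      _ ≤ _ := by
          apply Finset.prod_le_prod'
          intro i _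
          exact Nat.mul_le_mul (by omega) (by omega)
  calc (∏ i ∈ range n, ((a+1+(i+1))*(B+1+1+(i+1)))) * ((a+1+0)*(B+1+1+0)) + (B-a) * ((a+1)*B)^n
      ≤ (∏ i ∈ range n, ((a+1+1+(i+1))*(B+1+(i+1)))) * ((a+1+0)*(B+1+1+0))
        + (∏ i ∈ range n, ((a+1+1+(i+1))*(B+1+(i+1)))) * (B-a) :=
        add_le_add (Nat.mul_le_mul_right _ hprod)
          (le_trans (Nat.mul_le_mul_left _ hlow) (le_of_eq (mul_comm _ _)))
    _ = (∏ i ∈ range n, ((a+1+1+(i+1))*(B+1+(i+1)))) * ((a+1+0)*(B+1+1+0) + (B-a)) := by ring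
    _ = (∏ i ∈ range n, ((a+1+1+(i+1))*(B+1+(i+1)))) * ((a+1+1+0)*(B+1+0)) := by rw [h0]

lemma chain (n : ℕ) (hn : 1 ≤ n) :
    ∀ k A B : ℕ, 1 ≤ k → k ≤ A → A ≤ B →
      Pn n (A - k) * Pn n (B + k) + (B - A) * (A*B)^(n-1) ≤ Pn n A * Pn n B := by
  intro k
  induction k with
  | zero => intro A B h; omega
  | succ k ih =>
    intro A B _ hkA hAB
    rcases Nat.eq_zero_or_pos k with rfl | hk
    · obtain ⟨a, rfl⟩ : ∃ a, A = a + 1 := ⟨A-1, by omega⟩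
      have hs := strong_step n a B hn (by omega)
      simp only [Nat.add_sub_cancel]
      refine le_trans (add_le_add_right (Nat.mul_le_mul_right _ (by omega)) _) hs
    · have hw := weak_step n (A-(k+1)) (B+k) (by omega)
      rw [show A-(k+1)+1 = A-k from by omega] at hw
      have hih := ih A B hk (by omega) hAB
      calc Pn n (A-(k+1)) * Pn n (B+(k+1)) + (B-A) * (A*B)^(n-1)
          ≤ Pn n (A-k) * Pn n (B+k) + (B-A) * (A*B)^(n-1) := add_le_add_left hw _
        _ ≤ Pn n A * Pn n B := hih

lemma arith_main (n k a1 a2 m F r : ℕ) (hn : 1 ≤ n) (hk : 1 ≤ k) (ha1 : 1 ≤ a1)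
    (h12 : a1 < a2) (hM : 2*(n+1) + k ≤ m)
    (e1 : F + r = (m*a1+n).choose n * ((m*a2-(n+1))+n).choose n)
    (e2 : r ≤ ((m*a1-k)+n).choose n * ((m*a2+k-(n+1))+n).choose n) :
    m ^ (2*n-1) ≤ 2*(n.factorial*n.factorial) * F := by
  set q2 : ℕ := n.factorial * n.factorial with hq2
  set A : ℕ := m * a1 with hA
  set B : ℕ := m * a2 - (n+1) with hB
  have hma1 : m ≤ m * a1 := Nat.le_mul_of_pos_right m (by omega)
  have hma2 : m * (a1+1) ≤ m * a2 := Nat.mul_le_mul_left m (by omega)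
  have hma1' : m * (a1+1) = m * a1 + m := by ring
  have hkA : k ≤ A := by omega
  have hsrc : m * a2 + k - (n+1) = B + k := by omega
  have hAB : A ≤ B := by omega
  have hBA : m - (n+1) ≤ B - A := by omega
  have hmA : m ≤ A := by omega
  have hmB : m ≤ B := by omega
  rw [hsrc] at e2
  -- key combinatorial inequality
  have key := chain n hn k A B hk hkA hAB
  rw [Pn_choose, Pn_choose, Pn_choose, Pn_choose] at key
  set gain : ℕ := (B - A) * (A*B)^(n-1) with hgain
  have h5 : q2 * (((A-k)+n).choose n * ((B+k)+n).choose n) + gain ≤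
      q2 * ((A+n).choose n * (B+n).choose n) := by
    calc q2 * (((A-k)+n).choose n * ((B+k)+n).choose n) + gain
        = (n.factorial * ((A-k)+n).choose n) * (n.factorial * ((B+k)+n).choose n) + gain := by
          rw [hq2]; ring
      _ ≤ (n.factorial * ((A+n).choose n)) * (n.factorial * ((B+n).choose n)) := key
      _ = q2 * ((A+n).choose n * (B+n).choose n) := by rw [hq2]; ring
  have h8 : gain ≤ q2 * F := by
    have h6 : q2 * ((A+n).choose n * (B+n).choose n) = q2 * F + q2 * r := by
      rw [← e1]; ring
    have h7 : q2 * r ≤ q2 * (((A-k)+n).choose n * ((B+k)+n).choose n) :=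
      Nat.mul_le_mul_left _ e2
    have h9 := le_trans h5 (le_trans (le_of_eq h6) (add_le_add_right h7 _))
    omega
  have hpow : m ^ (2*n-1) = m * ((m*m)^(n-1)) := by
    rw [← pow_two, ← pow_mul, ← pow_succ']
    congr 1; omega
  rw [hpow]
  calc m * ((m*m)^(n-1)) ≤ (2*(m-(n+1))) * ((A*B)^(n-1)) :=
        Nat.mul_le_mul (by omega) (Nat.pow_le_pow_left (Nat.mul_le_mul hmA hmB) _)
    _ = 2 * ((m-(n+1)) * (A*B)^(n-1)) := by ring
    _ ≤ 2 * gain := Nat.mul_le_mul_left _ (Nat.mul_le_mul_right _ hBA)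
    _ ≤ 2 * (q2 * F) := Nat.mul_le_mul_left _ h8
    _ = 2*q2 * F := by ring

/-- For `a2 > a1 ≥ 1`, the cokernel of
`D^k : V_{m·a1−k, m·a2+k−(n+1)} → V_{m·a1, m·a2−(n+1)}` has dimension at least
`c·m^{2n−1}` for some `c > 0` and all sufficiently large `m`. -/
theorem cokernel_lower_bound_of_a2_gt_a1 (n k a1 a2 : ℕ)
    (hn : 1 ≤ n) (hk : 1 ≤ k) (ha1 : 1 ≤ a1) (h12 : a1 < a2) :
    ∃ c : ℝ, 0 < c ∧ ∃ M : ℕ, ∀ m : ℕ, M ≤ m → 0 < m →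
      ∀ g : (Vab n (m * a1 - k) (m * a2 + k - (n + 1))) →ₗ[ℂ]
            (Vab n (m * a1) (m * a2 - (n + 1))),
        (∀ v, (g v : MvPolynomial (Fin (n + 1) ⊕ Fin (n + 1)) ℂ)
            = ((Dop n) ^ k) (v : MvPolynomial (Fin (n + 1) ⊕ Fin (n + 1)) ℂ)) →
        c * (m : ℝ) ^ (2 * n - 1)
          ≤ (Module.finrank ℂ
              (↥(Vab n (m * a1) (m * a2 - (n + 1))) ⧸ LinearMap.range g) : ℝ) := by
  classical
  have hq2pos : 0 < n.factorial * n.factorial := Nat.mul_pos n.factorial_pos n.factorial_pos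
  refine ⟨((2 * (n.factorial * n.factorial) : ℕ) : ℝ)⁻¹, by positivity, 2*(n+1) + k, ?_⟩
  intro m hM hm g _
  have e1 : Module.finrank ℂ (↥(Vab n (m * a1) (m * a2 - (n + 1))) ⧸ LinearMap.range g)
      + Module.finrank ℂ (LinearMap.range g)
      = Module.finrank ℂ (Vab n (m * a1) (m * a2 - (n + 1))) :=
    Submodule.finrank_quotient_add_finrank _
  have e2 : Module.finrank ℂ (LinearMap.range g)
      ≤ Module.finrank ℂ (Vab n (m * a1 - k) (m * a2 + k - (n + 1))) :=
    g.finrank_range_le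
  rw [finrank_Vab] at e1 e2
  have hnat := arith_main n k a1 a2 m _ _ hn hk ha1 h12 hM e1 e2
  rw [inv_mul_le_iff₀ (by positivity)]
  calc ((m:ℝ)) ^ (2*n-1) = (((m ^ (2*n-1) : ℕ)):ℝ) := by push_cast; ring
    _ ≤ ((2*(n.factorial*n.factorial)
          * Module.finrank ℂ (↥(Vab n (m * a1) (m * a2 - (n + 1))) ⧸ LinearMap.range g) : ℕ) : ℝ) := by
        exact_mod_cast hnat
    _ = _ := by push_cast; ring
end

section
/- Let n ≥ 1, k ≥ 1, and let A, B, i be nonnegative integers with i ≤ A and i + k ≤ B. In ℂ[x_0,…,x_n,y_0,…,y_n], define v_i = Σ_{j=0}^{i} (−1)^j·C(i,j)·x_0^{A−j}·x_1^{j}·y_0^{B−i+j}·y_1^{i−j}, where C(i,j) is the binomial coefficient. Then D^k(v_i) ≠ 0. -/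
open MvPolynomial

namespace DkAux

open Finsupp

/-- exponent vector `x₀^a x₁^b y₀^c y₁^d` -/
noncomputable def e (n a b c d : ℕ) : (Fin (n + 1) ⊕ Fin (n + 1)) →₀ ℕ :=
  Finsupp.single (Sum.inl 0) a + Finsupp.single (Sum.inl 1) b +
  Finsupp.single (Sum.inr 0) c + Finsupp.single (Sum.inr 1) d

noncomputable def vv (n A B i : ℕ) : MvPolynomial (Fin (n + 1) ⊕ Fin (n + 1)) ℂ :=
  ∑ j ∈ Finset.range (i + 1), ((-1 : ℂ) ^ j * (Nat.choose i j : ℂ)) •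
    (monomial (e n (A - j) j (B - i + j) (i - j)) (1 : ℂ))

lemma zne {n : ℕ} (hn : 1 ≤ n) : (0 : Fin (n + 1)) ≠ 1 := by
  have h1 : ((1 : Fin (n + 1)) : ℕ) = 1 := by
    rw [Fin.val_one']
    exact Nat.mod_eq_of_lt (by omega)
  intro h
  rw [Fin.ext_iff, h1] at h
  simp at h

lemma e_inl1 {n : ℕ} (hn : 1 ≤ n) (a b c d : ℕ) :
    (e n a b c d) (Sum.inl 1) = b := by
  simp [e, Finsupp.single_apply, zne hn]

lemma e_inr0 {n : ℕ} (hn : 1 ≤ n) (a b c d : ℕ) :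
    (e n a b c d) (Sum.inr 0) = c := by
  simp [e, Finsupp.single_apply, (zne hn).symm]

lemma e_inr1 {n : ℕ} (hn : 1 ≤ n) (a b c d : ℕ) :
    (e n a b c d) (Sum.inr 1) = d := by
  simp [e, Finsupp.single_apply, zne hn]

lemma e_inr_other {n : ℕ} (a b c d : ℕ) (t : Fin (n + 1)) (ht0 : t ≠ 0) (ht1 : t ≠ 1) :
    (e n a b c d) (Sum.inr t) = 0 := by
  simp [e, Finsupp.single_apply, Ne.symm ht0, Ne.symm ht1]

lemma e_step0 {n : ℕ} (a b c d : ℕ) :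
    Finsupp.single (Sum.inl (0 : Fin (n + 1))) 1 +
      (e n a b (c + 1) d - Finsupp.single (Sum.inr (0 : Fin (n + 1))) 1) =
    e n (a + 1) b c d := by
  have h : e n a b (c + 1) d
      = e n a b c d + Finsupp.single (Sum.inr (0 : Fin (n + 1))) 1 := by
    simp only [e, Finsupp.single_add]
    abel
  rw [h, add_tsub_cancel_right]
  simp only [e, Finsupp.single_add]
  abel

lemma e_step1 {n : ℕ} (a b c d : ℕ) :
    Finsupp.single (Sum.inl (1 : Fin (n + 1))) 1 +
      (e n a b c (d + 1) - Finsupp.single (Sum.inr (1 : Fin (n + 1))) 1) =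
    e n a (b + 1) c d := by
  have h : e n a b c (d + 1)
      = e n a b c d + Finsupp.single (Sum.inr (1 : Fin (n + 1))) 1 := by
    simp only [e, Finsupp.single_add]
    abel
  rw [h, add_tsub_cancel_right]
  simp only [e, Finsupp.single_add]
  abel

lemma Dop_monomial (n : ℕ) (s : (Fin (n + 1) ⊕ Fin (n + 1)) →₀ ℕ) (r : ℂ) :
    Dop n (monomial s r) =
      ∑ t : Fin (n + 1),
        monomial (Finsupp.single (Sum.inl t) 1 + (s - Finsupp.single (Sum.inr t) 1))
          (r * s (Sum.inr t)) := by
  simp only [Dop, LinearMap.sum_apply, LinearMap.comp_apply, Derivation.coeFn_coe,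
    pderiv_monomial, LinearMap.mulLeft_apply]
  refine Finset.sum_congr rfl fun t _ => ?_
  rw [show (X (Sum.inl t) : MvPolynomial (Fin (n + 1) ⊕ Fin (n + 1)) ℂ)
      = monomial (Finsupp.single (Sum.inl t) 1) (1 : ℂ) from rfl, monomial_mul, one_mul]

lemma Dop_mono {n : ℕ} (hn : 1 ≤ n) (a b c d : ℕ) :
    Dop n (monomial (e n a b (c + 1) d) (1 : ℂ)) =
      ((c + 1 : ℕ) : ℂ) • monomial (e n (a + 1) b c d) (1 : ℂ) +
      ((d : ℕ) : ℂ) • monomial (e n a (b + 1) (c + 1) (d - 1)) (1 : ℂ) := by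
  rw [Dop_monomial]
  rw [← Finset.sum_subset (Finset.subset_univ ({0, 1} : Finset (Fin (n + 1))))
    (fun t _ ht => by
      have ht0 : t ≠ 0 := fun h => ht (by simp [h])
      have ht1 : t ≠ 1 := fun h => ht (by simp [h])
      rw [e_inr_other a b (c + 1) d t ht0 ht1]
      simp)]
  rw [Finset.sum_pair (zne hn)]
  rw [e_inr0 hn, e_inr1 hn, e_step0, smul_monomial, smul_monomial]
  cases d with
  | zero =>
    simp
  | succ d' =>
    rw [e_step1]
    simp [mul_comm]

lemma Dop_vv {n : ℕ} (hn : 1 ≤ n) (A B i : ℕ) (hiA : i ≤ A) (hiB : i + 1 ≤ B) :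
    Dop n (vv n A B i) = ((B - i : ℕ) : ℂ) • vv n (A + 1) (B - 1) i := by
  classical
  set M : ℕ → MvPolynomial (Fin (n + 1) ⊕ Fin (n + 1)) ℂ :=
    fun j => monomial (e n (A + 1 - j) j (B - 1 - i + j) (i - j)) (1 : ℂ) with hM
  set c : ℕ → ℂ := fun j => (-1 : ℂ) ^ j * (Nat.choose i j : ℂ) with hc
  have key : Dop n (vv n A B i) =
      ∑ j ∈ Finset.range (i + 1),
        ((c j * ((B - i + j : ℕ) : ℂ)) • M j + (c j * ((i - j : ℕ) : ℂ)) • M (j + 1)) := by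
    rw [vv, map_sum]
    refine Finset.sum_congr rfl fun j hj => ?_
    have hj' : j ≤ i := by
      have := Finset.mem_range.1 hj; omega
    have hc1 : B - i + j = (B - 1 - i + j) + 1 := by omega
    rw [map_smul, hc1, Dop_mono hn]
    have e1 : A - j + 1 = A + 1 - j := by omega
    have e2 : B - 1 - i + j + 1 = B - 1 - i + (j + 1) := by omega
    have e3 : i - j - 1 = i - (j + 1) := by omega
    have e4 : A - j = A + 1 - (j + 1) := by omega
    rw [smul_add, smul_smul, smul_smul, e1, e4, e2, e3]
  rw [key, Finset.sum_add_distrib]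
  have second : (∑ j ∈ Finset.range (i + 1), (c j * ((i - j : ℕ) : ℂ)) • M (j + 1)) =
      ∑ j ∈ Finset.range (i + 1),
        (if j = 0 then (0 : ℂ) else c (j - 1) * ((i - (j - 1) : ℕ) : ℂ)) • M j := by
    rw [Finset.sum_range_succ' (fun j => (if j = 0 then (0 : ℂ)
        else c (j - 1) * ((i - (j - 1) : ℕ) : ℂ)) • M j) i]
    rw [Finset.sum_range_succ (fun j => (c j * ((i - j : ℕ) : ℂ)) • M j.succ) i]
    simp
  rw [second, ← Finset.sum_add_distrib, vv, Finset.smul_sum]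
  refine Finset.sum_congr rfl fun j hj => ?_
  have hj' : j ≤ i := by
    have := Finset.mem_range.1 hj; omega
  rw [← add_smul, smul_smul]
  congr 1
  cases j with
  | zero =>
    simp [hc, mul_comm]
  | succ m =>
    have hm : m + 1 ≤ i := hj'
    simp only [Nat.succ_ne_zero, if_false, Nat.add_sub_cancel]
    have hch : ((Nat.choose i (m + 1) : ℂ)) * ((m : ℂ) + 1) =
        (Nat.choose i m : ℂ) * ((i : ℂ) - (m : ℂ)) := by
      have hnat := Nat.choose_succ_right_eq i m
      have h2 : ((Nat.choose i (m + 1) * (m + 1) : ℕ) : ℂ)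
          = ((Nat.choose i m * (i - m) : ℕ) : ℂ) := by exact_mod_cast hnat
      push_cast [Nat.cast_sub (by omega : m ≤ i)] at h2
      linear_combination h2
    have c1 : ((B - i + (m + 1) : ℕ) : ℂ) = (B : ℂ) - (i : ℂ) + (m : ℂ) + 1 := by
      push_cast [Nat.cast_sub (by omega : i ≤ B)]
      ring
    have c2 : ((i - m : ℕ) : ℂ) = (i : ℂ) - (m : ℂ) := by
      push_cast [Nat.cast_sub (by omega : m ≤ i)]
      ring
    have c3 : ((B - i : ℕ) : ℂ) = (B : ℂ) - (i : ℂ) := by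
      push_cast [Nat.cast_sub (by omega : i ≤ B)]
      ring
    simp only [hc]
    rw [c1, c2, c3]
    linear_combination ((-1 : ℂ)) ^ (m + 1) * hch

lemma Dop_pow_vv {n : ℕ} (hn : 1 ≤ n) (k A B i : ℕ) (hiA : i ≤ A) (hikB : i + k ≤ B) :
    ∃ c : ℂ, c ≠ 0 ∧ ((Dop n) ^ k) (vv n A B i) = c • vv n (A + k) (B - k) i := by
  induction k generalizing A B with
  | zero => exact ⟨1, one_ne_zero, by simp⟩
  | succ k ih =>
    obtain ⟨c, hc0, hck⟩ := ih (A + 1) (B - 1) (by omega) (by omega)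
    refine ⟨((B - i : ℕ) : ℂ) * c,
      mul_ne_zero (Nat.cast_ne_zero.2 (by omega)) hc0, ?_⟩
    rw [pow_succ, Module.End.mul_apply, Dop_vv hn A B i hiA (by omega), map_smul, hck]
    have e1 : A + 1 + k = A + (k + 1) := by omega
    have e2 : B - 1 - k = B - (k + 1) := by omega
    rw [e1, e2, smul_smul]

lemma vv_ne_zero {n : ℕ} (hn : 1 ≤ n) (A B i : ℕ) : vv n A B i ≠ 0 := by
  classical
  intro h
  have hco : coeff (e n (A - i) i (B - i + i) 0) (vv n A B i)
      = (-1 : ℂ) ^ i * (Nat.choose i i : ℂ) := by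
    rw [vv, MvPolynomial.coeff_sum]
    rw [Finset.sum_eq_single i]
    · simp [coeff_smul, coeff_monomial, Nat.sub_self]
    · intro j hj hne
      have hs : e n (A - j) j (B - i + j) (i - j) ≠ e n (A - i) i (B - i + i) 0 := by
        intro he
        have h1 := congrArg (fun f : (Fin (n + 1) ⊕ Fin (n + 1)) →₀ ℕ => f (Sum.inl 1)) he
        simp only [e_inl1 hn] at h1
        exact hne h1
      simp [coeff_smul, coeff_monomial, hs]
    · intro hi
      exact absurd (Finset.self_mem_range_succ i) hi
  rw [h] at hco
  simp only [coeff_zero, Nat.choose_self, Nat.cast_one, mul_one] at hco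
  exact pow_ne_zero i (by norm_num : (-1 : ℂ) ≠ 0) hco.symm

end DkAux

/-- The highest weight vectors
`v_i = Σ_{j=0}^{i} (−1)^j·C(i,j)·x_0^{A−j}·x_1^{j}·y_0^{B−i+j}·y_1^{i−j}`
do not vanish under `D^k` when `i ≤ A` and `i + k ≤ B`. -/
theorem Dk_highest_weight_vector_ne_zero (n k A B i : ℕ)
    (hn : 1 ≤ n) (hk : 1 ≤ k) (hiA : i ≤ A) (hikB : i + k ≤ B) :
    ((Dop n) ^ k)
      (∑ j ∈ Finset.range (i + 1),
        ((-1 : ℂ) ^ j * (Nat.choose i j : ℂ)) •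
          (X (Sum.inl (0 : Fin (n + 1))) ^ (A - j) * X (Sum.inl (1 : Fin (n + 1))) ^ j *
           X (Sum.inr (0 : Fin (n + 1))) ^ (B - i + j) *
           X (Sum.inr (1 : Fin (n + 1))) ^ (i - j))) ≠ 0 := by
  have hv : (∑ j ∈ Finset.range (i + 1),
      ((-1 : ℂ) ^ j * (Nat.choose i j : ℂ)) •
        (X (Sum.inl (0 : Fin (n + 1))) ^ (A - j) * X (Sum.inl (1 : Fin (n + 1))) ^ j *
         X (Sum.inr (0 : Fin (n + 1))) ^ (B - i + j) *
         X (Sum.inr (1 : Fin (n + 1))) ^ (i - j))) = DkAux.vv n A B i := by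
    refine Finset.sum_congr rfl fun j _ => ?_
    rw [X_pow_eq_monomial, X_pow_eq_monomial, X_pow_eq_monomial, X_pow_eq_monomial,
      monomial_mul, monomial_mul, monomial_mul, one_mul, one_mul, one_mul]
    rfl
  rw [hv]
  obtain ⟨c, hc0, hc⟩ := DkAux.Dop_pow_vv hn k A B i hiA hikB
  rw [hc]
  exact smul_ne_zero hc0 (DkAux.vv_ne_zero hn _ _ _)
end
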